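/- arXiv:0909.0840 — 11 statements merged into one kernel-verified Lean document; each statement's English description precedes it below -/
import Mathlib

section
/- Let M be a matroid of rank r on ground set E with a partition E = E1 ∪ E2 (E1 ∩ E2 = ∅). Let r1, r2 be the ranks of the restrictions M|E1 and M|E2, and suppose there are integers 0 < a1 < r1 and 0 < a2 < r2 with r1 + r2 = r + a1 + a2, and such that for every independent set X ⊆ E1 of M with |X| ≤ r1 − a1 and every independent set Y ⊆ E2 of M with |Y| ≤ r2 − a2, the union X ∪ Y is independent in M. Then the collection B1 = {B a base of M : |B ∩ E1| ≤ r1 − a1} satisfies the basis exchange axiom, i.e., it is the set of bases of a matroid. -/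
theorem stmt_1 {α : Type*} (M : Matroid α) (hfin : M.E.Finite)
    (E1 E2 : Set α) (hU : E1 ∪ E2 = M.E) (hdisj : Disjoint E1 E2)
    (r r1 r2 a1 a2 : ℕ)
    (hr : ∀ B, M.IsBase B → B.ncard = r)
    (hr1 : ∀ B, (M.restrict E1).IsBase B → B.ncard = r1)
    (hr2 : ∀ B, (M.restrict E2).IsBase B → B.ncard = r2)
    (ha1 : 0 < a1) (ha1r : a1 < r1) (ha2 : 0 < a2) (ha2r : a2 < r2)
    (hP1 : r1 + r2 = r + a1 + a2)
    (hP2 : ∀ X Y : Set α, X ⊆ E1 → Y ⊆ E2 → M.Indep X → M.Indep Y →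
      X.ncard ≤ r1 - a1 → Y.ncard ≤ r2 - a2 → M.Indep (X ∪ Y)) :
    Matroid.ExchangeProperty (fun B => M.IsBase B ∧ (B ∩ E1).ncard ≤ r1 - a1) := by
  have hsplit : ∀ B0 : Set α, M.IsBase B0 → (B0 ∩ E1).ncard + (B0 ∩ E2).ncard = r := by
    intro B0 hB0
    have hfB : B0.Finite := hfin.subset hB0.subset_ground
    have hEq : (B0 ∩ E1) ∪ (B0 ∩ E2) = B0 := by
      rw [← Set.inter_union_distrib_left, hU]
      exact Set.inter_eq_left.mpr hB0.subset_ground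
    have hu := Set.ncard_union_eq (hdisj.mono Set.inter_subset_right Set.inter_subset_right)
        (hfB.inter_of_left E1) (hfB.inter_of_left E2)
    rw [hEq] at hu
    rw [← hr B0 hB0, ← hu]
  rintro B B' ⟨hB, hB1⟩ ⟨hB', hB'1⟩ e he
  have hBfin : B.Finite := hfin.subset hB.subset_ground
  have hB'fin : B'.Finite := hfin.subset hB'.subset_ground
  have heB : e ∈ B := he.1
  by_cases hcase : e ∈ E2 ∧ (B ∩ E1).ncard = r1 - a1
  · obtain ⟨heE2, hBeq⟩ := hcase
    have heE1 : e ∉ E1 := fun h => Set.disjoint_left.mp hdisj h heE2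
    have hsB := hsplit B hB
    have hsB' := hsplit B' hB'
    set I2 : Set α := (B ∩ E2) \ {e} with hI2def
    have heBE2 : e ∈ B ∩ E2 := ⟨heB, heE2⟩
    have hI2card : I2.ncard = (B ∩ E2).ncard - 1 :=
      Set.ncard_diff_singleton_of_mem heBE2
    have hBE2card : (B ∩ E2).ncard = r2 - a2 := by omega
    have hI2indep : M.Indep I2 :=
      hB.indep.subset (Set.diff_subset.trans Set.inter_subset_left)
    have hB'2indep : M.Indep (B' ∩ E2) := hB'.indep.subset Set.inter_subset_left
    have hI2fin : I2.Finite := (hBfin.inter_of_left _).diff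
    have hlt : I2.encard < (B' ∩ E2).encard := by
      rw [← hI2fin.cast_ncard_eq, ← (hB'fin.inter_of_left _).cast_ncard_eq]
      exact_mod_cast (by omega : I2.ncard < (B' ∩ E2).ncard)
    obtain ⟨f, hf, hfind⟩ := hI2indep.augment hB'2indep hlt
    have hfE2 : f ∈ E2 := hf.1.2
    have hfE1 : f ∉ E1 := fun h => Set.disjoint_left.mp hdisj h hfE2
    have hfB' : f ∈ B' := hf.1.1
    have hfe : f ≠ e := fun h => he.2 (h ▸ hfB')
    have hfB : f ∉ B := fun h => hf.2 ⟨⟨h, hfE2⟩, hfe⟩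
    have hYcard : (insert f I2).ncard = r2 - a2 := by
      rw [Set.ncard_insert_of_notMem hf.2 hI2fin]; omega
    have hYsub : insert f I2 ⊆ E2 :=
      Set.insert_subset hfE2 (Set.diff_subset.trans Set.inter_subset_right)
    have hBsub : B ⊆ E1 ∪ E2 := hU ▸ hB.subset_ground
    have hunion : (B ∩ E1) ∪ insert f I2 = insert f (B \ {e}) := by
      ext x
      simp only [hI2def, Set.mem_union, Set.mem_inter_iff, Set.mem_insert_iff, Set.mem_diff,
        Set.mem_singleton_iff]
      constructor
      · rintro (⟨hx, hx1⟩ | rfl | ⟨⟨hx, _⟩, hxe⟩)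
        · exact Or.inr ⟨hx, fun h => heE1 (h ▸ hx1)⟩
        · exact Or.inl rfl
        · exact Or.inr ⟨hx, hxe⟩
      · rintro (rfl | ⟨hx, hxe⟩)
        · exact Or.inr (Or.inl rfl)
        · rcases hBsub hx with h1 | h2
          · exact Or.inl ⟨hx, h1⟩
          · exact Or.inr (Or.inr ⟨⟨hx, h2⟩, hxe⟩)
    have hIndep : M.Indep (insert f (B \ {e})) := by
      rw [← hunion]
      exact hP2 _ _ Set.inter_subset_right hYsub (hB.indep.subset Set.inter_subset_left)
        hfind (le_of_eq hBeq) (le_of_eq hYcard)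
    have hcard : (insert f (B \ {e})).ncard = r := by
      rw [Set.ncard_insert_of_notMem (fun h => hfB h.1) hBfin.diff,
        Set.ncard_diff_singleton_of_mem heB, hr B hB]
      omega
    have hbase : M.IsBase (insert f (B \ {e})) := by
      obtain ⟨B'', hB'', hsub⟩ := hIndep.exists_isBase_superset
      have heq : insert f (B \ {e}) = B'' :=
        Set.eq_of_subset_of_ncard_le hsub (by rw [hr B'' hB'', hcard])
          (hfin.subset hB''.subset_ground)
      rw [heq]; exact hB''
    have hcnt : insert f (B \ {e}) ∩ E1 = B ∩ E1 := by
      ext x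
      simp only [Set.mem_inter_iff, Set.mem_insert_iff, Set.mem_diff, Set.mem_singleton_iff]
      constructor
      · rintro ⟨rfl | ⟨hx, _⟩, hx1⟩
        · exact absurd hx1 hfE1
        · exact ⟨hx, hx1⟩
      · rintro ⟨hx, hx1⟩
        exact ⟨Or.inr ⟨hx, fun h => heE1 (h ▸ hx1)⟩, hx1⟩
    exact ⟨f, ⟨hfB', hfB⟩, hbase, by rw [hcnt, hBeq]⟩
  · obtain ⟨f, hf, hfbase⟩ := hB.exchange hB' he
    refine ⟨f, hf, hfbase, ?_⟩
    rcases not_and_or.mp hcase with he2 | hne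
    · have heE1 : e ∈ E1 := by
        rcases (hU ▸ hB.subset_ground) heB with h | h
        · exact h
        · exact absurd h he2
      have hsubset2 : insert f (B \ {e}) ∩ E1 ⊆ insert f ((B ∩ E1) \ {e}) := by
        rintro x ⟨hx1, hx2⟩
        rcases hx1 with rfl | hxB
        · exact Or.inl rfl
        · exact Or.inr ⟨⟨hxB.1, hx2⟩, hxB.2⟩
      have hfin2 : (insert f ((B ∩ E1) \ {e})).Finite :=
        (((hBfin.inter_of_left _).diff).insert f)
      have h1 : (insert f ((B ∩ E1) \ {e})).ncard ≤ ((B ∩ E1) \ {e}).ncard + 1 :=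
        Set.ncard_insert_le _ _
      have h2 : ((B ∩ E1) \ {e}).ncard = (B ∩ E1).ncard - 1 :=
        Set.ncard_diff_singleton_of_mem ⟨heB, heE1⟩
      have h3 : 0 < (B ∩ E1).ncard :=
        (Set.ncard_pos (hBfin.inter_of_left _)).mpr ⟨e, heB, heE1⟩
      have h4 := Set.ncard_le_ncard hsubset2 hfin2
      omega
    · have hlt : (B ∩ E1).ncard < r1 - a1 := lt_of_le_of_ne hB1 hne
      have hsubset : insert f (B \ {e}) ∩ E1 ⊆ insert f (B ∩ E1) := by
        rintro x ⟨hx1, hx2⟩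
        rcases hx1 with rfl | hxB
        · exact Or.inl rfl
        · exact Or.inr ⟨hxB.1, hx2⟩
      have h4 := Set.ncard_le_ncard hsubset ((hBfin.inter_of_left _).insert f)
      have h1 : (insert f (B ∩ E1)).ncard ≤ (B ∩ E1).ncard + 1 := Set.ncard_insert_le _ _
      omega
end

section
/- Let M be a matroid of rank r on E with a good partition (E1,E2) with parameters a1, a2, and define B1 = {B base of M : |B ∩ E1| ≤ r1 − a1} and B2 = {B base of M : |B ∩ E2| ≤ r2 − a2}. Then B1 is a proper subset of the set of all bases of M (i.e., there exists a base of M not in B1), and similarly B2 is proper. -/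
theorem stmt_4 {α : Type*} (M : Matroid α) (hfin : M.E.Finite)
    (E1 E2 : Set α) (hU : E1 ∪ E2 = M.E) (hdisj : Disjoint E1 E2)
    (r r1 r2 a1 a2 : ℕ)
    (hr : ∀ B, M.IsBase B → B.ncard = r)
    (hr1 : ∀ B, (M.restrict E1).IsBase B → B.ncard = r1)
    (hr2 : ∀ B, (M.restrict E2).IsBase B → B.ncard = r2)
    (ha1 : 0 < a1) (ha1r : a1 < r1) (ha2 : 0 < a2) (ha2r : a2 < r2)
    (hP1 : r1 + r2 = r + a1 + a2)
    (hP2 : ∀ X Y : Set α, X ⊆ E1 → Y ⊆ E2 → M.Indep X → M.Indep Y →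
      X.ncard ≤ r1 - a1 → Y.ncard ≤ r2 - a2 → M.Indep (X ∪ Y)) :
    (∃ B, M.IsBase B ∧ ¬((B ∩ E1).ncard ≤ r1 - a1)) ∧
      (∃ B, M.IsBase B ∧ ¬((B ∩ E2).ncard ≤ r2 - a2)) := by
  constructor
  · obtain ⟨B1, hB1⟩ := (M.restrict E1).exists_isBase
    have hI : M.Indep B1 := ((M.restrict_indep_iff).1 hB1.indep).1
    have hsub : B1 ⊆ E1 := ((M.restrict_indep_iff).1 hB1.indep).2
    obtain ⟨B, hB, hBsub⟩ := hI.exists_isBase_superset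
    refine ⟨B, hB, ?_⟩
    have hfinB : (B ∩ E1).Finite :=
      (hfin.subset hB.subset_ground).subset Set.inter_subset_left
    have h1 : r1 ≤ (B ∩ E1).ncard := by
      rw [← hr1 B1 hB1]
      exact Set.ncard_le_ncard (Set.subset_inter hBsub hsub) hfinB
    omega
  · obtain ⟨B2, hB2⟩ := (M.restrict E2).exists_isBase
    have hI : M.Indep B2 := ((M.restrict_indep_iff).1 hB2.indep).1
    have hsub : B2 ⊆ E2 := ((M.restrict_indep_iff).1 hB2.indep).2
    obtain ⟨B, hB, hBsub⟩ := hI.exists_isBase_superset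
    refine ⟨B, hB, ?_⟩
    have hfinB : (B ∩ E2).Finite :=
      (hfin.subset hB.subset_ground).subset Set.inter_subset_left
    have h2 : r2 ≤ (B ∩ E2).ncard := by
      rw [← hr2 B2 hB2]
      exact Set.ncard_le_ncard (Set.subset_inter hBsub hsub) hfinB
    omega
end

section
/- Let M be a matroid of rank r with a good partition (E1, E2) with parameters a1, a2, and B1, B2 as defined from it. If B ∈ B1 \ B2 and B' ∈ B2 \ B1 then the symmetric difference of B and B' has size at least 4 (equivalently, B and B' are not adjacent in the matroid base graph). -/
theorem stmt_5 {α : Type*} (M : Matroid α) (hfin : M.E.Finite)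
    (E1 E2 : Set α) (hU : E1 ∪ E2 = M.E) (hdisj : Disjoint E1 E2)
    (r r1 r2 a1 a2 : ℕ)
    (hr : ∀ B, M.IsBase B → B.ncard = r)
    (hr1 : ∀ B, (M.restrict E1).IsBase B → B.ncard = r1)
    (hr2 : ∀ B, (M.restrict E2).IsBase B → B.ncard = r2)
    (ha1 : 0 < a1) (ha1r : a1 < r1) (ha2 : 0 < a2) (ha2r : a2 < r2)
    (hP1 : r1 + r2 = r + a1 + a2)
    (hP2 : ∀ X Y : Set α, X ⊆ E1 → Y ⊆ E2 → M.Indep X → M.Indep Y →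
      X.ncard ≤ r1 - a1 → Y.ncard ≤ r2 - a2 → M.Indep (X ∪ Y)) :
    ∀ B Bᾰ, M.IsBase B → M.IsBase Bᾰ →
      (B ∩ E1).ncard ≤ r1 - a1 → ¬((B ∩ E2).ncard ≤ r2 - a2) →
      (Bᾰ ∩ E2).ncard ≤ r2 - a2 → ¬((Bᾰ ∩ E1).ncard ≤ r1 - a1) →
      4 ≤ (symmDiff B Bᾰ).ncard := by
  intro B B' hB hB' h1 h2 h3 h4
  have hBE := hB.subset_ground
  have hB'E := hB'.subset_ground
  have hBfin : B.Finite := hfin.subset hBE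
  have hB'fin : B'.Finite := hfin.subset hB'E
  have hΔE : symmDiff B B' ⊆ M.E := by
    rw [Set.symmDiff_def]
    exact Set.union_subset ((Set.diff_subset).trans hBE) ((Set.diff_subset).trans hB'E)
  have hΔfin : (symmDiff B B').Finite := hfin.subset hΔE
  have split : ∀ S : Set α, S ⊆ M.E → S.Finite →
      (S ∩ E1).ncard + (S ∩ E2).ncard = S.ncard := by
    intro S hS hSfin
    rw [← Set.ncard_union_eq (hdisj.mono Set.inter_subset_right Set.inter_subset_right)
      (hSfin.subset Set.inter_subset_left) (hSfin.subset Set.inter_subset_left),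
      ← Set.inter_union_distrib_left, hU, Set.inter_eq_self_of_subset_left hS]
  have hsB := split B hBE hBfin
  have hsB' := split B' hB'E hB'fin
  have hsΔ := split (symmDiff B B') hΔE hΔfin
  rw [hr B hB] at hsB
  rw [hr B' hB'] at hsB'
  -- |B' ∩ E1| ≤ |B ∩ E1| + |Δ ∩ E1|
  have key : ∀ (X Y : Set α) (E : Set α), X.Finite → Y.Finite →
      (Y ∩ E).ncard ≤ (X ∩ E).ncard + (symmDiff X Y ∩ E).ncard := by
    intro X Y E hX hY
    have hsub : Y ∩ E ⊆ (X ∩ E) ∪ (symmDiff X Y ∩ E) := by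
      rintro e ⟨heY, heE⟩
      by_cases heX : e ∈ X
      · exact Or.inl ⟨heX, heE⟩
      · exact Or.inr ⟨by simp [Set.mem_symmDiff, heY, heX], heE⟩
    have hfinU : (X ∩ E ∪ symmDiff X Y ∩ E).Finite := by
      have hd : symmDiff X Y ⊆ X ∪ Y := by
        rw [Set.symmDiff_def]
        exact Set.union_subset_union Set.diff_subset Set.diff_subset
      exact (hX.union hY).subset (Set.union_subset
        (Set.inter_subset_left.trans Set.subset_union_left)
        (Set.inter_subset_left.trans hd))
    calc (Y ∩ E).ncard ≤ ((X ∩ E) ∪ (symmDiff X Y ∩ E)).ncard :=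
          Set.ncard_le_ncard hsub hfinU
      _ ≤ (X ∩ E).ncard + (symmDiff X Y ∩ E).ncard := Set.ncard_union_le _ _
  have k1 := key B B' E1 hBfin hB'fin
  have k2 := key B' B E2 hB'fin hBfin
  have hcomm : symmDiff B' B = symmDiff B B' := symmDiff_comm B' B
  rw [hcomm] at k2
  omega
end

section
/- Let M be a matroid of rank r with a good partition (E1, E2) with parameters a1, a2. Then there exists a base B of M with |B ∩ E1| = r1 − a1 and |B ∩ E2| = r2 − a2 (i.e., B1 ∩ B2 is nonempty). -/
theorem stmt_6 {α : Type*} (M : Matroid α) (hfin : M.E.Finite)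
    (E1 E2 : Set α) (hU : E1 ∪ E2 = M.E) (hdisj : Disjoint E1 E2)
    (r r1 r2 a1 a2 : ℕ)
    (hr : ∀ B, M.IsBase B → B.ncard = r)
    (hr1 : ∀ B, (M.restrict E1).IsBase B → B.ncard = r1)
    (hr2 : ∀ B, (M.restrict E2).IsBase B → B.ncard = r2)
    (ha1 : 0 < a1) (ha1r : a1 < r1) (ha2 : 0 < a2) (ha2r : a2 < r2)
    (hP1 : r1 + r2 = r + a1 + a2)
    (hP2 : ∀ X Y : Set α, X ⊆ E1 → Y ⊆ E2 → M.Indep X → M.Indep Y →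
      X.ncard ≤ r1 - a1 → Y.ncard ≤ r2 - a2 → M.Indep (X ∪ Y)) :
    ∃ B, M.IsBase B ∧ (B ∩ E1).ncard = r1 - a1 ∧ (B ∩ E2).ncard = r2 - a2 := by
  obtain ⟨B1, hB1⟩ := (M.restrict E1).exists_isBase
  obtain ⟨B2, hB2⟩ := (M.restrict E2).exists_isBase
  have hB1i := hB1.indep
  have hB2i := hB2.indep
  rw [Matroid.restrict_indep_iff] at hB1i hB2i
  obtain ⟨X, hXB1, hX⟩ := Set.exists_subset_card_eq
    (show r1 - a1 ≤ B1.ncard from by rw [hr1 B1 hB1]; omega)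
  obtain ⟨Y, hYB2, hY⟩ := Set.exists_subset_card_eq
    (show r2 - a2 ≤ B2.ncard from by rw [hr2 B2 hB2]; omega)
  have hXE1 : X ⊆ E1 := hXB1.trans hB1i.2
  have hYE2 : Y ⊆ E2 := hYB2.trans hB2i.2
  have hXi : M.Indep X := hB1i.1.subset hXB1
  have hYi : M.Indep Y := hB2i.1.subset hYB2
  have hXY : M.Indep (X ∪ Y) := hP2 X Y hXE1 hYE2 hXi hYi hX.le hY.le
  have hXfin : X.Finite := hfin.subset (hXi.subset_ground)
  have hYfin : Y.Finite := hfin.subset (hYi.subset_ground)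
  have hdXY : Disjoint X Y := hdisj.mono hXE1 hYE2
  have hcard : (X ∪ Y).ncard = r := by
    rw [Set.ncard_union_eq hdXY hXfin hYfin, hX, hY]; omega
  obtain ⟨B, hB, hsub⟩ := hXY.exists_isBase_superset
  have hBeq : X ∪ Y = B := by
    exact Set.eq_of_subset_of_ncard_le hsub (by rw [hr B hB, hcard])
      (hfin.subset hB.subset_ground)
  subst hBeq
  refine ⟨X ∪ Y, hB, ?_, ?_⟩
  · have : (X ∪ Y) ∩ E1 = X := by
      rw [Set.union_inter_distrib_right, Set.inter_eq_left.mpr hXE1,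
        (hdisj.symm.mono_left hYE2).inter_eq, Set.union_empty]
    rw [this, hX]
  · have : (X ∪ Y) ∩ E2 = Y := by
      rw [Set.union_inter_distrib_right, Set.inter_eq_left.mpr hYE2,
        (hdisj.mono_left hXE1).inter_eq, Set.empty_union]
    rw [this, hY]
end

section
/- Let M1, M2 be matroids on disjoint ground sets E1, E2, and let A ⊆ B(M1 ⊕ M2) be the set of bases of some matroid. Then A = {X ∪ Y : X ∈ A1, Y ∈ A2} where A1 = {B ∩ E1 : B ∈ A} and A2 = {B ∩ E2 : B ∈ A}, and moreover A1 and A2 are themselves the sets of bases of matroids on E1 and E2 respectively. -/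
open Set Matroid

private lemma ndep_to_sdep {α : Type*} {M1 M2 : Matroid α} {h : Disjoint M1.E M2.E}
    {N : Matroid α} (hA : ∀ B, N.IsBase B → (M1.disjointSum M2 h).IsBase B)
    {I : Set α} (hI : N.Indep I) : (M1.disjointSum M2 h).Indep I := by
  obtain ⟨B, hB, hIB⟩ := hI.exists_isBase_superset
  exact ((hA B hB).indep).subset hIB

private lemma key {α : Type*} {M1 M2 : Matroid α} {h : Disjoint M1.E M2.E}
    {N : Matroid α} (hNE : N.E = M1.E ∪ M2.E)
    (hA : ∀ B, N.IsBase B → (M1.disjointSum M2 h).IsBase B)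
    {B B' : Set α} (hB : N.IsBase B) (hB' : N.IsBase B') :
    N.IsBase ((B ∩ M1.E) ∪ (B' ∩ M2.E)) := by
  have hSB := Matroid.disjointSum_isBase_iff.1 (hA B hB)
  have hSB' := Matroid.disjointSum_isBase_iff.1 (hA B' hB')
  set D := (B ∩ M1.E) ∪ (B' ∩ M2.E) with hD
  have hDE : D ⊆ N.E := by
    rw [hNE]; exact union_subset_union inter_subset_right inter_subset_right
  -- closure of B ∩ M1.E contains M1.E
  have hcl1 : M1.E ⊆ N.closure (B ∩ M1.E) := by
    intro e he
    by_cases heB : e ∈ B ∩ M1.E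
    · exact N.subset_closure (B ∩ M1.E) (inter_subset_left.trans hB.subset_ground) heB
    have hIndep : N.Indep (B ∩ M1.E) := hB.indep.subset inter_subset_left
    have hdep : ¬ N.Indep (insert e (B ∩ M1.E)) := by
      intro hind
      have hs := ndep_to_sdep hA hind
      have h1 : M1.Indep (insert e (B ∩ M1.E)) := by
        have := (Matroid.disjointSum_indep_iff.1 hs).1
        rwa [show insert e (B ∩ M1.E) ∩ M1.E = insert e (B ∩ M1.E) from
          inter_eq_self_of_subset_left
            (insert_subset he inter_subset_right)] at this
      have hEq := hSB.1.eq_of_subset_indep h1 (subset_insert _ _)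
      exact heB (by rw [hEq]; exact mem_insert _ _)
    have := (hIndep.insert_indep_iff_of_notMem (fun hc => heB hc)).not.1 hdep
    simp only [mem_diff, not_and, not_not] at this
    exact this (by rw [hNE]; exact Or.inl he)
  have hcl2 : M2.E ⊆ N.closure (B' ∩ M2.E) := by
    intro e he
    by_cases heB : e ∈ B' ∩ M2.E
    · exact N.subset_closure (B' ∩ M2.E) (inter_subset_left.trans hB'.subset_ground) heB
    have hIndep : N.Indep (B' ∩ M2.E) := hB'.indep.subset inter_subset_left
    have hdep : ¬ N.Indep (insert e (B' ∩ M2.E)) := by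
      intro hind
      have hs := ndep_to_sdep hA hind
      have h2 : M2.Indep (insert e (B' ∩ M2.E)) := by
        have := (Matroid.disjointSum_indep_iff.1 hs).2.1
        rwa [show insert e (B' ∩ M2.E) ∩ M2.E = insert e (B' ∩ M2.E) from
          inter_eq_self_of_subset_left
            (insert_subset he inter_subset_right)] at this
      have hEq := hSB'.2.1.eq_of_subset_indep h2 (subset_insert _ _)
      exact heB (by rw [hEq]; exact mem_insert _ _)
    have := (hIndep.insert_indep_iff_of_notMem (fun hc => heB hc)).not.1 hdep
    simp only [mem_diff, not_and, not_not] at this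
    exact this (by rw [hNE]; exact Or.inr he)
  have hsp : N.Spanning D := by
    rw [Matroid.spanning_iff_ground_subset_closure hDE]
    rw [hNE]
    refine union_subset (hcl1.trans (N.closure_subset_closure subset_union_left))
      (hcl2.trans (N.closure_subset_closure subset_union_right))
  obtain ⟨B'', hB'', hB''D⟩ := hsp.exists_isBase_subset
  have hSB'' := Matroid.disjointSum_isBase_iff.1 (hA B'' hB'')
  have h1 : B'' ∩ M1.E = B ∩ M1.E := by
    refine hSB''.1.eq_of_subset_isBase hSB.1 ?_
    intro x hx
    rcases hB''D hx.1 with hm | hm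
    · exact hm
    · exact absurd hx.2 (fun hc => (h.ne_of_mem hc hm.2) rfl)
  have h2 : B'' ∩ M2.E = B' ∩ M2.E := by
    refine hSB''.2.1.eq_of_subset_isBase hSB'.2.1 ?_
    intro x hx
    rcases hB''D hx.1 with hm | hm
    · exact absurd hx.2 (fun hc => (h.ne_of_mem hm.2 hc) rfl)
    · exact hm
  have : B'' = D := by
    have : B'' = (B'' ∩ M1.E) ∪ (B'' ∩ M2.E) := by
      rw [← inter_union_distrib_left, inter_eq_self_of_subset_left hSB''.2.2]
    rw [this, h1, h2]
  rwa [← this]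

theorem stmt_9 {α : Type*} (M1 M2 : Matroid α) (h : Disjoint M1.E M2.E)
    (N : Matroid α) (hNE : N.E = M1.E ∪ M2.E)
    (hA : ∀ B, N.IsBase B → (M1.disjointSum M2 h).IsBase B) :
    (∀ B, N.IsBase B ↔
        ∃ X ∈ {B ∩ M1.E | B ∈ {B | N.IsBase B}}, ∃ Y ∈ {B ∩ M2.E | B ∈ {B | N.IsBase B}},
          B = X ∪ Y) ∧
      (∃ N1 : Matroid α, N1.E = M1.E ∧
        ∀ X, N1.IsBase X ↔ X ∈ {B ∩ M1.E | B ∈ {B | N.IsBase B}}) ∧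
      (∃ N2 : Matroid α, N2.E = M2.E ∧
        ∀ Y, N2.IsBase Y ↔ Y ∈ {B ∩ M2.E | B ∈ {B | N.IsBase B}}) := by
  have hE1 : M1.E ⊆ N.E := hNE ▸ subset_union_left
  have hE2 : M2.E ⊆ N.E := hNE ▸ subset_union_right
  refine ⟨fun B => ⟨fun hB => ?_, ?_⟩, ?_, ?_⟩
  · refine ⟨B ∩ M1.E, ⟨B, hB, rfl⟩, B ∩ M2.E, ⟨B, hB, rfl⟩, ?_⟩
    rw [← inter_union_distrib_left, ← hNE,
      inter_eq_self_of_subset_left hB.subset_ground]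
  · rintro ⟨X, ⟨Ba, hBa, rfl⟩, Y, ⟨Bb, hBb, rfl⟩, rfl⟩
    exact key hNE hA hBa hBb
  · refine ⟨N ↾ M1.E, rfl, fun X => ?_⟩
    rw [Matroid.isBase_restrict_iff hE1]
    constructor
    · intro hX
      obtain ⟨B, hB, hXB⟩ := hX.indep.exists_isBase_superset
      refine ⟨B, hB, (hX.eq_of_subset_indep (hB.indep.subset inter_subset_left)
        (subset_inter hXB hX.subset) inter_subset_right).symm⟩
    · rintro ⟨B, hB, rfl⟩
      refine (hB.indep.subset inter_subset_left).isBasis_of_maximal_subset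
        inter_subset_right (fun J hJ hBJ hJE => ?_) hE1
      obtain ⟨B'', hB'', hJB''⟩ := hJ.exists_isBase_superset
      have h1 : (M1.disjointSum M2 h).IsBase B := hA B hB
      have h2 : (M1.disjointSum M2 h).IsBase B'' := hA B'' hB''
      rw [Matroid.disjointSum_isBase_iff] at h1 h2
      have heq : B ∩ M1.E = B'' ∩ M1.E :=
        h1.1.eq_of_subset_isBase h2.1 (subset_inter (hBJ.trans hJB'') inter_subset_right)
      rw [heq]
      exact subset_inter hJB'' hJE
  · refine ⟨N ↾ M2.E, rfl, fun X => ?_⟩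
    rw [Matroid.isBase_restrict_iff hE2]
    constructor
    · intro hX
      obtain ⟨B, hB, hXB⟩ := hX.indep.exists_isBase_superset
      refine ⟨B, hB, (hX.eq_of_subset_indep (hB.indep.subset inter_subset_left)
        (subset_inter hXB hX.subset) inter_subset_right).symm⟩
    · rintro ⟨B, hB, rfl⟩
      refine (hB.indep.subset inter_subset_left).isBasis_of_maximal_subset
        inter_subset_right (fun J hJ hBJ hJE => ?_) hE2
      obtain ⟨B'', hB'', hJB''⟩ := hJ.exists_isBase_superset
      have h1 : (M1.disjointSum M2 h).IsBase B := hA B hB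
      have h2 : (M1.disjointSum M2 h).IsBase B'' := hA B'' hB''
      rw [Matroid.disjointSum_isBase_iff] at h1 h2
      have heq : B ∩ M2.E = B'' ∩ M2.E :=
        h1.2.1.eq_of_subset_isBase h2.2.1 (subset_inter (hBJ.trans hJB'') inter_subset_right)
      rw [heq]
      exact subset_inter hJB'' hJE
end

section
/- Let M1, M2 be matroids on disjoint ground sets and let A ⊆ B(M1 ⊕ M2) be the bases of a matroid. If X ∪ Y ∈ A and X' ∪ Y' ∈ A (with X, X' ∈ B(M1), Y, Y' ∈ B(M2)), then X ∪ Y' ∈ A. -/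
theorem stmt_10 {α : Type*} (M1 M2 : Matroid α) (h : Disjoint M1.E M2.E)
    (N : Matroid α) (hNE : N.E = M1.E ∪ M2.E)
    (hA : ∀ B, N.IsBase B → (M1.disjointSum M2 h).IsBase B)
    (X X' Y Y' : Set α) (hX : M1.IsBase X) (hX' : M1.IsBase X')
    (hY : M2.IsBase Y) (hY' : M2.IsBase Y')
    (h1 : N.IsBase (X ∪ Y)) (h2 : N.IsBase (X' ∪ Y')) :
    N.IsBase (X ∪ Y') := by
  have hXE : X ⊆ M1.E := hX.subset_ground
  have hYE : Y ⊆ M2.E := hY.subset_ground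
  have hY'E : Y' ⊆ M2.E := hY'.subset_ground
  have hY'indep : N.Indep Y' := h2.indep.subset Set.subset_union_right
  obtain ⟨B, hB, hY'B, hBsub⟩ := hY'indep.exists_isBase_subset_union_isBase h1
  have hBsum := hA B hB
  rw [Matroid.disjointSum_isBase_iff] at hBsum
  obtain ⟨hB1, hB2, hBE⟩ := hBsum
  have hB1sub : B ∩ M1.E ⊆ X := by
    intro x hx
    rcases hBsub hx.1 with hx' | hx'
    · exact absurd (hY'E hx') (Set.disjoint_left.mp h hx.2)
    rcases hx' with hx' | hx'
    · exact hx'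
    · exact absurd (hYE hx') (Set.disjoint_left.mp h hx.2)
  have hB1eq : B ∩ M1.E = X := hB1.eq_of_subset_isBase hX hB1sub
  have hB2eq : Y' = B ∩ M2.E :=
    hY'.eq_of_subset_isBase hB2 (fun x hx => ⟨hY'B hx, hY'E hx⟩)
  have hBeq : B = X ∪ Y' := by
    have hsplit : B = (B ∩ M1.E) ∪ (B ∩ M2.E) := by
      rw [← Set.inter_union_distrib_left, Set.inter_eq_self_of_subset_left hBE]
    rw [hsplit, hB1eq, ← hB2eq]
  exact hBeq ▸ hB
end

section
/- Let M be a binary matroid and let X, Y be bases of M at distance exactly 2 in the base graph G(M). Then there exists a unique pair of bases {U, V} such that X, U, Y, V form an empty (induced chordless) 4-cycle in G(M). -/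
/-- A matroid is binary if it is representable over `GF(2)`. -/
def Matroid.IsBinary {α : Type*} (M : Matroid α) : Prop :=
  ∃ (n : ℕ) (φ : α → (Fin n → ZMod 2)), ∀ I : Set α, I ⊆ M.E →
    (M.Indep I ↔ LinearIndependent (ZMod 2) (fun x : I => φ x))

/-- Adjacency in the matroid base graph: symmetric difference of size two. -/
def Matroid.BaseAdj {α : Type*} (M : Matroid α) (B Bᾰ : Set α) : Prop :=
  M.IsBase B ∧ M.IsBase Bᾰ ∧ (symmDiff B Bᾰ).ncard = 2

/-- An empty (chordless) square through `X` and `Y` with the other two corners `U, V`. -/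
def Matroid.EmptySquare {α : Type*} (M : Matroid α) (X Y U V : Set α) : Prop :=
  M.IsBase U ∧ M.IsBase V ∧ U ≠ V ∧ M.BaseAdj X U ∧ M.BaseAdj U Y ∧
    M.BaseAdj Y V ∧ M.BaseAdj V X ∧ ¬ M.BaseAdj U V ∧ ¬ M.BaseAdj X Y

namespace StmtElevenAux

open Set

variable {α : Type*} {X Y : Set α} {a a' b b' : α}

lemma sd1 (hxd : X \ Y = {a, a'}) (hyd : Y \ X = {b, b'}) :
    symmDiff X (insert b (X \ {a})) = {a, b} := by
  ext t
  have h1 : t ∈ X ∧ t ∉ Y ↔ (t = a ∨ t = a') := by rw [← Set.mem_diff, hxd]; simp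
  have h2 : t ∈ Y ∧ t ∉ X ↔ (t = b ∨ t = b') := by rw [← Set.mem_diff, hyd]; simp
  simp only [Set.mem_symmDiff, Set.mem_insert_iff, Set.mem_diff, Set.mem_singleton_iff]
  tauto

lemma sd2 (hxd : X \ Y = {a, a'}) (hyd : Y \ X = {b, b'}) (haa' : a ≠ a') (hbb' : b ≠ b') :
    symmDiff (insert b (X \ {a})) Y = {a', b'} := by
  ext t
  have h1 : t ∈ X ∧ t ∉ Y ↔ (t = a ∨ t = a') := by rw [← Set.mem_diff, hxd]; simp
  have h2 : t ∈ Y ∧ t ∉ X ↔ (t = b ∨ t = b') := by rw [← Set.mem_diff, hyd]; simp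
  have n1 : ¬(t = a ∧ t = a') := by rintro ⟨rfl, rfl⟩; exact haa' rfl
  have n2 : ¬(t = b ∧ t = b') := by rintro ⟨rfl, rfl⟩; exact hbb' rfl
  simp only [Set.mem_symmDiff, Set.mem_insert_iff, Set.mem_diff, Set.mem_singleton_iff]
  tauto

lemma sd3 (hxd : X \ Y = {a, a'}) (hyd : Y \ X = {b, b'}) (haa' : a ≠ a') (hbb' : b ≠ b') :
    symmDiff (insert b (X \ {a})) (insert b' (X \ {a'})) = {a, b, a', b'} := by
  have e1 : symmDiff X (insert b (X \ {a})) = {a, b} := sd1 hxd hyd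
  have e2 : symmDiff X (insert b' (X \ {a'})) = {a', b'} :=
    sd1 (by rw [hxd, Set.pair_comm]) (by rw [hyd, Set.pair_comm])
  have key : symmDiff (insert b (X \ {a})) (insert b' (X \ {a'}))
      = symmDiff (symmDiff X (insert b (X \ {a}))) (symmDiff X (insert b' (X \ {a'}))) := by
    rw [symmDiff_symmDiff_symmDiff_comm, symmDiff_self, bot_symmDiff]
  rw [key, e1, e2]
  have hbX : b ∈ Y \ X := by rw [hyd]; exact Set.mem_insert _ _
  have hb'X : b' ∈ Y \ X := by rw [hyd]; simp
  have haX : a ∈ X \ Y := by rw [hxd]; exact Set.mem_insert _ _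
  have ha'X : a' ∈ X \ Y := by rw [hxd]; simp
  have d : Disjoint ({a, b} : Set α) {a', b'} := by
    rw [Set.disjoint_left]
    intro t ht ht'
    simp only [Set.mem_insert_iff, Set.mem_singleton_iff] at ht ht'
    rcases ht with rfl | rfl <;> rcases ht' with rfl | rfl
    · exact haa' rfl
    · exact hb'X.2 haX.1
    · exact hbX.2 ha'X.1
    · exact hbb' rfl
  rw [d.symmDiff_eq_sup]
  rw [show (({a, b} : Set α) ⊔ {a', b'}) = {a, b} ∪ {a', b'} from rfl]
  ext t
  simp only [Set.mem_union, Set.mem_insert_iff, Set.mem_singleton_iff]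
  tauto

lemma sdrow (hxd : X \ Y = {a, a'}) (hyd : Y \ X = {b, b'}) (hbb' : b ≠ b') :
    symmDiff (insert b (X \ {a})) (insert b' (X \ {a})) = {b, b'} := by
  ext t
  have h1 : t ∈ X ∧ t ∉ Y ↔ (t = a ∨ t = a') := by rw [← Set.mem_diff, hxd]; simp
  have h2 : t ∈ Y ∧ t ∉ X ↔ (t = b ∨ t = b') := by rw [← Set.mem_diff, hyd]; simp
  have n2 : ¬(t = b ∧ t = b') := by rintro ⟨rfl, rfl⟩; exact hbb' rfl
  simp only [Set.mem_symmDiff, Set.mem_insert_iff, Set.mem_diff, Set.mem_singleton_iff]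
  tauto

lemma sdcol (hxd : X \ Y = {a, a'}) (hyd : Y \ X = {b, b'}) (haa' : a ≠ a') :
    symmDiff (insert b (X \ {a})) (insert b (X \ {a'})) = {a, a'} := by
  ext t
  have h1 : t ∈ X ∧ t ∉ Y ↔ (t = a ∨ t = a') := by rw [← Set.mem_diff, hxd]; simp
  have h2 : t ∈ Y ∧ t ∉ X ↔ (t = b ∨ t = b') := by rw [← Set.mem_diff, hyd]; simp
  have n1 : ¬(t = a ∧ t = a') := by rintro ⟨rfl, rfl⟩; exact haa' rfl
  simp only [Set.mem_symmDiff, Set.mem_insert_iff, Set.mem_diff, Set.mem_singleton_iff]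
  tauto

lemma colid (hxd : X \ Y = {a, a'}) (hyd : Y \ X = {b, b'}) (haa' : a ≠ a') (hbb' : b ≠ b') :
    insert a (Y \ {b}) = insert b' (X \ {a'}) := by
  ext t
  have h1 : t ∈ X ∧ t ∉ Y ↔ (t = a ∨ t = a') := by rw [← Set.mem_diff, hxd]; simp
  have h2 : t ∈ Y ∧ t ∉ X ↔ (t = b ∨ t = b') := by rw [← Set.mem_diff, hyd]; simp
  have n1 : ¬(t = a ∧ t = a') := by rintro ⟨rfl, rfl⟩; exact haa' rfl
  have n2 : ¬(t = b ∧ t = b') := by rintro ⟨rfl, rfl⟩; exact hbb' rfl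
  simp only [Set.mem_insert_iff, Set.mem_diff, Set.mem_singleton_iff]
  tauto

lemma sdfull (hxd : X \ Y = {a, a'}) (hyd : Y \ X = {b, b'}) :
    symmDiff X Y = {a, a', b, b'} := by
  ext t
  have h1 : t ∈ X ∧ t ∉ Y ↔ (t = a ∨ t = a') := by rw [← Set.mem_diff, hxd]; simp
  have h2 : t ∈ Y ∧ t ∉ X ↔ (t = b ∨ t = b') := by rw [← Set.mem_diff, hyd]; simp
  simp only [Set.mem_symmDiff, Set.mem_insert_iff, Set.mem_diff, Set.mem_singleton_iff]
  tauto

lemma ncard4 (h1 : a ≠ a') (h2 : a ≠ b) (h3 : a ≠ b') (h4 : a' ≠ b) (h5 : a' ≠ b')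
    (h6 : b ≠ b') : ({a, a', b, b'} : Set α).ncard = 4 := by
  rw [Set.ncard_insert_of_notMem (by simp [h1, h2, h3]),
    Set.ncard_insert_of_notMem (by simp [h4, h5]), Set.ncard_pair h6]

variable {n : ℕ} {M : Matroid α} {φ : α → (Fin n → ZMod 2)}

lemma phi_mem_span
    (hφ : ∀ I : Set α, I ⊆ M.E → (M.Indep I ↔ LinearIndependent (ZMod 2) (fun x : I => φ x)))
    {X : Set α} (hX : M.IsBase X) {y : α} (hy : y ∈ M.E) (hyX : y ∉ X) :
    φ y ∈ Submodule.span (ZMod 2) (φ '' X) := by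
  have hdep : ¬ M.Indep (insert y X) := (hX.insert_dep ⟨hy, hyX⟩).not_indep
  rw [hφ _ (insert_subset hy hX.subset_ground), linearIndependent_set_coe_iff, linearIndepOn_insert hyX] at hdep
  have hXi := (hφ X hX.subset_ground).mp hX.indep
  by_contra h
  exact hdep ⟨hXi, h⟩

lemma coeff_ne_zero
    (hφ : ∀ I : Set α, I ⊆ M.E → (M.Indep I ↔ LinearIndependent (ZMod 2) (fun x : I => φ x)))
    {X : Set α} (hXE : X ⊆ M.E) {x y : α} (hyX : y ∉ X) (hyE : y ∈ M.E)
    (hW : M.Indep (insert y (X \ {x})))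
    {c : α →₀ ZMod 2} (hc : ↑c.support ⊆ X)
    (hcy : Finsupp.linearCombination (ZMod 2) φ c = φ y) : c x ≠ 0 := by
  intro hcx
  have hWE : insert y (X \ {x}) ⊆ M.E :=
    insert_subset hyE ((diff_subset).trans hXE)
  have hLI : LinearIndependent (ZMod 2) (φ ∘ (Subtype.val) : (insert y (X \ {x}) : Set α) → _) :=
    (hφ _ hWE).mp hW
  rw [linearIndependent_comp_subtype_iff, linearIndepOn_iff] at hLI
  set l : α →₀ ZMod 2 := Finsupp.single y 1 - c with hl
  have hcy0 : c y = 0 := Finsupp.notMem_support_iff.mp (fun h => hyX (hc h))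
  have hsupp : l ∈ Finsupp.supported (ZMod 2) (ZMod 2) (insert y (X \ {x})) := by
    intro a ha
    rw [Finset.mem_coe, Finsupp.mem_support_iff] at ha
    by_cases hay : a = y
    · exact hay ▸ mem_insert _ _
    · have : l a = -(c a) := by simp [hl, Finsupp.single_eq_of_ne hay]
      rw [this] at ha
      have hca : c a ≠ 0 := fun h => ha (by rw [h, neg_zero])
      have haX : a ∈ X := hc (Finsupp.mem_support_iff.mpr hca)
      have hax : a ≠ x := fun h => hca (h ▸ hcx)
      exact mem_insert_of_mem _ ⟨haX, hax⟩
  have hcomb : Finsupp.linearCombination (ZMod 2) φ l = 0 := by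
    rw [hl, map_sub, Finsupp.linearCombination_single, one_smul, hcy, sub_self]
  have := hLI l hsupp hcomb
  have hly : l y = 1 := by simp [hl, hcy0]
  rw [this] at hly
  simp at hly

lemma no_octa (M : Matroid α) (hbin : M.IsBinary)
    {X Y : Set α} (hX : M.IsBase X) (hY : M.IsBase Y)
    {x1 x2 y1 y2 : α}
    (hxd : X \ Y = {x1, x2}) (hyd : Y \ X = {y1, y2})
    (hx12 : x1 ≠ x2) (hy12 : y1 ≠ y2)
    (B11 : M.Indep (insert y1 (X \ {x1})))
    (B12 : M.Indep (insert y2 (X \ {x1})))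
    (B21 : M.Indep (insert y1 (X \ {x2})))
    (B22 : M.Indep (insert y2 (X \ {x2})))
    : False := by
  obtain ⟨n, φ, hφ⟩ := hbin
  have hx1 : x1 ∈ X \ Y := by rw [hxd]; exact Set.mem_insert _ _
  have hx2 : x2 ∈ X \ Y := by rw [hxd]; simp
  have hy1 : y1 ∈ Y \ X := by rw [hyd]; exact Set.mem_insert _ _
  have hy2 : y2 ∈ Y \ X := by rw [hyd]; simp
  have hy1E : y1 ∈ M.E := hY.subset_ground hy1.1
  have hy2E : y2 ∈ M.E := hY.subset_ground hy2.1
  have hXE := hX.subset_ground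
  obtain ⟨c1, hc1s, hc1⟩ := (Finsupp.mem_span_image_iff_linearCombination (ZMod 2)).mp
    (phi_mem_span hφ hX hy1E hy1.2)
  obtain ⟨c2, hc2s, hc2⟩ := (Finsupp.mem_span_image_iff_linearCombination (ZMod 2)).mp
    (phi_mem_span hφ hX hy2E hy2.2)
  rw [Finsupp.mem_supported] at hc1s hc2s
  have h2cases : ∀ a : ZMod 2, a ≠ 0 → a = 1 := by decide
  have a11 : c1 x1 = 1 := h2cases _ (coeff_ne_zero hφ hXE hy1.2 hy1E B11 hc1s hc1)
  have a12 : c1 x2 = 1 := h2cases _ (coeff_ne_zero hφ hXE hy1.2 hy1E B21 hc1s hc1)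
  have a21 : c2 x1 = 1 := h2cases _ (coeff_ne_zero hφ hXE hy2.2 hy2E B12 hc2s hc2)
  have a22 : c2 x2 = 1 := h2cases _ (coeff_ne_zero hφ hXE hy2.2 hy2E B22 hc2s hc2)
  have hc1y1 : c1 y1 = 0 := Finsupp.notMem_support_iff.mp (fun h => hy1.2 (hc1s h))
  have hc2y1 : c2 y1 = 0 := Finsupp.notMem_support_iff.mp (fun h => hy1.2 (hc2s h))
  set l : α →₀ ZMod 2 := c1 + c2 + Finsupp.single y1 1 + Finsupp.single y2 1 with hl
  have hYLI := (linearIndepOn_iff (v := φ) (s := Y)).mp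
    ((hφ _ hY.subset_ground).mp hY.indep)
  have hsupp : l ∈ Finsupp.supported (ZMod 2) (ZMod 2) Y := by
    intro a ha
    rw [Finset.mem_coe, Finsupp.mem_support_iff] at ha
    by_cases h1 : a = y1
    · exact h1 ▸ hy1.1
    by_cases h2 : a = y2
    · exact h2 ▸ hy2.1
    by_contra haY
    have hla : l a = c1 a + c2 a := by
      simp [hl, Finsupp.single_eq_of_ne h1, Finsupp.single_eq_of_ne h2]
    by_cases haX : a ∈ X
    · have : a ∈ X \ Y := ⟨haX, haY⟩
      rw [hxd] at this
      rcases this with rfl | rfl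
      · rw [hla, a11, a21] at ha; exact ha (by decide)
      · rw [hla, a12, a22] at ha; exact ha (by decide)
    · have h1a : c1 a = 0 := Finsupp.notMem_support_iff.mp (fun h => haX (hc1s h))
      have h2a : c2 a = 0 := Finsupp.notMem_support_iff.mp (fun h => haX (hc2s h))
      rw [hla, h1a, h2a] at ha; exact ha (by decide)
  have hcomb : Finsupp.linearCombination (ZMod 2) φ l = 0 := by
    rw [hl, map_add, map_add, map_add, Finsupp.linearCombination_single,
      Finsupp.linearCombination_single, one_smul, one_smul, hc1, hc2]
    have hadd : ∀ v : Fin n → ZMod 2, v + v = 0 := by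
      intro v; funext i
      have : ∀ a : ZMod 2, a + a = 0 := by decide
      exact this (v i)
    calc φ y1 + φ y2 + φ y1 + φ y2 = (φ y1 + φ y1) + (φ y2 + φ y2) := by abel
    _ = 0 := by rw [hadd, hadd, add_zero]
  have hl0 := hYLI l hsupp hcomb
  have hly : l y1 = 1 := by
    simp [hl, hc1y1, hc2y1, Finsupp.single_eq_of_ne hy12]
  rw [hl0] at hly
  simp at hly

lemma aux (M : Matroid α) (hfin : M.E.Finite) (hbin : M.IsBinary)
    (X Y : Set α) (hX : M.IsBase X) (hY : M.IsBase Y) (hnadj : ¬ M.BaseAdj X Y)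
    (x1 x2 y1 y2 : α) (hx12 : x1 ≠ x2) (hy12 : y1 ≠ y2)
    (hxd : X \ Y = {x1, x2}) (hyd : Y \ X = {y1, y2})
    (hB1 : M.IsBase (insert y1 (X \ {x1}))) (hB4 : M.IsBase (insert y2 (X \ {x2}))) :
    ∃ U V : Set α, M.EmptySquare X Y U V ∧
      ∀ U' V' : Set α, M.EmptySquare X Y U' V' → ({U', V'} : Set (Set α)) = {U, V} := by
  have hx1 : x1 ∈ X \ Y := by rw [hxd]; exact Set.mem_insert _ _
  have hx2 : x2 ∈ X \ Y := by rw [hxd]; simp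
  have hy1 : y1 ∈ Y \ X := by rw [hyd]; exact Set.mem_insert _ _
  have hy2 : y2 ∈ Y \ X := by rw [hyd]; simp
  have hx1y1 : x1 ≠ y1 := fun h => hy1.2 (h ▸ hx1.1)
  have hx1y2 : x1 ≠ y2 := fun h => hy2.2 (h ▸ hx1.1)
  have hx2y1 : x2 ≠ y1 := fun h => hy1.2 (h ▸ hx2.1)
  have hx2y2 : x2 ≠ y2 := fun h => hy2.2 (h ▸ hx2.1)
  have hxd' : X \ Y = {x2, x1} := by rw [hxd, Set.pair_comm]
  have hyd' : Y \ X = {y2, y1} := by rw [hyd, Set.pair_comm]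
  set W1 := insert y1 (X \ {x1}) with hW1
  set W2 := insert y2 (X \ {x1}) with hW2
  set W3 := insert y1 (X \ {x2}) with hW3
  set W4 := insert y2 (X \ {x2}) with hW4
  have adjcomm : ∀ A B : Set α, M.BaseAdj A B → M.BaseAdj B A :=
    fun A B h => ⟨h.2.1, h.1, by rw [symmDiff_comm]; exact h.2.2⟩
  have adjXW1 : M.BaseAdj X W1 := ⟨hX, hB1, by rw [hW1, sd1 hxd hyd]; exact Set.ncard_pair hx1y1⟩
  have adjW1Y : M.BaseAdj W1 Y :=
    ⟨hB1, hY, by rw [hW1, sd2 hxd hyd hx12 hy12]; exact Set.ncard_pair hx2y2⟩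
  have adjXW4 : M.BaseAdj X W4 :=
    ⟨hX, hB4, by rw [hW4, sd1 hxd' hyd']; exact Set.ncard_pair hx2y2⟩
  have adjW4Y : M.BaseAdj W4 Y :=
    ⟨hB4, hY, by rw [hW4, sd2 hxd' hyd' hx12.symm hy12.symm]; exact Set.ncard_pair hx1y1⟩
  have neW1W4 : W1 ≠ W4 := by
    intro h
    have : y1 ∈ W4 := h ▸ Set.mem_insert _ _
    rw [hW4] at this
    rcases this with h' | h'
    · exact hy12 h'
    · exact hy1.2 h'.1
  have nadj14 : ¬ M.BaseAdj W1 W4 := by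
    rintro ⟨-, -, h⟩
    rw [hW1, hW4, sd3 hxd hyd hx12 hy12,
      ncard4 hx1y1 hx12 hx1y2 hx2y1.symm hy12 hx2y2] at h
    omega
  have hsdfin : ∀ A B : Set α, A ⊆ M.E → B ⊆ M.E → (symmDiff A B).Finite := by
    intro A B hA hB
    rw [Set.symmDiff_def]
    exact ((hfin.subset hA).diff).union ((hfin.subset hB).diff)
  have hXY4 : (symmDiff X Y).ncard = 4 := by
    rw [sdfull hxd hyd]
    exact ncard4 hx12 hx1y1 hx1y2 hx2y1 hx2y2 hy12
  have classify : ∀ U', M.BaseAdj X U' → M.BaseAdj U' Y →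
      (U' = W1 ∨ U' = W2 ∨ U' = W3 ∨ U' = W4) := by
    rintro U' ⟨-, hU', hcard⟩ ⟨-, -, hcard2⟩
    have hU'E := hU'.subset_ground
    have hfX : X.Finite := hfin.subset hX.subset_ground
    have hfU : U'.Finite := hfin.subset hU'E
    have hdc : (X \ U').ncard = (U' \ X).ncard := hX.ncard_diff_comm hU'
    have hsum : (X \ U').ncard + (U' \ X).ncard = 2 := by
      rw [← Set.ncard_union_eq disjoint_sdiff_sdiff (hfX.diff) (hfU.diff),
        ← Set.symmDiff_def]
      exact hcard
    have h1 : (X \ U').ncard = 1 := by omega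
    have h2 : (U' \ X).ncard = 1 := by omega
    obtain ⟨a, ha⟩ := Set.ncard_eq_one.mp h1
    obtain ⟨b, hb⟩ := Set.ncard_eq_one.mp h2
    have haX : a ∈ X \ U' := by rw [ha]; rfl
    have hbU : b ∈ U' \ X := by rw [hb]; rfl
    have hU'eq : U' = insert b (X \ {a}) := by
      ext t
      have e1 : t ∈ X ∧ t ∉ U' ↔ t = a := by rw [← Set.mem_diff, ha]; simp
      have e2 : t ∈ U' ∧ t ∉ X ↔ t = b := by rw [← Set.mem_diff, hb]; simp
      simp only [Set.mem_insert_iff, Set.mem_diff, Set.mem_singleton_iff]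
      tauto
    have hsub : symmDiff X Y ⊆ symmDiff X U' ∪ symmDiff U' Y := by
      intro t
      simp only [Set.mem_symmDiff, Set.mem_union]
      tauto
    have hle : (symmDiff X U' ∪ symmDiff U' Y).ncard ≤ 4 := by
      refine le_trans (Set.ncard_union_le _ _) ?_
      rw [hcard, hcard2]
    have heq : symmDiff X Y = symmDiff X U' ∪ symmDiff U' Y :=
      Set.eq_of_subset_of_ncard_le hsub (by rw [hXY4]; exact hle)
        ((hsdfin _ _ hX.subset_ground hU'E).union (hsdfin _ _ hU'E hY.subset_ground))
    have hsub2 : symmDiff X U' ⊆ symmDiff X Y := heq ▸ Set.subset_union_left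
    have haXY : a ∈ symmDiff X Y := hsub2 (Or.inl ⟨haX.1, haX.2⟩)
    have hbXY : b ∈ symmDiff X Y := hsub2 (Or.inr ⟨hbU.1, hbU.2⟩)
    have haxy : a ∈ X \ Y := by
      rcases haXY with h | h
      · exact h
      · exact absurd haX.1 h.2
    have hbxy : b ∈ Y \ X := by
      rcases hbXY with h | h
      · exact absurd hbU.2 (not_not_intro h.1)
      · exact h
    rw [hxd] at haxy
    rw [hyd] at hbxy
    rcases haxy with rfl | rfl <;> rcases hbxy with rfl | rfl
    · exact Or.inl (by rw [hU'eq, hW1])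
    · exact Or.inr (Or.inl (by rw [hU'eq, hW2]))
    · exact Or.inr (Or.inr (Or.inl (by rw [hU'eq, hW3])))
    · exact Or.inr (Or.inr (Or.inr (by rw [hU'eq, hW4])))
  refine ⟨W1, W4, ⟨hB1, hB4, neW1W4, adjXW1, adjW1Y, adjcomm _ _ adjW4Y, adjcomm _ _ adjXW4,
    nadj14, hnadj⟩, ?_⟩
  rintro U' V' ⟨hbU', hbV', hne', hXU', hU'Y, hYV', hV'X, hnUV', -⟩
  have clsU := classify U' hXU' hU'Y
  have clsV := classify V' (adjcomm _ _ hV'X) (adjcomm _ _ hYV')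
  have adj12 : (symmDiff W1 W2).ncard = 2 := by
    rw [hW1, hW2, sdrow hxd hyd hy12]; exact Set.ncard_pair hy12
  have adj34 : (symmDiff W3 W4).ncard = 2 := by
    rw [hW3, hW4, sdrow hxd' hyd hy12]; exact Set.ncard_pair hy12
  have adj13 : (symmDiff W1 W3).ncard = 2 := by
    rw [hW1, hW3, sdcol hxd hyd hx12]; exact Set.ncard_pair hx12
  have adj24 : (symmDiff W2 W4).ncard = 2 := by
    rw [hW2, hW4, sdcol hxd hyd' hx12]; exact Set.ncard_pair hx12
  have octa : U' = W2 → V' = W3 → False := by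
    rintro rfl rfl
    exact no_octa M hbin hX hY hxd hyd hx12 hy12 hB1.indep hbU'.indep hbV'.indep hB4.indep
  have octa' : U' = W3 → V' = W2 → False := by
    rintro rfl rfl
    exact no_octa M hbin hX hY hxd hyd hx12 hy12 hB1.indep hbV'.indep hbU'.indep hB4.indep
  rcases clsU with rfl | rfl | rfl | rfl <;> rcases clsV with rfl | rfl | rfl | rfl
  · exact absurd rfl hne'
  · exact absurd ⟨hbU', hbV', adj12⟩ hnUV'
  · exact absurd ⟨hbU', hbV', adj13⟩ hnUV'
  · rfl
  · exact absurd ⟨hbU', hbV', by rw [symmDiff_comm]; exact adj12⟩ hnUV'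
  · exact absurd rfl hne'
  · exact (octa rfl rfl).elim
  · exact absurd ⟨hbU', hbV', adj24⟩ hnUV'
  · exact absurd ⟨hbU', hbV', by rw [symmDiff_comm]; exact adj13⟩ hnUV'
  · exact (octa' rfl rfl).elim
  · exact absurd rfl hne'
  · exact absurd ⟨hbU', hbV', adj34⟩ hnUV'
  · exact Set.pair_comm _ _
  · exact absurd ⟨hbU', hbV', by rw [symmDiff_comm]; exact adj24⟩ hnUV'
  · exact absurd ⟨hbU', hbV', by rw [symmDiff_comm]; exact adj34⟩ hnUV'
  · exact absurd rfl hne'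

end StmtElevenAux

theorem stmt_11 {α : Type*} (M : Matroid α) (hfin : M.E.Finite) (hbin : M.IsBinary)
    (X Y : Set α) (hX : M.IsBase X) (hY : M.IsBase Y)
    (hdist : X ≠ Y ∧ ¬ M.BaseAdj X Y ∧ ∃ Z, M.BaseAdj X Z ∧ M.BaseAdj Z Y) :
    ∃ U V : Set α, M.EmptySquare X Y U V ∧
      ∀ U' V' : Set α, M.EmptySquare X Y U' V' → ({U', V'} : Set (Set α)) = {U, V} := by
  obtain ⟨hne, hnadj, Z, hXZ, hZY⟩ := hdist
  have hXf : X.Finite := hfin.subset hX.subset_ground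
  have hYf : Y.Finite := hfin.subset hY.subset_ground
  have hZbase := hXZ.2.1
  have hsXZ := hXZ.2.2
  have hsZY := hZY.2.2
  have hsdfin : ∀ A B : Set α, A ⊆ M.E → B ⊆ M.E → (symmDiff A B).Finite := by
    intro A B hA hB
    rw [Set.symmDiff_def]
    exact ((hfin.subset hA).diff).union ((hfin.subset hB).diff)
  have hsub : symmDiff X Y ⊆ symmDiff X Z ∪ symmDiff Z Y := by
    intro t
    simp only [Set.mem_symmDiff, Set.mem_union]
    tauto
  have h4 : (symmDiff X Y).ncard ≤ 4 := by
    refine le_trans (Set.ncard_le_ncard hsub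
      ((hsdfin _ _ hX.subset_ground hZbase.subset_ground).union
        (hsdfin _ _ hZbase.subset_ground hY.subset_ground)))
      (le_trans (Set.ncard_union_le _ _) ?_)
    rw [hsXZ, hsZY]
  have heqd : (X \ Y).ncard = (Y \ X).ncard := hX.ncard_diff_comm hY
  have hsum : (symmDiff X Y).ncard = (X \ Y).ncard + (Y \ X).ncard := by
    rw [Set.symmDiff_def]
    exact Set.ncard_union_eq disjoint_sdiff_sdiff (hXf.diff) (hYf.diff)
  have hne0 : (symmDiff X Y).ncard ≠ 0 := by
    intro h
    rw [Set.ncard_eq_zero (hsdfin _ _ hX.subset_ground hY.subset_ground)] at h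
    exact hne (symmDiff_eq_bot.mp h)
  have hne2 : (symmDiff X Y).ncard ≠ 2 := fun h => hnadj ⟨hX, hY, h⟩
  have hXd2 : (X \ Y).ncard = 2 := by omega
  have hYd2 : (Y \ X).ncard = 2 := by omega
  have hXde : (X \ Y).encard = 2 := by
    rw [(hXf.diff).encard_eq_coe, ← Set.ncard_def, hXd2]; rfl
  have hYde : (Y \ X).encard = 2 := by
    rw [(hYf.diff).encard_eq_coe, ← Set.ncard_def, hYd2]; rfl
  obtain ⟨x1, x2, hx12, hxd⟩ := Set.encard_eq_two.mp hXde
  obtain ⟨y1, y2, hy12, hyd⟩ := Set.encard_eq_two.mp hYde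
  have hx1 : x1 ∈ X \ Y := by rw [hxd]; exact Set.mem_insert _ _
  have hx2 : x2 ∈ X \ Y := by rw [hxd]; simp
  have hy1 : y1 ∈ Y \ X := by rw [hyd]; exact Set.mem_insert _ _
  have hy2 : y2 ∈ Y \ X := by rw [hyd]; simp
  have hxd' : X \ Y = {x2, x1} := by rw [hxd, Set.pair_comm]
  have hyd' : Y \ X = {y2, y1} := by rw [hyd, Set.pair_comm]
  have hex1 : M.IsBase (insert y1 (X \ {x1})) ∨ M.IsBase (insert y2 (X \ {x1})) := by
    obtain ⟨y, hy, hB⟩ := hX.exchange hY hx1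
    rw [hyd] at hy
    simp only [Set.mem_insert_iff, Set.mem_singleton_iff] at hy
    rcases hy with rfl | rfl
    · exact Or.inl hB
    · exact Or.inr hB
  have hex2 : M.IsBase (insert y1 (X \ {x2})) ∨ M.IsBase (insert y2 (X \ {x2})) := by
    obtain ⟨y, hy, hB⟩ := hX.exchange hY hx2
    rw [hyd] at hy
    simp only [Set.mem_insert_iff, Set.mem_singleton_iff] at hy
    rcases hy with rfl | rfl
    · exact Or.inl hB
    · exact Or.inr hB
  have hex3 : M.IsBase (insert y2 (X \ {x2})) ∨ M.IsBase (insert y2 (X \ {x1})) := by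
    obtain ⟨x, hx, hB⟩ := hY.exchange hX hy1
    rw [hxd] at hx
    simp only [Set.mem_insert_iff, Set.mem_singleton_iff] at hx
    rcases hx with rfl | rfl
    · rw [StmtElevenAux.colid hxd hyd hx12 hy12] at hB
      exact Or.inl hB
    · rw [StmtElevenAux.colid hxd' hyd hx12.symm hy12] at hB
      exact Or.inr hB
  have hex4 : M.IsBase (insert y1 (X \ {x2})) ∨ M.IsBase (insert y1 (X \ {x1})) := by
    obtain ⟨x, hx, hB⟩ := hY.exchange hX hy2
    rw [hxd] at hx
    simp only [Set.mem_insert_iff, Set.mem_singleton_iff] at hx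
    rcases hx with rfl | rfl
    · rw [StmtElevenAux.colid hxd hyd' hx12 hy12.symm] at hB
      exact Or.inl hB
    · rw [StmtElevenAux.colid hxd' hyd' hx12.symm hy12.symm] at hB
      exact Or.inr hB
  have hdiag : (M.IsBase (insert y1 (X \ {x1})) ∧ M.IsBase (insert y2 (X \ {x2}))) ∨
      (M.IsBase (insert y2 (X \ {x1})) ∧ M.IsBase (insert y1 (X \ {x2}))) := by tauto
  rcases hdiag with ⟨hB1, hB4⟩ | ⟨hB1, hB4⟩
  · exact StmtElevenAux.aux M hfin hbin X Y hX hY hnadj x1 x2 y1 y2 hx12 hy12 hxd hyd hB1 hB4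
  · exact StmtElevenAux.aux M hfin hbin X Y hX hY hnadj x1 x2 y2 y1 hx12 hy12.symm hxd hyd' hB1 hB4
end

section
/- Let M be a binary matroid and let B1 ⊆ B(M) be the set of bases of a matroid M1. If some base X ∈ B1 has all of its neighbors in G(M) (all bases at symmetric-difference distance two from X) also in B1, then B1 = B(M). -/
open Set Submodule

namespace Stmt12Aux

variable {α : Type*} {n : ℕ}

/-- Characteristic-two cancellation. -/
lemma two_cancel (a b c : Fin n → ZMod 2) : (a + b) + (a + c) = b + c := by
  funext i
  have h2 : ∀ t : ZMod 2, t + t = 0 := by decide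
  simp only [Pi.add_apply]
  linear_combination h2 (a i)

lemma span_cancel {S : Submodule (ZMod 2) (Fin n → ZMod 2)} {a b c : Fin n → ZMod 2}
    (h1 : a + b ∈ S) (h2 : a + c ∈ S) : b + c ∈ S := by
  have := S.add_mem h1 h2
  rwa [two_cancel] at this

lemma mem_span_insert_char2 {s : Set (Fin n → ZMod 2)} {u v : Fin n → ZMod 2} :
    v ∈ span (ZMod 2) (insert u s) ↔
      v ∈ span (ZMod 2) s ∨ v + u ∈ span (ZMod 2) s := by
  have h2 : ∀ t : ZMod 2, t + t = 0 := by decide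
  rw [Submodule.mem_span_insert]
  constructor
  · rintro ⟨a, z, hz, rfl⟩
    rcases (show ∀ t : ZMod 2, t = 0 ∨ t = 1 by decide) a with rfl | rfl
    · left; simpa using hz
    · right
      have : (1 : ZMod 2) • u + z + u = z := by
        funext i
        simp only [Pi.add_apply, Pi.smul_apply, one_smul]
        linear_combination h2 (u i)
      rwa [this]
  · rintro (hv | hv)
    · exact ⟨0, v, hv, by simp⟩
    · refine ⟨1, v + u, hv, ?_⟩
      funext i
      simp only [Pi.add_apply, Pi.smul_apply, one_smul]
      linear_combination - h2 (u i)

/-- The bridge between matroid independence and linear span. -/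
lemma bridge {M : Matroid α} {φ : α → (Fin n → ZMod 2)}
    (hrep : ∀ I : Set α, I ⊆ M.E →
      (M.Indep I ↔ LinearIndependent (ZMod 2) (fun x : I => φ x)))
    {T : Set α} {w : α} (hT : M.Indep T) (hw : w ∈ M.E) (hwT : w ∉ T) :
    M.Indep (insert w T) ↔ φ w ∉ span (ZMod 2) (φ '' T) := by
  rw [hrep _ (insert_subset hw hT.subset_ground)]
  change LinearIndepOn (ZMod 2) φ (insert w T) ↔ _
  rw [linearIndepOn_insert hwT]
  have : LinearIndepOn (ZMod 2) φ T := (hrep T hT.subset_ground).mp hT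
  tauto

lemma base_of_ncard {M : Matroid α} [Matroid.RankFinite M] {I B : Set α}
    (hI : M.Indep I) (hB : M.IsBase B) (hcard : I.ncard = B.ncard) : M.IsBase I := by
  by_contra h
  obtain ⟨e, he, hins⟩ := hI.exists_insert_of_not_isBase h hB
  obtain ⟨B', hB', hsub'⟩ := hins.exists_isBase_superset
  have h1 : (insert e I).ncard ≤ B'.ncard := ncard_le_ncard hsub' hB'.finite
  have h2 : B'.ncard = B.ncard := hB'.ncard_eq_ncard_of_isBase hB
  have h3 : (insert e I).ncard = I.ncard + 1 := ncard_insert_of_notMem he.2 hI.finite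
  omega

lemma symmDiff_exch {B : Set α} {e f : α} (he : e ∈ B) (hf : f ∉ B) :
    symmDiff B (insert f (B \ {e})) = {e, f} := by
  have hef : e ≠ f := by rintro rfl; exact hf he
  rw [Set.symmDiff_def]
  ext a
  simp only [mem_union, mem_diff, mem_insert_iff, mem_singleton_iff]
  constructor
  · rintro (⟨haB, hn⟩ | ⟨(rfl | ⟨haB, -⟩), hnB⟩)
    · left
      by_contra h
      exact hn (Or.inr ⟨haB, h⟩)
    · right; rfl
    · exact absurd haB hnB
  · rintro (rfl | rfl)
    · refine Or.inl ⟨he, ?_⟩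
      rintro (h | ⟨-, h⟩)
      · exact hef h
      · exact h rfl
    · exact Or.inr ⟨Or.inl rfl, hf⟩

lemma nbr_card {B : Set α} {e f : α} (he : e ∈ B) (hf : f ∉ B) :
    (symmDiff B (insert f (B \ {e}))).ncard = 2 := by
  have hef : e ≠ f := by rintro rfl; exact hf he
  rw [symmDiff_exch he hf, ncard_pair hef]

lemma exch_struct {M : Matroid α} [M.Finite] {B B' : Set α} (hB : M.IsBase B) (hB' : M.IsBase B')
    (h : (symmDiff B B').ncard = 2) :
    ∃ e f, e ∈ B ∧ f ∉ B ∧ B' = insert f (B \ {e}) := by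
  have hfinB : B.Finite := M.set_finite B hB.subset_ground
  have hfinB' : B'.Finite := M.set_finite B' hB'.subset_ground
  rw [Set.symmDiff_def,
    ncard_union_eq disjoint_sdiff_sdiff (hfinB.diff) (hfinB'.diff)] at h
  have hcomm := hB.ncard_diff_comm hB'
  have h1 : (B \ B').ncard = 1 := by omega
  have h2 : (B' \ B).ncard = 1 := by omega
  obtain ⟨e, hee⟩ := ncard_eq_one.mp h1
  obtain ⟨f, hff⟩ := ncard_eq_one.mp h2
  have heB : e ∈ B \ B' := by rw [hee]; exact mem_singleton e
  have hfB : f ∈ B' \ B := by rw [hff]; exact mem_singleton f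
  refine ⟨e, f, heB.1, hfB.2, ?_⟩
  ext a
  simp only [mem_insert_iff, mem_diff, mem_singleton_iff]
  constructor
  · intro ha
    by_cases haB : a ∈ B
    · refine Or.inr ⟨haB, fun hae => ?_⟩
      subst hae
      exact heB.2 ha
    · have : a ∈ B' \ B := ⟨ha, haB⟩
      rw [hff] at this
      exact Or.inl this
  · rintro (rfl | ⟨haB, hane⟩)
    · exact hfB.1
    · by_contra hc
      have : a ∈ B \ B' := ⟨haB, hc⟩
      rw [hee] at this
      exact hane this

lemma symmDiff_update {X B : Set α} {e f : α} (he : e ∈ B \ X) (hf : f ∈ X \ B) :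
    symmDiff X (insert f (B \ {e})) = (symmDiff X B) \ {e, f} := by
  obtain ⟨heB, heX⟩ := he
  obtain ⟨hfX, hfB⟩ := hf
  ext a
  by_cases haf : a = f
  · subst haf
    simp [Set.symmDiff_def, hfX, hfB]
  · by_cases hae : a = e
    · subst hae
      simp [Set.symmDiff_def, heB, heX, fun h : a = f => haf h]
    · simp only [Set.symmDiff_def, mem_union, mem_diff, mem_insert_iff, mem_singleton_iff]
      have hnef : ¬(a = e ∨ a = f) := by rintro (rfl | rfl); exacts [hae rfl, haf rfl]
      constructor
      · rintro (⟨haX, hn⟩ | ⟨(rfl | ⟨haB, -⟩), hnX⟩)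
        · have haB : a ∉ B := fun h => hn (Or.inr ⟨h, hae⟩)
          exact ⟨Or.inl ⟨haX, haB⟩, hnef⟩
        · exact absurd hfX hnX
        · exact ⟨Or.inr ⟨haB, hnX⟩, hnef⟩
      · rintro ⟨(⟨haX, haB⟩ | ⟨haB, hnX⟩), -⟩
        · exact Or.inl ⟨haX, fun h => by
            rcases h with h | ⟨h, -⟩
            exacts [haf h, haB h]⟩
        · exact Or.inr ⟨Or.inr ⟨haB, hae⟩, hnX⟩

/-- The key propagation step: if all neighbours of a basis `Y` belong to `M1`,
then so do all neighbours of any neighbour `Z` of `Y`. -/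
lemma prop_step {M M1 : Matroid α} [M.Finite] {φ : α → (Fin n → ZMod 2)}
    (hrep : ∀ I : Set α, I ⊆ M.E →
      (M.Indep I ↔ LinearIndependent (ZMod 2) (fun x : I => φ x)))
    (hsub : ∀ B, M1.IsBase B → M.IsBase B)
    {Y Z : Set α} (hY : M.IsBase Y) (hY1 : M1.IsBase Y)
    (hYnbr : ∀ W, M.IsBase W → (symmDiff Y W).ncard = 2 → M1.IsBase W)
    (hZ : M.IsBase Z) (hYZ : (symmDiff Y Z).ncard = 2) :
    ∀ W, M.IsBase W → (symmDiff Z W).ncard = 2 → M1.IsBase W := by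
  intro W hW hZW
  obtain ⟨b, c, hbY, hcY, hZeq⟩ := exch_struct hY hZ hYZ
  obtain ⟨x, d, hxZ, hdZ, hWeq⟩ := exch_struct hZ hW hZW
  have hcZ : c ∈ Z := by rw [hZeq]; exact mem_insert c _
  by_cases hxc : x = c
  · have hZx : Z \ {x} = Y \ {b} := by
      rw [hZeq, hxc]
      exact insert_diff_self_of_notMem (fun h => hcY h.1)
    by_cases hdb : d = b
    · have hWY : W = Y := by
        rw [hWeq, hZx, hdb, insert_diff_singleton, insert_eq_self.mpr hbY]
      rw [hWY]; exact hY1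
    · have hdY : d ∉ Y := by
        intro hdY'
        rw [hZeq] at hdZ
        exact hdZ (mem_insert_iff.mpr (Or.inr ⟨hdY', fun h => hdb h⟩))
      apply hYnbr W hW
      rw [hWeq, hZx]
      exact nbr_card hbY hdY
  · -- x ≠ c, so x ∈ Y \ {b}
    have hxYb : x ∈ Y \ {b} := by
      rw [hZeq] at hxZ
      rcases mem_insert_iff.mp hxZ with h | h
      · exact absurd h hxc
      · exact h
    have hxY : x ∈ Y := hxYb.1
    have hxb : x ≠ b := fun h => hxYb.2 h
    by_cases hdb : d = b
    · -- W = insert c (Y \ {x})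
      have hWY : W = insert c (Y \ {x}) := by
        rw [hWeq, hZeq, hdb]
        ext a
        simp only [mem_insert_iff, mem_diff, mem_singleton_iff]
        constructor
        · rintro (rfl | ⟨(rfl | ⟨haY, hab⟩), hax⟩)
          · exact Or.inr ⟨hbY, hxb.symm⟩
          · exact Or.inl rfl
          · exact Or.inr ⟨haY, hax⟩
        · rintro (rfl | ⟨haY, hax⟩)
          · exact Or.inr ⟨Or.inl rfl, Ne.symm hxc⟩
          · by_cases hab : a = b
            · exact Or.inl hab
            · exact Or.inr ⟨Or.inr ⟨haY, hab⟩, hax⟩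
      apply hYnbr W hW
      rw [hWY]
      exact nbr_card hxY hcY
    · -- the square case
      have hdY : d ∉ Y := by
        intro hdY'
        rw [hZeq] at hdZ
        exact hdZ (mem_insert_iff.mpr (Or.inr ⟨hdY', fun h => hdb h⟩))
      have hdc : d ≠ c := by
        intro h; subst h; exact hdZ hcZ
      set A : Set α := (Y \ {b}) \ {x} with hA
      have hbA : b ∉ A := fun h => h.1.2 rfl
      have hxA : x ∉ A := fun h => h.2 rfl
      have hAY : A ⊆ Y := (diff_subset).trans diff_subset
      have hcA : c ∉ A := fun h => hcY (hAY h)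
      have hdA : d ∉ A := fun h => hdY (hAY h)
      have hYb : Y \ {b} = insert x A := by
        rw [hA, insert_diff_singleton, insert_eq_self.mpr hxYb]
      have hYA : Y = insert b (insert x A) := by
        rw [← hYb, insert_diff_singleton, insert_eq_self.mpr hbY]
      have hYx : Y \ {x} = insert b A := by
        rw [hA, diff_diff_comm, insert_diff_singleton,
          insert_eq_self.mpr (show b ∈ Y \ {x} from ⟨hbY, hxb.symm⟩)]
      have hZA : Z = insert c (insert x A) := by rw [hZeq, hYb]
      have hZx : Z \ {x} = insert c A := by
        rw [hZA, insert_diff_of_notMem _ (by simpa using (Ne.symm hxc)),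
          insert_diff_self_of_notMem hxA]
      have hWA : W = insert d (insert c A) := by rw [hWeq, hZx]
      have hcE : c ∈ M.E := hZ.subset_ground hcZ
      have hdE : d ∈ M.E := hW.subset_ground (hWeq ▸ mem_insert d _)
      have hbc : b ≠ c := fun h => hcY (h ▸ hbY)
      have hbd : b ≠ d := fun h => hdY (h ▸ hbY)
      have hxd : x ≠ d := fun h => hdY (h ▸ hxY)
      have hAind : M.Indep A := hY.indep.subset hAY
      have hAfin : A.Finite := (M.set_finite Y hY.subset_ground).subset hAY
      have hbind : M.Indep (insert b A) := hY.indep.subset (insert_subset hbY hAY)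
      have hxind : M.Indep (insert x A) := hY.indep.subset (insert_subset hxY hAY)
      have hAZ : A ⊆ Z := by
        rw [hZA]; exact (subset_insert x A).trans (subset_insert c _)
      have hcind : M.Indep (insert c A) := hZ.indep.subset (insert_subset hcZ hAZ)
      have hdind : M.Indep (insert d A) := by
        apply hW.indep.subset
        rw [hWA]
        exact insert_subset_insert (subset_insert c A)
      -- the key criterion
      have key : ∀ u v : α, u ≠ v → u ∉ A → v ∉ A →
          M.Indep (insert u A) → M.Indep (insert v A) →
          (M.IsBase (insert u (insert v A)) ↔ φ u + φ v ∉ span (ZMod 2) (φ '' A)) := by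
        intro u v huv huA hvA hu hv
        have huE : u ∈ M.E := hu.subset_ground (mem_insert u A)
        have hprime : M.Indep (insert u (insert v A)) ↔
            φ u + φ v ∉ span (ZMod 2) (φ '' A) := by
          rw [bridge hrep hv huE (by simp [huA, huv]), image_insert_eq,
            mem_span_insert_char2]
          have hnu : φ u ∉ span (ZMod 2) (φ '' A) := (bridge hrep hAind huE huA).mp hu
          tauto
        constructor
        · exact fun h => hprime.mp h.indep
        · intro h
          refine base_of_ncard (hprime.mpr h) hY ?_
          have hv' : v ∉ A := hvA
          have h1 : (insert u (insert v A)).ncard = A.ncard + 2 := by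
            rw [ncard_insert_of_notMem (by simp [huv, huA]) (hAfin.insert v),
              ncard_insert_of_notMem hvA hAfin]
          have h2 : Y.ncard = A.ncard + 2 := by
            rw [hYA, ncard_insert_of_notMem (by simp [hxb.symm, hbA]) (hAfin.insert x),
              ncard_insert_of_notMem hxA hAfin]
          omega
      have hPbx : φ b + φ x ∉ span (ZMod 2) (φ '' A) :=
        (key b x hxb.symm hbA hxA hbind hxind).mp (hYA ▸ hY)
      have hPxc : φ x + φ c ∉ span (ZMod 2) (φ '' A) :=
        (key x c hxc hxA hcA hxind hcind).mp
          (by rw [← insert_comm, ← hZA]; exact hZ)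
      have hPdc : φ d + φ c ∉ span (ZMod 2) (φ '' A) :=
        (key d c hdc hdA hcA hdind hcind).mp (hWA ▸ hW)
      have hZ1 : M1.IsBase Z := hYnbr Z hZ hYZ
      -- neighbours of Y among the corners
      have hK2nbr_of : M.IsBase (insert b (insert d A)) → M1.IsBase (insert b (insert d A)) := by
        intro hKb
        apply hYnbr _ hKb
        have : insert b (insert d A) = insert d (Y \ {x}) := by
          rw [hYx, insert_comm]
        rw [this]
        exact nbr_card hxY hdY
      by_cases hbcS : φ b + φ c ∈ span (ZMod 2) (φ '' A)
      · -- Case A : K1 empty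
        have hbdS : φ b + φ d ∉ span (ZMod 2) (φ '' A) := by
          intro h
          exact hPdc (by rw [add_comm]; exact span_cancel hbcS h)
        have hK2base : M.IsBase (insert b (insert d A)) :=
          (key b d hbd hbA hdA hbind hdind).mpr hbdS
        have hK2 : M1.IsBase (insert b (insert d A)) := hK2nbr_of hK2base
        have hxK2 : x ∉ insert b (insert d A) := by simp [hxb, hxd, hxA]
        obtain ⟨f, hf, hfbase⟩ := hZ1.exchange hK2 ⟨hxZ, hxK2⟩
        have hfcases : f = b ∨ f = d := by
          rcases mem_insert_iff.mp hf.1 with h | h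
          · exact Or.inl h
          · rcases mem_insert_iff.mp h with h | h
            · exact Or.inr h
            · exact absurd (hAZ h) hf.2
        rcases hfcases with hfe | hfe
        · exfalso
          rw [hfe] at hfbase
          rw [hZx] at hfbase
          have := (key b c hbc hbA hcA hbind hcind).mp (hsub _ hfbase)
          exact this hbcS
        · rw [hfe] at hfbase
          rwa [hZx, ← hWA] at hfbase
      · -- Case B : K1 is a base
        have hK1base : M.IsBase (insert b (insert c A)) :=
          (key b c hbc hbA hcA hbind hcind).mpr hbcS
        have hK1 : M1.IsBase (insert b (insert c A)) := by
          apply hYnbr _ hK1base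
          have : insert b (insert c A) = insert c (Y \ {x}) := by
            rw [hYx, insert_comm]
          rw [this]
          exact nbr_card hxY hcY
        by_cases hxdS : φ x + φ d ∈ span (ZMod 2) (φ '' A)
        · -- Case B1 : K4 empty
          have hbdS : φ b + φ d ∉ span (ZMod 2) (φ '' A) := by
            intro h
            exact hPbx (span_cancel (by rwa [add_comm] at h) (by rwa [add_comm] at hxdS))
          have hK2base : M.IsBase (insert b (insert d A)) :=
            (key b d hbd hbA hdA hbind hdind).mpr hbdS
          have hK2 : M1.IsBase (insert b (insert d A)) := hK2nbr_of hK2base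
          have hbZ : b ∉ Z := by rw [hZA]; simp [hbc, hxb.symm, hbA]
          obtain ⟨f, hf, hfbase⟩ := hK2.exchange hZ1 ⟨mem_insert b _, hbZ⟩
          have hK2b : insert b (insert d A) \ {b} = insert d A :=
            insert_diff_self_of_notMem (by simp [hbd, hbA])
          have hfcases : f = c ∨ f = x := by
            rw [hZA] at hf
            rcases mem_insert_iff.mp hf.1 with h | h
            · exact Or.inl h
            · rcases mem_insert_iff.mp h with h | h
              · exact Or.inr h
              · exact absurd (mem_insert_iff.mpr (Or.inr (mem_insert_iff.mpr (Or.inr h)))) hf.2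
          rcases hfcases with hfe | hfe
          · rw [hfe] at hfbase
            rw [hK2b] at hfbase
            rwa [insert_comm, ← hWA] at hfbase
          · exfalso
            rw [hfe] at hfbase
            rw [hK2b] at hfbase
            have := (key x d hxd hxA hdA hxind hdind).mp (hsub _ hfbase)
            exact this hxdS
        · -- Case B2 : K1 and K4 bases; pigeonhole forces K2 empty
          have hK4base : M.IsBase (insert x (insert d A)) :=
            (key x d hxd hxA hdA hxind hdind).mpr hxdS
          have hK4 : M1.IsBase (insert x (insert d A)) := by
            apply hYnbr _ hK4base
            have : insert x (insert d A) = insert d (Y \ {b}) := by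
              rw [hYb, insert_comm]
            rw [this]
            exact nbr_card hbY hdY
          have hcS : φ c ∉ span (ZMod 2) (φ '' A) :=
            (bridge hrep hAind hcE hcA).mp hcind
          have hdS : φ d ∉ span (ZMod 2) (φ '' A) :=
            (bridge hrep hAind hdE hdA).mp hdind
          -- pigeonhole for c
          have hcspan : φ c ∈ span (ZMod 2) (φ '' Y) := by
            by_contra h
            exact ((hY.insert_dep ⟨hcE, hcY⟩).not_indep)
              ((bridge hrep hY.indep hcE hcY).mpr h)
          rw [hYA, image_insert_eq, image_insert_eq] at hcspan
          have hcT : φ c + φ b + φ x ∈ span (ZMod 2) (φ '' A) := by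
            rcases mem_span_insert_char2.mp hcspan with h | h
            · rcases mem_span_insert_char2.mp h with h' | h'
              · exact absurd h' hcS
              · exact absurd (by rwa [add_comm] at h') hPxc
            · rcases mem_span_insert_char2.mp h with h' | h'
              · exact absurd (by rwa [add_comm] at h') hbcS
              · exact h'
          have hdspan : φ d ∈ span (ZMod 2) (φ '' Y) := by
            by_contra h
            exact ((hY.insert_dep ⟨hdE, hdY⟩).not_indep)
              ((bridge hrep hY.indep hdE hdY).mpr h)
          rw [hYA, image_insert_eq, image_insert_eq] at hdspan
          have hdbS : φ d + φ b ∈ span (ZMod 2) (φ '' A) := by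
            rcases mem_span_insert_char2.mp hdspan with h | h
            · rcases mem_span_insert_char2.mp h with h' | h'
              · exact absurd h' hdS
              · exact absurd (by rwa [add_comm] at h') hxdS
            · rcases mem_span_insert_char2.mp h with h' | h'
              · exact h'
              · exfalso
                apply hPdc
                have hc' : (φ b + φ x) + φ c ∈ span (ZMod 2) (φ '' A) := by
                  have : φ c + φ b + φ x = (φ b + φ x) + φ c := by ring
                  rwa [this] at hcT
                have hd' : (φ b + φ x) + φ d ∈ span (ZMod 2) (φ '' A) := by
                  have : φ d + φ b + φ x = (φ b + φ x) + φ d := by ring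
                  rwa [this] at h'
                have := span_cancel hc' hd'
                rwa [add_comm] at this
          -- exchange between K4 and K1
          have hxK1 : x ∉ insert b (insert c A) := by simp [hxb, hxc, hxA]
          obtain ⟨f, hf, hfbase⟩ := hK4.exchange hK1 ⟨mem_insert x _, hxK1⟩
          have hK4x : insert x (insert d A) \ {x} = insert d A :=
            insert_diff_self_of_notMem (by simp [hxd, hxA])
          have hfcases : f = b ∨ f = c := by
            rcases mem_insert_iff.mp hf.1 with h | h
            · exact Or.inl h
            · rcases mem_insert_iff.mp h with h | h
              · exact Or.inr h
              · exact absurd (mem_insert_iff.mpr (Or.inr (mem_insert_iff.mpr (Or.inr h)))) hf.2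
          rcases hfcases with hfe | hfe
          · exfalso
            rw [hfe] at hfbase
            rw [hK4x] at hfbase
            have := (key b d hbd hbA hdA hbind hdind).mp (hsub _ hfbase)
            exact this (by rwa [add_comm] at hdbS)
          · rw [hfe] at hfbase
            rw [hK4x] at hfbase
            rwa [insert_comm, ← hWA] at hfbase

end Stmt12Aux

theorem stmt_12 {α : Type*} (M : Matroid α) (hfin : M.E.Finite) (hbin : M.IsBinary)
    (M1 : Matroid α) (hE : M1.E = M.E) (hsub : ∀ B, M1.IsBase B → M.IsBase B)
    (X : Set α) (hX : M1.IsBase X)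
    (hnbr : ∀ Y, M.IsBase Y → (symmDiff X Y).ncard = 2 → M1.IsBase Y) :
    ∀ B, M.IsBase B ↔ M1.IsBase B := by
  classical
  obtain ⟨n, φ, hrep⟩ := hbin
  haveI : M.Finite := ⟨hfin⟩
  have hXM : M.IsBase X := hsub X hX
  have hXfin : X.Finite := M.set_finite X hXM.subset_ground
  have main : ∀ k B, M.IsBase B → (symmDiff X B).ncard = k →
      M1.IsBase B ∧ ∀ W, M.IsBase W → (symmDiff B W).ncard = 2 → M1.IsBase W := by
    intro k
    induction k using Nat.strong_induction_on with
    | _ k IH =>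
      intro B hB hkB
      rcases eq_or_ne B X with rfl | hne
      · exact ⟨hX, fun W hW h2 => hnbr W hW h2⟩
      · have hBfin : B.Finite := M.set_finite B hB.subset_ground
        have hsdfin : (symmDiff X B).Finite := by
          rw [Set.symmDiff_def]
          exact ((hXfin.diff).union (hBfin.diff))
        have hBXne : (B \ X).Nonempty := by
          rw [nonempty_iff_ne_empty]
          intro h0
          have h1 : (B \ X).ncard = 0 := by rw [h0]; simp
          have h2 : (X \ B).ncard = 0 := by rw [hXM.ncard_diff_comm hB]; exact h1
          have h3 : X \ B = ∅ := (ncard_eq_zero (hXfin.diff)).mp h2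
          exact hne (subset_antisymm (diff_eq_empty.mp h0) (diff_eq_empty.mp h3))
        obtain ⟨e, he⟩ := hBXne
        obtain ⟨f, hf, hB'base⟩ := hB.exchange hXM he
        have hef : e ≠ f := fun h => he.2 (h ▸ hf.1)
        have hΔ : symmDiff X (insert f (B \ {e})) = (symmDiff X B) \ {e, f} :=
          Stmt12Aux.symmDiff_update he hf
        have hmem_e : e ∈ symmDiff X B := by
          rw [Set.symmDiff_def]; exact Or.inr he
        have hmem_f : f ∈ symmDiff X B := by
          rw [Set.symmDiff_def]; exact Or.inl hf
        have hsub2 : ({e, f} : Set α) ⊆ symmDiff X B := by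
          intro a ha
          rcases ha with rfl | rfl
          · exact hmem_e
          · exact hmem_f
        have hk2 : ({e, f} : Set α).ncard = 2 := ncard_pair hef
        have hge : 2 ≤ k := by
          rw [← hkB, ← hk2]
          exact ncard_le_ncard hsub2 hsdfin
        have hcard' : (symmDiff X (insert f (B \ {e}))).ncard = k - 2 := by
          rw [hΔ, ncard_diff hsub2, hkB, hk2]
        obtain ⟨hB'1, hB'nbr⟩ := IH (k - 2) (by omega) _ hB'base hcard'
        have hBB' : (symmDiff (insert f (B \ {e})) B).ncard = 2 := by
          rw [symmDiff_comm]
          exact Stmt12Aux.nbr_card he.1 hf.2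
        exact ⟨hB'nbr B hB hBB',
          Stmt12Aux.prop_step hrep hsub hB'base hB'1 hB'nbr hB hBB'⟩
  intro B
  constructor
  · intro hB
    exact (main _ B hB rfl).1
  · exact hsub B
end

section
/- If M is a binary matroid then its matroid base polytope P(M) admits no nontrivial hyperplane split: there do not exist matroids M1, M2 with B(M1), B(M2) ⊊ B(M), B(M1) ∪ B(M2) = B(M), such that P(M) = P(M1) ∪ P(M2) with P(M1) ∩ P(M2) a common face of both. -/
/-- The matroid base polytope: the convex hull of the indicator vectors of the bases. -/
noncomputable def basePolytope {α : Type*} (M : Matroid α) : Set (α → ℝ) :=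
  convexHull ℝ ((fun B : Set α => B.indicator fun _ => (1 : ℝ)) '' {B | M.IsBase B})

set_option linter.unusedSectionVars false
set_option linter.unusedVariables false

open Set Submodule

namespace StmtAux13

variable {α : Type*} [Fintype α]

noncomputable def ind (B : Set α) : α → ℝ := B.indicator fun _ => 1

lemma sum_ind (T W : Set α) :
    ∑ e ∈ (Set.toFinite T).toFinset, ind W e = ((T ∩ W).ncard : ℝ) := by
  classical
  have h1 : (Set.toFinite (T ∩ W)).toFinset = (Set.toFinite T).toFinset.filter (· ∈ W) := by
    ext x
    simp only [Set.Finite.mem_toFinset, Finset.mem_filter, Set.mem_inter_iff]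
  rw [Set.ncard_eq_toFinset_card _ (Set.toFinite (T ∩ W)), h1]
  rw [← Finset.sum_boole]
  refine Finset.sum_congr rfl fun e _ => ?_
  simp [ind, Set.indicator_apply]

lemma hull_le {F : Set (Set α)} {T : Set α} {r : ℕ}
    (hW : ∀ W ∈ F, (T ∩ W).ncard + 1 ≤ r) :
    ∀ z ∈ convexHull ℝ (ind '' F), ∑ e ∈ (Set.toFinite T).toFinset, z e ≤ (r : ℝ) - 1 := by
  intro z hz
  have hlin : IsLinearMap ℝ (fun x : α → ℝ => ∑ e ∈ (Set.toFinite T).toFinset, x e) :=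
    ⟨fun x y => by simp [Finset.sum_add_distrib],
     fun c x => by simp [Finset.mul_sum]⟩
  have hconv : Convex ℝ {x : α → ℝ | ∑ e ∈ (Set.toFinite T).toFinset, x e ≤ (r : ℝ) - 1} :=
    convex_halfSpace_le hlin _
  refine convexHull_min ?_ hconv hz
  rintro _ ⟨W, hWF, rfl⟩
  have h2 := hW W hWF
  have h3 : ((T ∩ W).ncard : ℝ) ≤ (r : ℝ) - 1 := by
    have : ((T ∩ W).ncard : ℝ) + 1 ≤ (r : ℝ) := by exact_mod_cast h2
    linarith
  simpa [sum_ind] using h3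

lemma inter_card_lt {M : Matroid α} {T W : Set α} (hT : M.IsBase T) (hW : M.IsBase W)
    (hne : W ≠ T) : (T ∩ W).ncard + 1 ≤ T.ncard := by
  have hsub : T ∩ W ⊆ T := inter_subset_left
  have hle : (T ∩ W).ncard ≤ T.ncard := Set.ncard_le_ncard hsub
  rcases eq_or_lt_of_le hle with h | h
  · exfalso
    have h2 : T ∩ W = T := Set.eq_of_subset_of_ncard_le hsub h.ge
    have hTW : T ⊆ W := by rw [← h2]; exact inter_subset_right
    exact hne (hT.eq_of_subset_isBase hW hTW).symm
  · omega

lemma no_close_pair {M M1 M2 : Matroid α}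
    (hA1 : ∀ W, M1.IsBase W → M.IsBase W) (hB1 : ∀ W, M2.IsBase W → M.IsBase W)
    (hP : basePolytope M = basePolytope M1 ∪ basePolytope M2)
    {X Y : Set α} (hX : M.IsBase X) (hY : M.IsBase Y)
    (hXA : M1.IsBase X) (hXB : ¬ M2.IsBase X) (hYA : ¬ M1.IsBase Y)
    (hd : (X \ Y).ncard = 1) : False := by
  classical
  have hP : convexHull ℝ (ind '' {B | M.IsBase B}) =
      convexHull ℝ (ind '' {B | M1.IsBase B}) ∪ convexHull ℝ (ind '' {B | M2.IsBase B}) := hP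
  set r := X.ncard with hr
  have hrY : Y.ncard = r := hY.ncard_eq_ncard_of_isBase hX
  have hdYX : (Y \ X).ncard = 1 := by rw [hY.ncard_diff_comm hX]; exact hd
  -- intersection cards
  have hiYX : (Y ∩ X).ncard + 1 = r := by
    have := Set.ncard_inter_add_ncard_diff_eq_ncard Y X (Set.toFinite Y)
    omega
  have hiXY : (X ∩ Y).ncard + 1 = r := by
    have := Set.ncard_inter_add_ncard_diff_eq_ncard X Y (Set.toFinite X)
    omega
  -- the midpoint
  set m : α → ℝ := (1/2 : ℝ) • ind X + (1/2 : ℝ) • ind Y with hm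
  have hmP : m ∈ convexHull ℝ (ind '' {B | M.IsBase B}) := by
    have hXm : ind X ∈ convexHull ℝ (ind '' {B | M.IsBase B}) :=
      subset_convexHull ℝ _ ⟨X, hX, rfl⟩
    have hYm : ind Y ∈ convexHull ℝ (ind '' {B | M.IsBase B}) :=
      subset_convexHull ℝ _ ⟨Y, hY, rfl⟩
    exact (convex_convexHull ℝ _) hXm hYm (by norm_num) (by norm_num) (by norm_num)
  rw [hP] at hmP
  have hsum : ∀ T : Set α, ∑ e ∈ (Set.toFinite T).toFinset, m e
      = (1/2 : ℝ) * ((T ∩ X).ncard : ℝ) + (1/2 : ℝ) * ((T ∩ Y).ncard : ℝ) := by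
    intro T
    rw [← sum_ind T X, ← sum_ind T Y, Finset.mul_sum, Finset.mul_sum,
      ← Finset.sum_add_distrib]
    refine Finset.sum_congr rfl fun e _ => ?_
    simp [hm]
  rcases hmP with hm1 | hm2
  · -- m in P1, use functional over Y
    have hbound : ∀ W ∈ {B | M1.IsBase B}, (Y ∩ W).ncard + 1 ≤ r := by
      intro W hW
      have : (Y ∩ W).ncard + 1 ≤ Y.ncard :=
        inter_card_lt hY (hA1 W hW) (by rintro rfl; exact hYA hW)
      omega
    have h1 := hull_le hbound m hm1
    rw [hsum Y] at h1
    have e1 : ((Y ∩ X).ncard : ℝ) = (r : ℝ) - 1 := by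
      have : ((Y ∩ X).ncard : ℝ) + 1 = (r : ℝ) := by exact_mod_cast hiYX
      linarith
    have e2 : ((Y ∩ Y).ncard : ℝ) = (r : ℝ) := by
      rw [Set.inter_self]; exact_mod_cast hrY
    rw [e1, e2] at h1
    linarith
  · have hbound : ∀ W ∈ {B | M2.IsBase B}, (X ∩ W).ncard + 1 ≤ r := by
      intro W hW
      have : (X ∩ W).ncard + 1 ≤ X.ncard :=
        inter_card_lt hX (hB1 W hW) (by rintro rfl; exact hXB hW)
      omega
    have h1 := hull_le hbound m hm2
    rw [hsum X] at h1
    have e1 : ((X ∩ Y).ncard : ℝ) = (r : ℝ) - 1 := by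
      have : ((X ∩ Y).ncard : ℝ) + 1 = (r : ℝ) := by exact_mod_cast hiXY
      linarith
    have e2 : ((X ∩ X).ncard : ℝ) = (r : ℝ) := by rw [Set.inter_self]
    rw [e1, e2] at h1
    linarith
lemma not_indep_of_card {M : Matroid α} {Z J : Set α} (hZ : M.IsBase Z)
    (hcard : Z.ncard < J.ncard) : ¬ M.Indep J := by
  intro hJ
  obtain ⟨B', hB', hJB'⟩ := hJ.exists_isBase_superset
  have h1 : J.ncard ≤ B'.ncard := Set.ncard_le_ncard hJB'
  have h2 : B'.ncard = Z.ncard := hB'.ncard_eq_ncard_of_isBase hZ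
  omega

/-- An independent set of full cardinality is a base. -/
lemma indep_base_of_card {M : Matroid α} {Z J : Set α} (hZ : M.IsBase Z)
    (hJ : M.Indep J) (hcard : Z.ncard ≤ J.ncard) : M.IsBase J := by
  obtain ⟨B', hB', hJB'⟩ := hJ.exists_isBase_superset
  have h2 : B'.ncard = Z.ncard := hB'.ncard_eq_ncard_of_isBase hZ
  have : J = B' := Set.eq_of_subset_of_ncard_le hJB' (by omega)
  rw [this]; exact hB'

/-- Core of the 4-step propagation. -/
lemma core {M M1 : Matroid α} (hsub : ∀ W, M1.IsBase W → M.IsBase W)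
    {Z Y : Set α} (hZ : M.IsBase Z) (hY : M.IsBase Y) (hZA : M1.IsBase Z)
    (hnbr : ∀ W, M.IsBase W → (Z \ W).ncard = 1 → M1.IsBase W)
    {a b c d : α} (hZY : Z \ Y = {a, b}) (hYZ : Y \ Z = {c, d})
    (hab : a ≠ b) (hcd : c ≠ d)
    (hdep : ¬ M.Indep (insert c (Z \ {b}))) : M1.IsBase Y := by
  classical
  have haZ : a ∈ Z \ Y := by rw [hZY]; exact Or.inl rfl
  have hbZ : b ∈ Z \ Y := by rw [hZY]; exact Or.inr rfl
  have hcY : c ∈ Y \ Z := by rw [hYZ]; exact Or.inl rfl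
  have hdY : d ∈ Y \ Z := by rw [hYZ]; exact Or.inr rfl
  have hZE : Z ⊆ M.E := hZ.subset_ground
  have hYE : Y ⊆ M.E := hY.subset_ground
  have hcE : c ∈ M.E := hYE hcY.1
  have hdE : d ∈ M.E := hYE hdY.1
  have hr2 : 2 ≤ Z.ncard := by
    have : ({a, b} : Set α) ⊆ Z := by rw [← hZY]; exact diff_subset
    have h2 := Set.ncard_le_ncard this (Set.toFinite Z)
    rw [Set.ncard_pair hab] at h2
    exact h2
  -- I1 = Z \ {b}
  have hI1indep : M.Indep (Z \ {b}) := hZ.indep.subset diff_subset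
  have hI1E : Z \ {b} ⊆ M.E := diff_subset.trans hZE
  have hI1card : (Z \ {b}).ncard = Z.ncard - 1 :=
    Set.ncard_diff_singleton_of_mem hbZ.1
  have hcI1 : c ∉ Z \ {b} := fun h => hcY.2 h.1
  have hccl : c ∈ M.closure (Z \ {b}) := by
    by_contra h
    exact hdep ((hI1indep.insert_indep_iff_of_notMem hcI1).mpr ⟨hcE, h⟩)
  -- U = insert d (Z \ {b}) is a base
  have hdI1 : d ∉ Z \ {b} := fun h => hdY.2 h.1
  have hUindep : M.Indep (insert d (Z \ {b})) := by
    by_contra hUdep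
    have hdcl : d ∈ M.closure (Z \ {b}) := by
      by_contra h
      exact hUdep ((hI1indep.insert_indep_iff_of_notMem hdI1).mpr ⟨hdE, h⟩)
    -- Y ⊆ closure I1
    have hYcl : Y ⊆ M.closure (Z \ {b}) := by
      intro x hx
      by_cases hxZ : x ∈ Z
      · have hxb : x ≠ b := by rintro rfl; exact hbZ.2 hx
        exact M.subset_closure (Z \ {b}) hI1E ⟨hxZ, hxb⟩
      · have : x ∈ Y \ Z := ⟨hx, hxZ⟩
        rw [hYZ] at this
        rcases this with rfl | rfl
        · exact hccl
        · exact hdcl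
    have hsp : M.Spanning (Z \ {b}) := by
      rw [Matroid.spanning_iff_ground_subset_closure hI1E]
      rw [← hY.spanning.closure_eq]
      exact Matroid.closure_subset_closure_of_subset_closure hYcl
    have hbase := hI1indep.isBase_of_spanning hsp
    have := hbase.ncard_eq_ncard_of_isBase hZ
    omega
  have hUbase : M.IsBase (insert d (Z \ {b})) := by
    refine indep_base_of_card hZ hUindep ?_
    rw [Set.ncard_insert_of_notMem hdI1]
    omega
  have hZU : (Z \ insert d (Z \ {b})).ncard = 1 := by
    have : Z \ insert d (Z \ {b}) = {b} := by
      ext x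
      constructor
      · rintro ⟨hxZ, hx2⟩
        by_contra hxb
        exact hx2 (Or.inr ⟨hxZ, fun hh => hxb hh⟩)
      · rintro rfl
        refine ⟨hbZ.1, ?_⟩
        rintro (rfl | hh)
        · exact hdY.2 hbZ.1
        · exact hh.2 rfl
    rw [this, Set.ncard_singleton]
  have hUA : M1.IsBase (insert d (Z \ {b})) := hnbr _ hUbase hZU
  -- I2 = insert c (Z \ {a, b})
  set S : Set α := Z \ {a, b} with hS
  have hSsub : S ⊆ Z \ {b} := fun x hx => ⟨hx.1, fun h => hx.2 (Set.mem_insert_iff.mpr (Or.inr h))⟩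
  have hSsuba : S ⊆ Z \ {a} := fun x hx => ⟨hx.1, fun h => hx.2 (Set.mem_insert_iff.mpr (Or.inl h))⟩
  have hSY : S ⊆ Y := by
    intro x hx
    by_contra hxY
    have : x ∈ Z \ Y := ⟨hx.1, hxY⟩
    rw [hZY] at this
    exact hx.2 this
  have hcS : c ∉ S := fun h => hcY.2 (h.1)
  have hI2indep : M.Indep (insert c S) := hY.indep.subset (insert_subset hcY.1 hSY)
  have hI2E : insert c S ⊆ M.E := hI2indep.subset_ground
  have haI2 : a ∉ insert c S := by
    simp only [Set.mem_insert_iff, not_or]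
    exact ⟨fun h => hcY.2 (h ▸ haZ.1), fun h => h.2 (Or.inl rfl)⟩
  have hbI2 : b ∉ insert c S := by
    simp only [Set.mem_insert_iff, not_or]
    exact ⟨fun h => hcY.2 (h ▸ hbZ.1), fun h => h.2 (Or.inr rfl)⟩
  have haE : a ∈ M.E := hZE haZ.1
  have hbE : b ∈ M.E := hZE hbZ.1
  -- insert a (insert c S) = insert c (Z \ {b})
  have hins_a : insert a (insert c S) = insert c (Z \ {b}) := by
    ext x
    simp only [Set.mem_insert_iff, Set.mem_diff, Set.mem_singleton_iff, hS]
    constructor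
    · rintro (rfl | rfl | ⟨h1, h2⟩)
      · exact Or.inr ⟨haZ.1, hab⟩
      · exact Or.inl rfl
      · exact Or.inr ⟨h1, fun h => h2 (Or.inr h)⟩
    · rintro (rfl | ⟨h1, h2⟩)
      · exact Or.inr (Or.inl rfl)
      · by_cases hxa : x = a
        · exact Or.inl hxa
        · exact Or.inr (Or.inr ⟨h1, by tauto⟩)
  have hacl : a ∈ M.closure (insert c S) := by
    by_contra h
    have := (hI2indep.insert_indep_iff_of_notMem haI2).mpr ⟨haE, h⟩
    rw [hins_a] at this
    exact hdep this
  -- V = insert c (Z \ {a}) is a base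
  have hins_b : insert b (insert c S) = insert c (Z \ {a}) := by
    ext x
    simp only [Set.mem_insert_iff, Set.mem_diff, Set.mem_singleton_iff, hS]
    constructor
    · rintro (rfl | rfl | ⟨h1, h2⟩)
      · exact Or.inr ⟨hbZ.1, hab.symm⟩
      · exact Or.inl rfl
      · exact Or.inr ⟨h1, fun h => h2 (Or.inl h)⟩
    · rintro (rfl | ⟨h1, h2⟩)
      · exact Or.inr (Or.inl rfl)
      · by_cases hxb : x = b
        · exact Or.inl hxb
        · exact Or.inr (Or.inr ⟨h1, by tauto⟩)
  have hVindep : M.Indep (insert c (Z \ {a})) := by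
    by_contra hVdep
    have hbcl : b ∈ M.closure (insert c S) := by
      by_contra h
      have := (hI2indep.insert_indep_iff_of_notMem hbI2).mpr ⟨hbE, h⟩
      rw [hins_b] at this
      exact hVdep this
    have hZcl : Z ⊆ M.closure (insert c S) := by
      intro x hxZ
      by_cases hxa : x = a
      · exact hxa ▸ hacl
      by_cases hxb : x = b
      · exact hxb ▸ hbcl
      · refine M.subset_closure (insert c S) hI2E (Or.inr ⟨hxZ, fun h => ?_⟩)
        rcases h with h | h
        · exact hxa h
        · exact hxb h
    have hsp : M.Spanning (insert c S) := by
      rw [Matroid.spanning_iff_ground_subset_closure hI2E]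
      rw [← hZ.spanning.closure_eq]
      exact Matroid.closure_subset_closure_of_subset_closure hZcl
    have hbase := hI2indep.isBase_of_spanning hsp
    have hcards := hbase.ncard_eq_ncard_of_isBase hZ
    have hScard : S.ncard = Z.ncard - 2 := by
      rw [hS, Set.ncard_diff (by rw [← hZY]; exact diff_subset), Set.ncard_pair hab]
    rw [Set.ncard_insert_of_notMem hcS] at hcards
    omega
  have hcZa : c ∉ Z \ {a} := fun h => hcY.2 h.1
  have hVbase : M.IsBase (insert c (Z \ {a})) := by
    refine indep_base_of_card hZ hVindep ?_
    rw [Set.ncard_insert_of_notMem hcZa, Set.ncard_diff_singleton_of_mem haZ.1]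
    omega
  have hZV : (Z \ insert c (Z \ {a})).ncard = 1 := by
    have : Z \ insert c (Z \ {a}) = {a} := by
      ext x
      constructor
      · rintro ⟨hxZ, hx2⟩
        by_contra hxa
        exact hx2 (Or.inr ⟨hxZ, fun hh => hxa hh⟩)
      · rintro rfl
        refine ⟨haZ.1, ?_⟩
        rintro (rfl | hh)
        · exact hcY.2 haZ.1
        · exact hh.2 rfl
    rw [this, Set.ncard_singleton]
  have hVA : M1.IsBase (insert c (Z \ {a})) := hnbr _ hVbase hZV
  -- exchange in M1 between V and U, removing b
  have hbV : b ∈ insert c (Z \ {a}) := by rw [← hins_b]; exact Or.inl rfl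
  have hbU : b ∉ insert d (Z \ {b}) := by
    rintro (rfl | hh)
    · exact hdY.2 hbZ.1
    · exact hh.2 rfl
  obtain ⟨y, hyUV, hybase⟩ := hVA.exchange hUA ⟨hbV, hbU⟩
  -- V \ {b} = insert c S
  have hVb : insert c (Z \ {a}) \ {b} = insert c S := by
    rw [← hins_b]
    rw [Set.insert_diff_self_of_notMem hbI2]
  have hy : y = d ∨ y = a := by
    obtain ⟨hyU, hyV⟩ := hyUV
    rcases hyU with rfl | hyZ
    · exact Or.inl rfl
    · right
      simp only [Set.mem_insert_iff, not_or] at hyV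
      by_contra hya
      exact hyV.2 ⟨hyZ.1, hya⟩
  rcases hy with hyd | hya
  · -- y = d : insert d (insert c S) = Y
    have hYeq : insert d (insert c S) = Y := by
      ext x
      simp only [Set.mem_insert_iff, hS, Set.mem_diff, Set.mem_singleton_iff]
      constructor
      · rintro (rfl | rfl | ⟨h1, h2⟩)
        · exact hdY.1
        · exact hcY.1
        · by_contra hxY
          have hmem : x ∈ Z \ Y := ⟨h1, hxY⟩
          rw [hZY] at hmem
          simp only [Set.mem_insert_iff, Set.mem_singleton_iff] at hmem
          tauto
      · intro hx
        by_cases hxZ : x ∈ Z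
        · right; right
          refine ⟨hxZ, ?_⟩
          rintro (rfl | rfl)
          · exact haZ.2 hx
          · exact hbZ.2 hx
        · have hmem : x ∈ Y \ Z := ⟨hx, hxZ⟩
          rw [hYZ] at hmem
          simp only [Set.mem_insert_iff, Set.mem_singleton_iff] at hmem
          tauto
    rw [hyd, hVb, hYeq] at hybase
    exact hybase
  · -- y = a : contradiction with hdep
    exfalso
    rw [hya, hVb, hins_a] at hybase
    exact hdep (hsub _ hybase).indep

lemma li_not_mem_span {n : ℕ} {φ : α → (Fin n → ZMod 2)} {T : Set α} {c : α}
    (h : LinearIndependent (ZMod 2) fun x : ↥(insert c T) => φ x) (hc : c ∉ T) :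
    φ c ∉ span (ZMod 2) (φ '' T) :=
  ((linearIndepOn_insert hc).mp h).2

lemma mem_span_of_dep {n : ℕ} {φ : α → (Fin n → ZMod 2)} {T : Set α} {c : α}
    (hT : LinearIndependent (ZMod 2) fun x : T => φ x) (hc : c ∉ T)
    (hdep : ¬ LinearIndependent (ZMod 2) fun x : ↥(insert c T) => φ x) :
    φ c ∈ span (ZMod 2) (φ '' T) := by
  by_contra h
  exact hdep ((linearIndepOn_insert hc).mpr ⟨hT, h⟩)

/-- The binary lemma : if `Z,Y` are bases with `Z \ Y = {a,b}` and `Y \ Z = {c,d}`,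
not all four exchange sets can be independent. -/
lemma binary_four {M : Matroid α} (hbin : M.IsBinary) {Z Y : Set α}
    (hZ : M.IsBase Z) (hY : M.IsBase Y) {a b c d : α}
    (hZY : Z \ Y = {a, b}) (hYZ : Y \ Z = {c, d}) (hab : a ≠ b) (hcd : c ≠ d)
    (h1 : M.Indep (insert c (Z \ {b}))) (h2 : M.Indep (insert d (Z \ {b})))
    (h3 : M.Indep (insert c (Z \ {a}))) (h4 : M.Indep (insert d (Z \ {a}))) :
    False := by
  classical
  obtain ⟨n, φ, hφ⟩ := hbin
  -- memberships
  have haZ : a ∈ Z \ Y := by rw [hZY]; exact Or.inl rfl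
  have hbZ : b ∈ Z \ Y := by rw [hZY]; exact Or.inr rfl
  have hcY : c ∈ Y \ Z := by rw [hYZ]; exact Or.inl rfl
  have hdY : d ∈ Y \ Z := by rw [hYZ]; exact Or.inr rfl
  set S : Set α := Z \ {a, b} with hS
  have hSZ : S ⊆ Z := diff_subset
  have hZeq : Z = insert a (insert b S) := by
    rw [hS]
    ext x
    simp only [Set.mem_insert_iff, Set.mem_diff, Set.mem_singleton_iff]
    constructor
    · intro hx
      by_cases h : x = a ∨ x = b
      · tauto
      · right; right; exact ⟨hx, by tauto⟩
    · rintro (rfl | rfl | ⟨h, -⟩) <;> first | exact haZ.1 | exact hbZ.1 | exact h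
  have hZa : Z \ {a} = insert b S := by
    rw [hS]
    ext x
    simp only [Set.mem_insert_iff, Set.mem_diff, Set.mem_singleton_iff]
    constructor
    · intro ⟨hx, hxa⟩
      by_cases h : x = b
      · tauto
      · right; exact ⟨hx, by tauto⟩
    · rintro (rfl | ⟨h1', h2'⟩)
      · exact ⟨hbZ.1, hab.symm⟩
      · exact ⟨h1', by tauto⟩
  have hZb : Z \ {b} = insert a S := by
    rw [hS]
    ext x
    simp only [Set.mem_insert_iff, Set.mem_diff, Set.mem_singleton_iff]
    constructor
    · intro ⟨hx, hxb⟩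
      by_cases h : x = a
      · tauto
      · right; exact ⟨hx, by tauto⟩
    · rintro (rfl | ⟨h1', h2'⟩)
      · exact ⟨haZ.1, hab⟩
      · exact ⟨h1', by tauto⟩
  have hYeq : Y = insert c (insert d S) := by
    rw [hS]
    ext x
    simp only [Set.mem_insert_iff, Set.mem_diff, Set.mem_singleton_iff]
    constructor
    · intro hx
      by_cases h : x = c ∨ x = d
      · tauto
      · push_neg at h
        right; right
        have hxZ : x ∈ Z := by
          by_contra hxZ
          have : x ∈ Y \ Z := ⟨hx, hxZ⟩
          rw [hYZ] at this
          simp only [Set.mem_insert_iff, Set.mem_singleton_iff] at this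
          tauto
        refine ⟨hxZ, ?_⟩
        rintro (rfl | rfl)
        · exact haZ.2 hx
        · exact hbZ.2 hx
    · rintro (rfl | rfl | ⟨h, hne⟩)
      · exact hcY.1
      · exact hdY.1
      · by_contra hxY
        have : x ∈ Z \ Y := ⟨h, hxY⟩
        rw [hZY] at this
        tauto
  -- ground membership
  have hZE : Z ⊆ M.E := hZ.subset_ground
  have hYE : Y ⊆ M.E := hY.subset_ground
  have hcE : c ∈ M.E := hYE hcY.1
  have hdE : d ∈ M.E := hYE hdY.1
  -- linear independence conversions
  have LIZ : LinearIndependent (ZMod 2) fun x : Z => φ x := (hφ Z hZE).mp hZ.indep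
  have LI3 : LinearIndependent (ZMod 2) fun x : ↥(insert c (Z \ {a})) => φ x :=
    (hφ _ (insert_subset hcE (diff_subset.trans hZE))).mp h3
  have LI1 : LinearIndependent (ZMod 2) fun x : ↥(insert c (Z \ {b})) => φ x :=
    (hφ _ (insert_subset hcE (diff_subset.trans hZE))).mp h1
  have LI4 : LinearIndependent (ZMod 2) fun x : ↥(insert d (Z \ {a})) => φ x :=
    (hφ _ (insert_subset hdE (diff_subset.trans hZE))).mp h4
  have LI2 : LinearIndependent (ZMod 2) fun x : ↥(insert d (Z \ {b})) => φ x :=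
    (hφ _ (insert_subset hdE (diff_subset.trans hZE))).mp h2
  have LIY : LinearIndependent (ZMod 2) fun x : Y => φ x := (hφ Y hYE).mp hY.indep
  -- c and d are in the span of Z
  have hspan : ∀ x : α, x ∈ Y \ Z → φ x ∈ span (ZMod 2) (φ '' Z) := by
    intro x hx
    have hxZ : x ∉ Z := hx.2
    have hdep : ¬ M.Indep (insert x Z) := by
      refine not_indep_of_card hZ ?_
      rw [Set.ncard_insert_of_notMem hxZ]
      omega
    have hdep' : ¬ LinearIndependent (ZMod 2) fun y : ↥(insert x Z) => φ y := by
      intro hli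
      exact hdep ((hφ _ (insert_subset (hYE hx.1) hZE)).mpr hli)
    exact mem_span_of_dep LIZ hxZ hdep'
  -- decompose φ c and φ d
  have h01 : ∀ x : ZMod 2, x = 0 ∨ x = 1 := by decide
  have hdecomp : ∀ x : α, x ∈ Y \ Z →
      ((¬ LinearIndependent (ZMod 2) fun y : ↥(insert x (Z \ {a})) => φ y) → False) →
      ((¬ LinearIndependent (ZMod 2) fun y : ↥(insert x (Z \ {b})) => φ y) → False) →
      ∃ w ∈ span (ZMod 2) (φ '' S), φ x = φ a + φ b + w := by
    intro x hx hLIa hLIb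
    have hx1 := hspan x hx
    rw [hZeq, Set.image_insert_eq, Set.image_insert_eq] at hx1
    rw [Submodule.mem_span_insert] at hx1
    obtain ⟨e1, z1, hz1, hxeq⟩ := hx1
    have hxZa : x ∉ insert b S := by rw [← hZa]; simp [hx.2]
    have hxZb : x ∉ insert a S := by rw [← hZb]; simp [hx.2]
    have he1 : e1 = 1 := by
      rcases h01 e1 with rfl | h
      · exfalso
        apply hLIa
        intro hli
        have : φ x ∈ span (ZMod 2) (φ '' (insert b S)) := by
          rw [Set.image_insert_eq]
          rw [zero_smul, zero_add] at hxeq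
          rw [hxeq]; exact hz1
        exact li_not_mem_span (by rwa [hZa] at hli) hxZa this
      · exact h
    rw [Submodule.mem_span_insert] at hz1
    obtain ⟨e2, w, hw, hz1eq⟩ := hz1
    have he2 : e2 = 1 := by
      rcases h01 e2 with rfl | h
      · exfalso
        apply hLIb
        intro hli
        have : φ x ∈ span (ZMod 2) (φ '' (insert a S)) := by
          rw [Set.image_insert_eq, Submodule.mem_span_insert]
          exact ⟨e1, w, hw, by rw [hxeq, hz1eq, zero_smul, zero_add]⟩
        exact li_not_mem_span (by rwa [hZb] at hli) hxZb this
      · exact h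
    refine ⟨w, hw, ?_⟩
    rw [hxeq, hz1eq, he1, he2, one_smul, one_smul]
    abel
  obtain ⟨w, hw, hc_eq⟩ := hdecomp c hcY (fun h => h LI3) (fun h => h LI1)
  obtain ⟨w', hw', hd_eq⟩ := hdecomp d hdY (fun h => h LI4) (fun h => h LI2)
  -- now φ c ∈ span (φ '' insert d S)
  have hfinal : φ c ∈ span (ZMod 2) (φ '' (insert d S)) := by
    rw [Set.image_insert_eq, Submodule.mem_span_insert]
    refine ⟨1, w - w', sub_mem hw hw', ?_⟩
    rw [hc_eq, hd_eq, one_smul]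
    abel
  have hcdS : c ∉ insert d S := by
    simp only [Set.mem_insert_iff]
    rintro (rfl | hcS)
    · exact hcd rfl
    · exact hcY.2 (hSZ hcS)
  have : LinearIndependent (ZMod 2) fun x : ↥(insert c (insert d S)) => φ x := by
    rwa [hYeq] at LIY
  exact li_not_mem_span this hcdS hfinal

lemma step4 {M M1 : Matroid α} (hbin : M.IsBinary)
    (hsub : ∀ W, M1.IsBase W → M.IsBase W)
    {Z Y : Set α} (hZ : M.IsBase Z) (hZA : M1.IsBase Z)
    (hnbr : ∀ W, M.IsBase W → (Z \ W).ncard = 1 → M1.IsBase W)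
    (hY : M.IsBase Y) (hd : (Z \ Y).ncard = 2) : M1.IsBase Y := by
  have hd' : (Y \ Z).ncard = 2 := by rw [hY.ncard_diff_comm hZ]; exact hd
  obtain ⟨a, b, hab, hZY⟩ := Set.ncard_eq_two.mp hd
  obtain ⟨c, d, hcd, hYZ⟩ := Set.ncard_eq_two.mp hd'
  by_cases h1 : M.Indep (insert c (Z \ {b}))
  · by_cases h2 : M.Indep (insert d (Z \ {b}))
    · by_cases h3 : M.Indep (insert c (Z \ {a}))
      · by_cases h4 : M.Indep (insert d (Z \ {a}))
        · exact absurd h4 (fun h4 => binary_four hbin hZ hY hZY hYZ hab hcd h1 h2 h3 h4)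
        · exact core hsub hZ hY hZA hnbr (hZY.trans (Set.pair_comm a b))
            (hYZ.trans (Set.pair_comm c d)) hab.symm hcd.symm h4
      · exact core hsub hZ hY hZA hnbr (hZY.trans (Set.pair_comm a b)) hYZ hab.symm hcd h3
    · exact core hsub hZ hY hZA hnbr hZY (hYZ.trans (Set.pair_comm c d)) hab hcd.symm h2
  · exact core hsub hZ hY hZA hnbr hZY hYZ hab hcd h1


end StmtAux13

theorem stmt_13 {α : Type*} [Fintype α] (M : Matroid α) (hbin : M.IsBinary) :
    ¬ ∃ M1 M2 : Matroid α,
      {B | M1.IsBase B} ⊂ {B | M.IsBase B} ∧ {B | M2.IsBase B} ⊂ {B | M.IsBase B} ∧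
      {B | M1.IsBase B} ∪ {B | M2.IsBase B} = {B | M.IsBase B} ∧
      basePolytope M = basePolytope M1 ∪ basePolytope M2 ∧
      IsExtreme ℝ (basePolytope M1) (basePolytope M1 ∩ basePolytope M2) ∧
      IsExtreme ℝ (basePolytope M2) (basePolytope M1 ∩ basePolytope M2) := by
  rintro ⟨M1, M2, hA, hB, hcov, hP, -, -⟩
  have hA1 : ∀ W, M1.IsBase W → M.IsBase W := fun W h => hA.subset h
  have hB1 : ∀ W, M2.IsBase W → M.IsBase W := fun W h => hB.subset h
  -- find X₀ ∈ A \ B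
  have hX0 : ∃ X₀, M1.IsBase X₀ ∧ ¬ M2.IsBase X₀ := by
    by_contra h
    push_neg at h
    apply hB.ne
    apply Set.Subset.antisymm hB.subset
    rw [← hcov]
    intro W hW
    rcases hW with hW | hW
    · exact h W hW
    · exact hW
  obtain ⟨X₀, hX₀A, hX₀B⟩ := hX0
  have hX₀ : M.IsBase X₀ := hA1 _ hX₀A
  have hQ0 : ∀ W, M.IsBase W → (X₀ \ W).ncard = 1 → M1.IsBase W := by
    intro W hW h1
    by_contra hWA
    exact StmtAux13.no_close_pair hA1 hB1 hP hX₀ hW hX₀A hX₀B hWA h1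
  have main : ∀ k W, M.IsBase W → (X₀ \ W).ncard = k →
      (M1.IsBase W ∧ ∀ V, M.IsBase V → (W \ V).ncard = 1 → M1.IsBase V) := by
    intro k
    induction k using Nat.strong_induction_on with
    | _ k IH =>
      intro W hW hk
      rcases Nat.eq_zero_or_pos k with rfl | hpos
      · have hsub : X₀ ⊆ W := by
          rw [← Set.diff_eq_empty]
          exact (Set.ncard_eq_zero (Set.toFinite _)).mp hk
        obtain rfl : X₀ = W := hX₀.eq_of_subset_isBase hW hsub
        exact ⟨hX₀A, hQ0⟩
      · have hne : (W \ X₀).Nonempty := by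
          rw [← Set.ncard_pos, hW.ncard_diff_comm hX₀, hk]
          exact hpos
        obtain ⟨e, he⟩ := hne
        obtain ⟨f, hf, hW'⟩ := hW.exchange hX₀ he
        set W' := insert f (W \ {e}) with hW'def
        have heX : e ∉ X₀ := he.2
        have h1 : (X₀ \ W').ncard = k - 1 := by
          have hXW' : X₀ \ W' = (X₀ \ W) \ {f} := by
            ext x
            constructor
            · rintro ⟨hx1, hx2⟩
              have hxf : x ≠ f := fun hh => hx2 (hh ▸ Or.inl rfl)
              refine ⟨⟨hx1, fun hxW => ?_⟩, hxf⟩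
              refine hx2 (Or.inr ⟨hxW, fun hh => ?_⟩)
              exact heX (hh ▸ hx1)
            · rintro ⟨⟨hx1, hx2⟩, hxf⟩
              refine ⟨hx1, ?_⟩
              rintro (rfl | hh)
              · exact hxf rfl
              · exact hx2 hh.1
          rw [hXW', Set.ncard_diff_singleton_of_mem hf, hk]
        have hIH := IH (k - 1) (by omega) W' hW' h1
        have hW'W : (W' \ W).ncard = 1 := by
          have : W' \ W = {f} := by
            ext x
            constructor
            · rintro ⟨hx1, hx2⟩
              rcases hx1 with rfl | hh
              · rfl
              · exact absurd hh.1 hx2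
            · rintro rfl
              exact ⟨Or.inl rfl, hf.2⟩
          rw [this, Set.ncard_singleton]
        have hWA : M1.IsBase W := hIH.2 W hW hW'W
        refine ⟨hWA, ?_⟩
        intro V hV h1V
        have hsub2 : W' \ V ⊆ (W' \ W) ∪ (W \ V) := by
          intro x hx
          by_cases hxW : x ∈ W
          · exact Or.inr ⟨hxW, hx.2⟩
          · exact Or.inl ⟨hx.1, hxW⟩
        have hle2 : (W' \ V).ncard ≤ 2 := by
          calc (W' \ V).ncard ≤ ((W' \ W) ∪ (W \ V)).ncard := Set.ncard_le_ncard hsub2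
          _ ≤ (W' \ W).ncard + (W \ V).ncard := Set.ncard_union_le _ _
          _ = 2 := by rw [hW'W, h1V]
        have h012 : (W' \ V).ncard = 0 ∨ (W' \ V).ncard = 1 ∨ (W' \ V).ncard = 2 := by omega
        rcases h012 with h | h | h
        · have hsubV : W' ⊆ V := by
            rw [← Set.diff_eq_empty]
            exact (Set.ncard_eq_zero (Set.toFinite _)).mp h
          obtain rfl : W' = V := hW'.eq_of_subset_isBase hV hsubV
          exact hIH.1
        · exact hIH.2 V hV h
        · exact StmtAux13.step4 hbin hA1 hW' hIH.1 (fun V' hV' hd' => hIH.2 V' hV' hd') hV h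
  obtain ⟨T, hT, hTA⟩ := Set.exists_of_ssubset hA
  exact hTA (main _ T hT rfl).1
end

section
/- Let M be a binary matroid such that some base X of M has exactly d neighbors in the base graph G(M), where d = dim P(M). Then P(M) is indecomposable: it admits no matroid base polytope decomposition P(M) = ∪_{i=1}^t P(M_i) with t ≥ 2 where each intersection P(M_i) ∩ P(M_j) is a common face. -/
open Set

set_option linter.unusedSectionVars false
set_option maxHeartbeats 1000000

namespace Stmt14Aux

attribute [local instance] Classical.propDecidable

lemma zmod2_eq_one {u : ZMod 2} (h : u ≠ 0) : u = 1 := by revert u h; decide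

lemma zmod2_one_add_one : (1 : ZMod 2) + 1 = 0 := by decide

variable {α : Type*} [Fintype α]



noncomputable def bvec (B : Set α) : α → ℝ := B.indicator fun _ => (1:ℝ)

lemma bvec_apply_mem {B : Set α} {a : α} (h : a ∈ B) : bvec B a = 1 :=
  Set.indicator_of_mem h _

lemma bvec_apply_not_mem {B : Set α} {a : α} (h : a ∉ B) : bvec B a = 0 :=
  Set.indicator_of_notMem h _

lemma bvec_inj : Function.Injective (bvec (α := α)) := by
  intro B C h
  ext a
  constructor
  · intro ha
    by_contra hc
    have := bvec_apply_mem ha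
    rw [h, bvec_apply_not_mem hc] at this
    norm_num at this
  · intro ha
    by_contra hc
    have := bvec_apply_mem ha
    rw [← h, bvec_apply_not_mem hc] at this
    norm_num at this

/-- The linear functional `x ↦ ∑ a, w a * x a`. -/
noncomputable def dotL (w : α → ℝ) : (α → ℝ) →ₗ[ℝ] ℝ where
  toFun x := ∑ a, w a * x a
  map_add' x y := by simp [mul_add, Finset.sum_add_distrib]
  map_smul' c x := by
    simp only [Pi.smul_apply, smul_eq_mul, RingHom.id_apply, Finset.mul_sum]
    congr 1; ext a; ring

lemma dotL_apply (w x : α → ℝ) : dotL w x = ∑ a, w a * x a := rfl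

lemma dotL_bvec (w : α → ℝ) (B : Set α) : dotL w (bvec B) = ∑ a ∈ B.toFinset, w a := by
  rw [dotL_apply, ← Finset.sum_subset (Finset.subset_univ B.toFinset)]
  · refine Finset.sum_congr rfl fun a ha => ?_
    rw [bvec_apply_mem (by simpa using ha), mul_one]
  · intro a _ ha
    rw [bvec_apply_not_mem (by simpa using ha), mul_zero]

lemma dotL_add_left (w v x : α → ℝ) : dotL (w + v) x = dotL w x + dotL v x := by
  simp [dotL_apply, add_mul, Finset.sum_add_distrib]

lemma dotL_smul_left (c : ℝ) (w x : α → ℝ) : dotL (c • w) x = c * dotL w x := by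
  simp only [dotL_apply, Pi.smul_apply, smul_eq_mul, Finset.mul_sum]
  congr 1; ext a; ring

lemma dotL_bvec_bvec (X B : Set α) : dotL (bvec X) (bvec B) = ((B ∩ X).ncard : ℝ) := by
  rw [dotL_bvec]
  have hsub : (B ∩ X).toFinset ⊆ B.toFinset := by
    intro a ha; simp only [Set.mem_toFinset] at *; exact ha.1
  have hz : ∀ a ∈ B.toFinset, a ∉ (B ∩ X).toFinset → bvec X a = 0 := by
    intro a ha hna
    simp only [Set.mem_toFinset] at ha hna
    exact bvec_apply_not_mem fun h => hna ⟨ha, h⟩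
  rw [← Finset.sum_subset hsub hz]
  rw [Finset.sum_congr rfl (fun a ha => bvec_apply_mem (by simp only [Set.mem_toFinset] at ha; exact ha.2))]
  simp [Set.ncard_eq_toFinset_card']

/-- Extract a positive-weight representation over base sets. -/
lemma exists_rep {S : Set (Set α)} {p : α → ℝ} (hp : p ∈ convexHull ℝ (bvec '' S)) :
    ∃ T : Finset (Set α), ↑T ⊆ S ∧ ∃ μ : Set α → ℝ, (∀ B ∈ T, 0 < μ B) ∧
      ∑ B ∈ T, μ B = 1 ∧ ∑ B ∈ T, μ B • bvec B = p := by
  have hfin : (bvec '' S).Finite := (Set.toFinite S).image _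
  have hco : ((hfin.toFinset : Finset (α → ℝ)) : Set (α → ℝ)) = bvec '' S := hfin.coe_toFinset
  rw [← hco] at hp
  obtain ⟨u, hu0, hu1, hup⟩ := Finset.mem_convexHull'.1 hp
  have hSfin : S.Finite := Set.toFinite S
  have hFeq : hfin.toFinset = hSfin.toFinset.image bvec := by
    ext x
    simp only [Set.Finite.mem_toFinset, Finset.mem_image, Set.mem_image]
  have hinj : ∀ B ∈ hSfin.toFinset, ∀ C ∈ hSfin.toFinset, bvec B = bvec C → B = C :=
    fun B _ C _ h => bvec_inj h
  rw [hFeq, Finset.sum_image hinj] at hu1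
  rw [hFeq, Finset.sum_image hinj] at hup
  set T := hSfin.toFinset.filter (fun B => 0 < u (bvec B)) with hT
  have hsub : ∀ B ∈ hSfin.toFinset, B ∉ T → u (bvec B) = 0 := by
    intro B hB hBT
    have h0 : 0 ≤ u (bvec B) := hu0 _ (by rw [hFeq]; exact Finset.mem_image_of_mem _ hB)
    rcases h0.lt_or_eq with h | h
    · exact absurd (Finset.mem_filter.2 ⟨hB, h⟩) hBT
    · exact h.symm
  refine ⟨T, ?_, fun B => u (bvec B), fun B hB => (Finset.mem_filter.1 hB).2, ?_, ?_⟩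
  · intro B hB
    have := (Finset.mem_filter.1 hB).1
    simpa [Set.Finite.mem_toFinset] using this
  · have := Finset.sum_subset (Finset.filter_subset (fun B => 0 < u (bvec B)) hSfin.toFinset)
      (fun B hB hBT => hsub B hB hBT) (f := fun B => u (bvec B))
    rw [← hT] at this
    simpa [this] using hu1
  · have := Finset.sum_subset (Finset.filter_subset (fun B => 0 < u (bvec B)) hSfin.toFinset)
      (fun B hB hBT => by have := hsub B hB hBT; simp [this]) (f := fun B => u (bvec B) • bvec B)
    rw [← hT] at this
    simpa [this] using hup

/-- Maximum principle. -/
lemma support_max {T : Finset (Set α)} {μ : Set α → ℝ} {p : α → ℝ}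
    (hpos : ∀ B ∈ T, 0 < μ B) (hsum : ∑ B ∈ T, μ B = 1)
    (hrep : ∑ B ∈ T, μ B • bvec B = p) {w : α → ℝ} {c : ℝ}
    (hb : ∀ B ∈ T, dotL w (bvec B) ≤ c) (hc : dotL w p = c) :
    ∀ B ∈ T, dotL w (bvec B) = c := by
  have hdp : ∑ B ∈ T, μ B * dotL w (bvec B) = c := by
    rw [← hc, ← hrep, map_sum]
    exact Finset.sum_congr rfl fun B _ => by rw [map_smul]; rfl
  have hzero : ∑ B ∈ T, μ B * (c - dotL w (bvec B)) = 0 := by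
    simp only [mul_sub]
    rw [Finset.sum_sub_distrib, ← Finset.sum_mul, hsum, one_mul, hdp, sub_self]
  have hterm := (Finset.sum_eq_zero_iff_of_nonneg
    (fun B hB => mul_nonneg (hpos B hB).le (sub_nonneg.2 (hb B hB)))).1 hzero
  intro B hB
  rcases mul_eq_zero.1 (hterm B hB) with h | h
  · exact absurd h (hpos B hB).ne'
  · linarith [sub_eq_zero.1 h]





lemma vertex_force {M : Matroid α} {S : Set (Set α)} (hS : ∀ B ∈ S, M.IsBase B) {X : Set α}
    (hX : M.IsBase X) (hp : bvec X ∈ convexHull ℝ (bvec '' S)) : X ∈ S := by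
  obtain ⟨T, hTS, μ, hpos, hsum, hrep⟩ := exists_rep hp
  have hb : ∀ B ∈ T, dotL (bvec X) (bvec B) ≤ (X.ncard : ℝ) := by
    intro B hB
    rw [dotL_bvec_bvec]
    exact_mod_cast Set.ncard_le_ncard Set.inter_subset_right (Set.toFinite X)
  have hc : dotL (bvec X) (bvec X) = (X.ncard : ℝ) := by
    rw [dotL_bvec_bvec, Set.inter_self]
  have heq := support_max hpos hsum hrep hb hc
  obtain ⟨B, hBT⟩ : T.Nonempty := by
    rcases T.eq_empty_or_nonempty with h | h
    · rw [h, Finset.sum_empty] at hsum; norm_num at hsum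
    · exact h
  have hBX : B = X := by
    have h1 := heq B hBT
    rw [dotL_bvec_bvec] at h1
    have h2 : (B ∩ X).ncard = X.ncard := by exact_mod_cast h1
    have h4 : B ∩ X = X :=
      Set.eq_of_subset_of_ncard_le Set.inter_subset_right h2.ge (Set.toFinite X)
    have h5 : X ⊆ B := by rw [← h4]; exact Set.inter_subset_left
    exact (hX.eq_of_subset_isBase (hS B (hTS hBT)) h5).symm
  exact hBX ▸ hTS hBT




/-- Symmetric (Brualdi) exchange for arbitrary matroids. -/
lemma sym_exchange {N : Matroid α} {X Z : Set α} (hX : N.IsBase X) (hZ : N.IsBase Z) {b : α}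
    (hb : b ∈ Z \ X) :
    ∃ a ∈ X \ Z, N.IsBase (insert b (X \ {a})) ∧ N.IsBase (insert a (Z \ {b})) := by
  have hbE : b ∈ N.E := hZ.subset_ground hb.1
  have hXind := hX.indep
  have hZind := hZ.indep
  have hZb : N.Indep (Z \ {b}) := hZind.subset diff_subset
  by_contra hcon
  push_neg at hcon
  -- every a ∈ X with a ∉ cl(Z\{b}) fails the first base condition
  set J : Set α := {a | a ∈ X ∧ a ∉ N.closure (Z \ {b})} with hJ
  have hstepA : ∀ a ∈ J, b ∈ N.closure (X \ {a}) := by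
    intro a ha
    obtain ⟨haX, hacl⟩ := ha
    have haZ : a ∉ Z := by
      intro haZ
      have hab : a ≠ b := fun h => hb.2 (h ▸ haX)
      exact hacl (N.subset_closure (Z \ {b}) (diff_subset.trans hZ.subset_ground) ⟨haZ, hab⟩)
    have hXa : N.Indep (X \ {a}) := hXind.subset diff_subset
    have hbXa : b ∉ X \ {a} := fun h => hb.2 h.1
    by_cases hind : N.Indep (insert b (X \ {a}))
    · -- then the first base holds, so the second must fail
      have hbase1 : N.IsBase (insert b (X \ {a})) := hX.exchange_isBase_of_indep hb.2 hind
      have h2 : ¬ N.IsBase (insert a (Z \ {b})) := by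
        intro h2
        exact (hcon a ⟨haX, haZ⟩ hbase1) h2
      -- a ∉ cl (Z\{b}), a ∈ E, so insert is indep, and has base size: contradiction
      have hind2 : N.Indep (insert a (Z \ {b})) := by
        rw [hZb.insert_indep_iff_of_notMem (fun h => haZ h.1)]
        exact ⟨hX.subset_ground haX, hacl⟩
      exact absurd (hZ.exchange_isBase_of_indep haZ hind2) h2
    · -- not indep: b ∈ cl (X\{a})
      rw [hXa.insert_indep_iff_of_notMem hbXa] at hind
      rw [Set.mem_diff] at hind
      push_neg at hind
      exact hind hbE
  -- b ∈ cl (X \ J)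
  have hstepB : b ∈ N.closure (X \ J) := by
    rcases eq_empty_or_nonempty J with hJe | hJne
    · rw [hJe, diff_empty]
      rw [hX.closure_eq]
      exact hbE
    · have : Nonempty ↥J := hJne.to_subtype
      have hun : N.Indep (⋃ a : J, (X \ {(a : α)})) := by
        refine hXind.subset ?_
        exact iUnion_subset fun a => diff_subset
      have hiInt := N.closure_iInter_eq_iInter_closure_of_iUnion_indep
        (fun a : J => X \ {(a : α)}) hun
      have hIeq : (⋂ a : J, (X \ {(a : α)})) = X \ J := by
        ext x
        simp only [mem_iInter, mem_diff, mem_singleton_iff]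
        constructor
        · intro h
          obtain ⟨a, ha⟩ := hJne
          refine ⟨(h ⟨a, ha⟩).1, fun hxJ => (h ⟨x, hxJ⟩).2 rfl⟩
        · rintro ⟨hxX, hxJ⟩ a
          exact ⟨hxX, fun h => hxJ (h ▸ a.2)⟩
      rw [hIeq] at hiInt
      rw [hiInt]
      exact mem_iInter.2 fun a => hstepA a a.2
  -- X \ J ⊆ cl (Z \ {b})
  have hstepC : X \ J ⊆ N.closure (Z \ {b}) := by
    intro a ha
    by_contra h
    exact ha.2 ⟨ha.1, h⟩
  have hfinal : b ∈ N.closure (Z \ {b}) :=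
    N.closure_subset_closure_of_subset_closure hstepC hstepB
  exact hZind.notMem_closure_diff_of_mem hb.1 hfinal

lemma bvec_insert_diff {S : Set α} {p q : α} (hp : p ∈ S) (hq : q ∉ S) :
    bvec (insert q (S \ {p})) = bvec S + bvec {q} - bvec {p} := by
  funext x
  simp only [Pi.sub_apply, Pi.add_apply]
  by_cases hxq : x = q
  · subst hxq
    rw [bvec_apply_mem (mem_insert x _), bvec_apply_not_mem hq, bvec_apply_mem (Set.mem_singleton _),
      bvec_apply_not_mem (fun h : x ∈ ({p} : Set α) => hq (h ▸ hp))]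
    norm_num
  · by_cases hxp : x = p
    · subst hxp
      have h2 : x ∉ insert q (S \ {x}) := by
        rintro (h | h)
        · exact hq (h ▸ hp)
        · exact h.2 rfl
      rw [bvec_apply_not_mem h2, bvec_apply_mem hp,
        bvec_apply_not_mem (show x ∉ ({q} : Set α) from
          fun h => hq (by rwa [Set.mem_singleton_iff.1 h] at hp)),
        bvec_apply_mem (Set.mem_singleton _)]
      norm_num
    · have h1 : x ∈ insert q (S \ {p}) ↔ x ∈ S := by
        simp only [mem_insert_iff, mem_diff, mem_singleton_iff]
        constructor
        · rintro (h | h)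
          · exact absurd h hxq
          · exact h.1
        · intro h
          exact Or.inr ⟨h, hxp⟩
      rw [bvec_apply_not_mem (fun h : x ∈ ({q} : Set α) => hxq h),
        bvec_apply_not_mem (fun h : x ∈ ({p} : Set α) => hxp h)]
      by_cases hxS : x ∈ S
      · rw [bvec_apply_mem (h1.2 hxS), bvec_apply_mem hxS]; norm_num
      · rw [bvec_apply_not_mem (fun h => hxS (h1.1 h)), bvec_apply_not_mem hxS]; norm_num

/-- Every base-vertex difference lies in the span of the edge directions at `X`. -/
lemma diff_mem_edge_span {N : Matroid α} {X : Set α} (hX : N.IsBase X) :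
    ∀ Z, N.IsBase Z → bvec Z - bvec X ∈
      Submodule.span ℝ ((fun Y => bvec Y - bvec X) ''
        {Y | N.IsBase Y ∧ (symmDiff X Y).ncard = 2}) := by
  suffices H : ∀ k, ∀ Z, N.IsBase Z → (Z \ X).ncard = k → bvec Z - bvec X ∈
      Submodule.span ℝ ((fun Y => bvec Y - bvec X) ''
        {Y | N.IsBase Y ∧ (symmDiff X Y).ncard = 2}) by
    intro Z hZ
    exact H _ Z hZ rfl
  intro k
  induction k using Nat.strong_induction_on with
  | _ k IH =>
    intro Z hZ hk
    rcases Nat.eq_zero_or_pos k with rfl | hkpos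
    · have hZX : Z ⊆ X := by
        have h0 : Z \ X = ∅ := by
          have hfin : (Z \ X).Finite := Set.toFinite _
          rw [← Set.ncard_eq_zero hfin]
          exact hk
        exact Set.diff_eq_empty.mp h0
      rw [hZ.eq_of_subset_isBase hX hZX]
      simp
    · obtain ⟨b, hb⟩ : (Z \ X).Nonempty := by
        apply Set.nonempty_of_ncard_ne_zero
        omega
      obtain ⟨a, ha, hbase1, hbase2⟩ := sym_exchange hX hZ hb
      have hab : a ≠ b := fun h => hb.2 (h ▸ ha.1)
      set Y := insert b (X \ {a}) with hY
      set Z' := insert a (Z \ {b}) with hZ'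
      -- symmDiff X Y = {a, b}
      have hXdY : X \ Y = {a} := by
        ext x
        simp only [hY, mem_diff, mem_insert_iff, mem_singleton_iff, not_or]
        constructor
        · rintro ⟨hxX, _, hnot⟩
          by_contra hxa
          exact hnot ⟨hxX, hxa⟩
        · rintro rfl
          exact ⟨ha.1, fun h => hb.2 (h ▸ ha.1), fun h => h.2 rfl⟩
      have hYdX : Y \ X = {b} := by
        ext x
        simp only [hY, mem_diff, mem_insert_iff, mem_singleton_iff]
        constructor
        · rintro ⟨hxY, hxX⟩
          rcases hxY with h | h
          · exact h
          · exact absurd h.1 hxX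
        · rintro rfl
          exact ⟨Or.inl rfl, hb.2⟩
      have hsd : (symmDiff X Y).ncard = 2 := by
        rw [Set.symmDiff_def]
        have h2 : X \ Y ∪ Y \ X = ({a, b} : Set α) := by
          rw [hXdY, hYdX, Set.singleton_union]
        show ((X \ Y) ∪ (Y \ X)).ncard = 2
        rw [h2]
        exact Set.ncard_pair hab
      -- Z' is closer to X
      have hZ'X : Z' \ X = (Z \ X) \ {b} := by
        ext x
        simp only [hZ', mem_diff, mem_insert_iff, mem_singleton_iff]
        constructor
        · rintro ⟨h | h, hxX⟩
          · exact absurd (h ▸ ha.1) hxX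
          · exact ⟨⟨h.1, hxX⟩, h.2⟩
        · rintro ⟨⟨hxZ, hxX⟩, hxb⟩
          exact ⟨Or.inr ⟨hxZ, hxb⟩, hxX⟩
      have hk' : (Z' \ X).ncard = k - 1 := by
        rw [hZ'X, Set.ncard_diff_singleton_of_mem hb, hk]
      have hmem := IH (k - 1) (by omega) Z' hbase2 hk'
      -- decompose
      have hZ'a : Z' \ {a} = Z \ {b} := by
        rw [hZ']
        exact Set.insert_diff_self_of_notMem (fun h => ha.2 h.1)
      have h1 : insert b (Z' \ {a}) = Z := by
        rw [hZ'a, Set.insert_diff_singleton, Set.insert_eq_self.2 hb.1]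
      have hbnZ' : b ∉ Z' := by
        rw [hZ']
        rintro (h | h)
        · exact hab (h.symm ▸ rfl)
        · exact h.2 rfl
      have haZ' : a ∈ Z' := mem_insert a _
      have hbvZ : bvec Z = bvec Z' + bvec {b} - bvec {a} := by
        rw [← h1]
        exact bvec_insert_diff haZ' hbnZ'
      have hbvY : bvec Y = bvec X + bvec {b} - bvec {a} := bvec_insert_diff ha.1 hb.2
      have heq : bvec Z - bvec X = (bvec Z' - bvec X) + (bvec Y - bvec X) := by
        rw [hbvZ, hbvY]
        abel
      rw [heq]
      exact Submodule.add_mem _ hmem (Submodule.subset_span ⟨Y, ⟨hbase1, hsd⟩, rfl⟩)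

lemma injOn_of_inj_family {β : Type*} {S : Set α} {f : α → β}
    (h : Function.Injective (fun z : S => f z)) : Set.InjOn f S := by
  intro p hp q hq hpq
  have := h (a₁ := ⟨p, hp⟩) (a₂ := ⟨q, hq⟩) hpq
  exact congrArg Subtype.val this

lemma li_insert_iff {n : ℕ} {φ : α → Fin n → ZMod 2} {S : Set α} {x : α} (hxS : x ∉ S)
    (hli : LinearIndependent (ZMod 2) (fun z : S => φ z)) :
    (LinearIndependent (ZMod 2) (fun z : (insert x S : Set α) => φ z)) ↔
      φ x ∉ Submodule.span (ZMod 2) (φ '' S) := by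
  haveI : Fact (Nat.Prime 2) := ⟨Nat.prime_two⟩
  have hinjS : Set.InjOn φ S := injOn_of_inj_family hli.injective
  have hsetS : LinearIndependent (ZMod 2) (fun v : (φ '' S : Set _) => (v : Fin n → ZMod 2)) :=
    (linearIndepOn_iff_image hinjS).1 hli
  constructor
  · intro h
    have hinj : Set.InjOn φ (insert x S) := injOn_of_inj_family h.injective
    have hnm : φ x ∉ φ '' S := by
      rintro ⟨p, hp, hpx⟩
      have hpxeq : p = x := hinj (Set.mem_insert_iff.2 (Or.inr hp)) (Set.mem_insert x S) hpx
      exact hxS (hpxeq ▸ hp)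
    have hset : LinearIndependent (ZMod 2)
        (fun v : (insert (φ x) (φ '' S) : Set _) => (v : Fin n → ZMod 2)) := by
      rw [← Set.image_insert_eq]
      exact (linearIndepOn_iff_image hinj).1 h
    exact ((linearIndepOn_id_insert hnm).1 hset).2
  · intro h
    have hnm : φ x ∉ φ '' S := fun hm => h (Submodule.subset_span hm)
    have hset := (linearIndepOn_id_insert hnm).2 ⟨hsetS, h⟩
    have hinjIns : Set.InjOn φ (insert x S) := by
      intro p hp q hq hpq
      rcases hp with rfl | hp
      · rcases hq with rfl | hq
        · rfl
        · exact absurd (hpq ▸ Set.mem_image_of_mem φ hq) hnm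
      · rcases hq with rfl | hq
        · exact absurd (hpq ▸ Set.mem_image_of_mem φ hp) hnm
        · exact hinjS hp hq hpq
    refine (linearIndepOn_iff_image hinjIns).2 ?_
    rw [Set.image_insert_eq]
    exact hset

lemma binary_key {M : Matroid α} (hbin : M.IsBinary) {X Z : Set α} (hX : M.IsBase X)
    (hZ : M.IsBase Z) (hk2 : 2 ≤ (X \ Z).ncard) :
    ∃ f ∈ X \ Z, ∃ b ∈ Z \ X, ∃ z ∈ Z \ X, z ≠ b ∧
      ¬ M.IsBase (insert f (Z \ {b})) ∧ M.IsBase (insert f (Z \ {z})) := by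
  haveI : Fact (Nat.Prime 2) := ⟨Nat.prime_two⟩
  obtain ⟨n, φ, hφ⟩ := hbin
  have hZE : Z ⊆ M.E := hZ.subset_ground
  have hXE : X ⊆ M.E := hX.subset_ground
  have hliZ : LinearIndependent (ZMod 2) (fun z : Z => φ z) := (hφ Z hZE).1 hZ.indep
  have hliX : LinearIndependent (ZMod 2) (fun z : X => φ z) := (hφ X hXE).1 hX.indep
  set W := Submodule.span (ZMod 2) (Set.range (fun z : Z => φ z)) with hW
  have hrange : Set.range (fun z : Z => φ z) = φ '' Z := (Set.image_eq_range φ Z).symm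
  set bZ : Module.Basis Z (ZMod 2) W := Module.Basis.span hliZ with hbZ
  -- membership of all ground elements in W
  have hmemW : ∀ x ∈ M.E, φ x ∈ W := by
    intro x hx
    by_cases hxZ : x ∈ Z
    · exact Submodule.subset_span ⟨⟨x, hxZ⟩, rfl⟩
    · by_contra hns
      have hns' : φ x ∉ Submodule.span (ZMod 2) (φ '' Z) := by rwa [← hrange]
      have hli2 := (li_insert_iff hxZ hliZ).2 hns'
      have hdep := hZ.insert_dep ⟨hx, hxZ⟩
      have hsub : insert x Z ⊆ M.E := Set.insert_subset hx hZE
      exact hdep.not_indep ((hφ _ hsub).2 hli2)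
  set c : α → (Z →₀ ZMod 2) :=
    fun x => if hx : x ∈ M.E then bZ.repr ⟨φ x, hmemW x hx⟩ else 0 with hc
  have hc_def : ∀ x (hx : x ∈ M.E), c x = bZ.repr ⟨φ x, hmemW x hx⟩ := by
    intro x hx
    simp only [hc, dif_pos hx]
  -- span characterization machinery
  have hspan : ∀ (m : Fin n → ZMod 2) (hm : m ∈ W) (s : Set Z),
      m ∈ Submodule.span (ZMod 2) (φ '' (Subtype.val '' s)) ↔
        ((bZ.repr ⟨m, hm⟩).support : Set Z) ⊆ s := by
    intro m hm s
    have himg : φ '' (Subtype.val '' s) = Subtype.val '' (⇑bZ '' s) := by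
      rw [Set.image_image, Set.image_image]
      exact Set.image_congr fun z _ => congrArg Subtype.val (Module.Basis.span_apply hliZ z).symm
    rw [himg]
    have : Subtype.val '' (⇑bZ '' s) = W.subtype '' (⇑bZ '' s) := rfl
    rw [this, ← Submodule.map_span]
    constructor
    · intro hmem
      obtain ⟨w, hw, hweq⟩ := Submodule.mem_map.1 hmem
      have hwm : w = ⟨m, hm⟩ := Subtype.ext hweq
      rw [hwm] at hw
      exact (Module.Basis.mem_span_image bZ).1 hw
    · intro hsupp
      exact Submodule.mem_map.2 ⟨⟨m, hm⟩, (Module.Basis.mem_span_image bZ).2 hsupp, rfl⟩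
  -- the base-exchange criterion
  have hcrit : ∀ x ∈ M.E, x ∉ Z → ∀ y : Z,
      (M.IsBase (insert x (Z \ {(y : α)})) ↔ c x y ≠ 0) := by
    intro x hx hxZ y
    have hxW := hmemW x hx
    have hSy : Subtype.val '' ({y}ᶜ : Set Z) = Z \ {(y : α)} := by
      ext p
      simp only [Set.mem_image, Set.mem_compl_iff, Set.mem_singleton_iff, Set.mem_diff]
      constructor
      · rintro ⟨q, hq, rfl⟩
        exact ⟨q.2, fun h => hq (Subtype.ext h)⟩
      · rintro ⟨hpZ, hpy⟩
        exact ⟨⟨p, hpZ⟩, fun h => hpy (congrArg Subtype.val h), rfl⟩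
    have hspan_iff : φ x ∈ Submodule.span (ZMod 2) (φ '' (Z \ {(y : α)})) ↔ c x y = 0 := by
      rw [← hSy, hspan (φ x) hxW ({y}ᶜ : Set Z), hc_def x hx]
      constructor
      · intro h
        by_contra hne
        have : y ∈ (bZ.repr ⟨φ x, hxW⟩).support := Finsupp.mem_support_iff.2 hne
        exact (h this) rfl
      · intro h0 z hz
        simp only [Set.mem_compl_iff, Set.mem_singleton_iff]
        intro hzy
        rw [hzy] at hz
        exact (Finsupp.mem_support_iff.1 hz) h0
    have hliZy : LinearIndependent (ZMod 2) (fun z : (Z \ {(y : α)} : Set α) => φ z) :=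
      (hφ _ (diff_subset.trans hZE)).1 (hZ.indep.subset diff_subset)
    have hxZy : x ∉ Z \ {(y : α)} := fun h => hxZ h.1
    constructor
    · intro hbase
      have hind := hbase.indep
      have hli := (hφ _ (hbase.subset_ground)).1 hind
      have := (li_insert_iff hxZy hliZy).1 hli
      intro h0
      exact this (hspan_iff.2 h0)
    · intro hne
      have hns : φ x ∉ Submodule.span (ZMod 2) (φ '' (Z \ {(y : α)})) :=
        fun h => hne (hspan_iff.1 h)
      have hli := (li_insert_iff hxZy hliZy).2 hns
      have hind : M.Indep (insert x (Z \ {(y : α)})) :=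
        (hφ _ (Set.insert_subset hx (diff_subset.trans hZE))).2 hli
      exact hZ.exchange_isBase_of_indep hxZ hind
  -- row f is nonzero somewhere on Z \ X
  have hrow : ∀ f ∈ X \ Z, ∃ z : Z, (z : α) ∈ Z \ X ∧ c f z ≠ 0 := by
    intro f hf
    by_contra hcon
    push_neg at hcon
    have hfE : f ∈ M.E := hXE hf.1
    have hsupp : ((bZ.repr ⟨φ f, hmemW f hfE⟩).support : Set Z) ⊆ {z : Z | (z : α) ∈ X} := by
      intro z hz
      by_contra hzX
      have hzZX : (z : α) ∈ Z \ X := ⟨z.2, hzX⟩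
      have := hcon z hzZX
      rw [hc_def f hfE] at this
      exact (Finsupp.mem_support_iff.1 hz) this
    have hval : Subtype.val '' {z : Z | (z : α) ∈ X} = Z ∩ X := by
      ext p
      simp only [Set.mem_image, Set.mem_setOf_eq, Set.mem_inter_iff]
      constructor
      · rintro ⟨q, hq, rfl⟩; exact ⟨q.2, hq⟩
      · rintro ⟨hpZ, hpX⟩; exact ⟨⟨p, hpZ⟩, hpX, rfl⟩
    have hmem2 : φ f ∈ Submodule.span (ZMod 2) (φ '' (Z ∩ X)) := by
      rw [← hval]
      exact (hspan (φ f) (hmemW f hfE) _).2 hsupp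
    -- contradiction with linear independence of X
    have hsub2 : φ '' (Z ∩ X) ⊆ φ '' (X \ {f}) := by
      apply Set.image_mono
      rintro p ⟨hpZ, hpX⟩
      exact ⟨hpX, fun h => hf.2 (Set.mem_singleton_iff.1 h ▸ hpZ)⟩
    have hns := hliX.notMem_span_image (s := {w : X | (w : α) ≠ f}) (x := ⟨f, hf.1⟩)
      (by simp)
    apply hns
    have himg2 : (fun z : X => φ z) '' {w : X | (w : α) ≠ f} = φ '' (X \ {f}) := by
      ext p
      simp only [Set.mem_image, Set.mem_setOf_eq, Set.mem_diff, Set.mem_singleton_iff]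
      constructor
      · rintro ⟨q, hq, rfl⟩; exact ⟨q, ⟨q.2, hq⟩, rfl⟩
      · rintro ⟨q, ⟨hqX, hqf⟩, rfl⟩; exact ⟨⟨q, hqX⟩, hqf, rfl⟩
    rw [himg2]
    exact Submodule.span_mono hsub2 hmem2
  -- there is a zero entry
  have hzero : ∃ f ∈ X \ Z, ∃ b : Z, (b : α) ∈ Z \ X ∧ c f b = 0 := by
    by_contra hcon
    push_neg at hcon
    obtain ⟨f1, f2, hf1, hf2, hne⟩ : ∃ f1 f2, f1 ∈ X \ Z ∧ f2 ∈ X \ Z ∧ f1 ≠ f2 := by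
      obtain ⟨f1, f2, h1, h2, h3⟩ := (Set.one_lt_ncard_iff (s := X \ Z) (Set.toFinite _)).1 (by omega)
      exact ⟨f1, f2, h1, h2, h3⟩
    have hf1E : f1 ∈ M.E := hXE hf1.1
    have hf2E : f2 ∈ M.E := hXE hf2.1
    set m : Fin n → ZMod 2 := φ f1 + φ f2 with hm
    have hmW : m ∈ W := Submodule.add_mem _ (hmemW f1 hf1E) (hmemW f2 hf2E)
    have hrepr : bZ.repr ⟨m, hmW⟩ = c f1 + c f2 := by
      rw [hc_def f1 hf1E, hc_def f2 hf2E, ← map_add]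
      congr 1
    have hsupp : ((bZ.repr ⟨m, hmW⟩).support : Set Z) ⊆ {z : Z | (z : α) ∈ X} := by
      intro z hz
      by_contra hzX
      have hzZX : (z : α) ∈ Z \ X := ⟨z.2, hzX⟩
      have h1 := zmod2_eq_one (hcon f1 hf1 z hzZX)
      have h2 := zmod2_eq_one (hcon f2 hf2 z hzZX)
      have : (bZ.repr ⟨m, hmW⟩) z = 0 := by
        rw [hrepr, Finsupp.add_apply, h1, h2]
        exact zmod2_one_add_one
      exact (Finsupp.mem_support_iff.1 hz) this
    have hval : Subtype.val '' {z : Z | (z : α) ∈ X} = Z ∩ X := by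
      ext p
      simp only [Set.mem_image, Set.mem_setOf_eq, Set.mem_inter_iff]
      constructor
      · rintro ⟨q, hq, rfl⟩; exact ⟨q.2, hq⟩
      · rintro ⟨hpZ, hpX⟩; exact ⟨⟨p, hpZ⟩, hpX, rfl⟩
    have hmem2 : m ∈ Submodule.span (ZMod 2) (φ '' (Z ∩ X)) := by
      rw [← hval]
      exact (hspan m hmW _).2 hsupp
    -- φ f1 = m - φ f2 ∈ span (φ '' (X \ {f1}))
    have hsub2 : φ '' (Z ∩ X) ⊆ φ '' (X \ {f1}) := by
      apply Set.image_mono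
      rintro p ⟨hpZ, hpX⟩
      exact ⟨hpX, fun h => hf1.2 (Set.mem_singleton_iff.1 h ▸ hpZ)⟩
    have hmem3 : φ f1 ∈ Submodule.span (ZMod 2) (φ '' (X \ {f1})) := by
      have h2m : φ f2 ∈ Submodule.span (ZMod 2) (φ '' (X \ {f1})) :=
        Submodule.subset_span ⟨f2, ⟨hf2.1, fun h => hne (Set.mem_singleton_iff.1 h).symm⟩, rfl⟩
      have hmm : m ∈ Submodule.span (ZMod 2) (φ '' (X \ {f1})) :=
        Submodule.span_mono hsub2 hmem2
      have : φ f1 = m - φ f2 := by rw [hm]; abel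
      rw [this]
      exact Submodule.sub_mem _ hmm h2m
    have hns := hliX.notMem_span_image (s := {w : X | (w : α) ≠ f1}) (x := ⟨f1, hf1.1⟩)
      (by simp)
    apply hns
    have himg2 : (fun z : X => φ z) '' {w : X | (w : α) ≠ f1} = φ '' (X \ {f1}) := by
      ext p
      simp only [Set.mem_image, Set.mem_setOf_eq, Set.mem_diff, Set.mem_singleton_iff]
      constructor
      · rintro ⟨q, hq, rfl⟩; exact ⟨q, ⟨q.2, hq⟩, rfl⟩
      · rintro ⟨q, ⟨hqX, hqf⟩, rfl⟩; exact ⟨⟨q, hqX⟩, hqf, rfl⟩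
    rw [himg2]
    exact hmem3
  obtain ⟨f, hf, b, hbZX, hfb⟩ := hzero
  obtain ⟨z, hzZX, hfz⟩ := hrow f hf
  have hfE : f ∈ M.E := hXE hf.1
  refine ⟨f, hf, (b : α), hbZX, (z : α), hzZX, ?_, ?_, ?_⟩
  · intro h
    apply hfz
    have : z = b := Subtype.ext h
    rw [this]
    exact hfb
  · intro hbase
    exact ((hcrit f hfE hf.2 b).1 hbase) hfb
  · exact (hcrit f hfE hf.2 z).2 hfz





lemma diff_ncard_comm {M : Matroid α} {X Z : Set α} (hX : M.IsBase X) (hZ : M.IsBase Z) :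
    (X \ Z).ncard = (Z \ X).ncard := by
  have := hX.encard_diff_comm hZ
  rw [Set.ncard_def, Set.ncard_def, this]

lemma binary_closure {M N : Matroid α} (hbin : M.IsBinary) {X : Set α} (hX : M.IsBase X)
    (hsub : ∀ B, N.IsBase B → M.IsBase B) (hXN : N.IsBase X)
    (hnbr : ∀ Y, M.IsBase Y → (symmDiff X Y).ncard = 2 → N.IsBase Y) :
    ∀ Z, M.IsBase Z → N.IsBase Z := by
  suffices H : ∀ k Z, M.IsBase Z → (Z \ X).ncard = k → N.IsBase Z by
    intro Z hZ; exact H _ Z hZ rfl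
  intro k
  induction k using Nat.strong_induction_on with
  | _ k IH =>
  intro Z hZ hk
  rcases Nat.lt_or_ge k 2 with hklt | hk2
  · rcases Nat.lt_or_ge k 1 with hk0 | hk1
    · -- k = 0
      have h0 : Z \ X = ∅ := (Set.ncard_eq_zero (Set.toFinite _)).1 (by omega)
      have hZX : Z ⊆ X := Set.diff_eq_empty.mp h0
      rw [hZ.eq_of_subset_isBase hX hZX]
      exact hXN
    · -- k = 1
      have hk1' : (Z \ X).ncard = 1 := by omega
      have hxz : (X \ Z).ncard = 1 := by
        rw [diff_ncard_comm hX hZ, hk1']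
      have hsd : (symmDiff X Z).ncard = 2 := by
        have hdisj : Disjoint (X \ Z) (Z \ X) := by
          rw [Set.disjoint_left]
          exact fun a ha hb => ha.2 hb.1
        rw [Set.symmDiff_def]
        show ((X \ Z) ∪ (Z \ X)).ncard = 2
        rw [Set.ncard_union_eq hdisj (Set.toFinite _) (Set.toFinite _), hxz, hk1']
      exact hnbr Z hZ hsd
  · -- k ≥ 2
    have hxz2 : 2 ≤ (X \ Z).ncard := by rw [diff_ncard_comm hX hZ]; omega
    obtain ⟨f, hf, b, hb, z, hz, hzb, hnotbase, hVbase⟩ := binary_key hbin hX hZ hxz2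
    obtain ⟨a, ha, hUbase⟩ := hZ.exchange hX hb
    have haf : a ≠ f := by
      rintro rfl
      exact hnotbase hUbase
    set U := insert a (Z \ {b}) with hU
    set V := insert f (Z \ {z}) with hV
    have hUX : U \ X = (Z \ X) \ {b} := by
      ext x
      simp only [hU, mem_insert_iff, mem_diff, mem_singleton_iff]
      constructor
      · rintro ⟨h | h, hxX⟩
        · exact absurd (h ▸ ha.1) hxX
        · exact ⟨⟨h.1, hxX⟩, h.2⟩
      · rintro ⟨⟨hxZ, hxX⟩, hxb⟩
        exact ⟨Or.inr ⟨hxZ, hxb⟩, hxX⟩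
    have hVX : V \ X = (Z \ X) \ {z} := by
      ext x
      simp only [hV, mem_insert_iff, mem_diff, mem_singleton_iff]
      constructor
      · rintro ⟨h | h, hxX⟩
        · exact absurd (h ▸ hf.1) hxX
        · exact ⟨⟨h.1, hxX⟩, h.2⟩
      · rintro ⟨⟨hxZ, hxX⟩, hxz⟩
        exact ⟨Or.inr ⟨hxZ, hxz⟩, hxX⟩
    have hUk : (U \ X).ncard = k - 1 := by
      rw [hUX, Set.ncard_diff_singleton_of_mem hb, hk]
    have hVk : (V \ X).ncard = k - 1 := by
      rw [hVX, Set.ncard_diff_singleton_of_mem hz, hk]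
    have hNU : N.IsBase U := IH (k-1) (by omega) U hUbase hUk
    have hNV : N.IsBase V := IH (k-1) (by omega) V hVbase hVk
    have haUV : a ∈ U \ V := by
      refine ⟨mem_insert a _, ?_⟩
      rw [hV]
      rintro (h | h)
      · exact haf h
      · exact ha.2 h.1
    obtain ⟨g, hgVU, hgbase⟩ := hNU.exchange hNV haUV
    have hUa : U \ {a} = Z \ {b} := by
      rw [hU]
      exact Set.insert_diff_self_of_notMem (fun h => ha.2 h.1)
    have hgfb : g = f ∨ g = b := by
      obtain ⟨hgV, hgU⟩ := hgVU
      rw [hV] at hgV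
      rcases hgV with h | h
      · exact Or.inl h
      · right
        by_contra hgb
        exact hgU (by rw [hU]; exact Or.inr ⟨h.1, hgb⟩)
    rcases hgfb with rfl | rfl
    · exfalso
      rw [hUa] at hgbase
      exact hnotbase (hsub _ hgbase)
    · rw [hUa] at hgbase
      rw [Set.insert_diff_singleton, Set.insert_eq_self.2 hb.1] at hgbase
      exact hgbase



-- helper: if an affine subspace contains two distinct points of the segment family
-- pₜ = (1-t)•x + t•y then it contains y (and x).
lemma affine_line_trick {V : Type*} [AddCommGroup V] [Module ℝ V]
    (A : AffineSubspace ℝ V) {x y : V} {s u : ℝ} (hsu : s ≠ u)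
    (hs : ((1-s) • x + s • y : V) ∈ A) (hu : ((1-u) • x + u • y : V) ∈ A) :
    y ∈ A ∧ x ∈ A := by
  set ps : V := (1-s) • x + s • y with hps
  set pu : V := (1-u) • x + u • y with hpu
  have hd : s - u ≠ 0 := sub_ne_zero.2 hsu
  have hdiff : ps - pu = (s - u) • (y - x) := by
    rw [hps, hpu]
    rw [smul_sub]
    module
  have hy : y = ((1-s)/(s-u)) • (ps -ᵥ pu) +ᵥ ps := by
    show y = ((1-s)/(s-u)) • (ps - pu) + ps
    rw [hdiff, smul_smul, div_mul_cancel₀ _ hd, hps]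
    module
  have hx : x = ((-s)/(s-u)) • (ps -ᵥ pu) +ᵥ ps := by
    show x = ((-s)/(s-u)) • (ps - pu) + ps
    rw [hdiff, smul_smul, div_mul_cancel₀ _ hd, hps]
    module
  constructor
  · rw [hy]; exact A.smul_vsub_vadd_mem _ hs hu hs
  · rw [hx]; exact A.smul_vsub_vadd_mem _ hs hu hs

lemma convex_cover {ι : Type*} (s : Finset ι) (A : ι → AffineSubspace ℝ (α → ℝ))
    {C : Set (α → ℝ)} (hC : Convex ℝ C) (hne : C.Nonempty)
    (hcov : C ⊆ ⋃ i ∈ s, (A i : Set (α → ℝ))) : ∃ i ∈ s, C ⊆ A i := by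
  classical
  induction s using Finset.cons_induction with
  | empty =>
    obtain ⟨x, hx⟩ := hne
    simpa using hcov hx
  | cons j s hjs IH =>
    by_cases hCA : C ⊆ A j
    · exact ⟨j, Finset.mem_cons_self j s, hCA⟩
    by_cases hCL : C ⊆ ⋃ i ∈ s, (A i : Set (α → ℝ))
    · obtain ⟨i, hi, hsub⟩ := IH hCL
      exact ⟨i, Finset.mem_cons.2 (Or.inr hi), hsub⟩
    obtain ⟨x, hxC, hxA⟩ : ∃ x ∈ C, x ∉ A j := by
      obtain ⟨x, h1, h2⟩ := Set.not_subset.1 hCA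
      exact ⟨x, h1, h2⟩
    obtain ⟨y, hyC, hyL⟩ : ∃ y ∈ C, y ∉ ⋃ i ∈ s, (A i : Set (α → ℝ)) := by
      obtain ⟨y, h1, h2⟩ := Set.not_subset.1 hCL
      exact ⟨y, h1, h2⟩
    have hyA : y ∈ A j := by
      have := hcov hyC
      simp only [Finset.mem_coe, Set.mem_iUnion, Finset.cons_eq_insert, Finset.mem_insert] at this
      obtain ⟨i, hi, hmem⟩ := this
      rcases hi with rfl | hi
      · exact hmem
      · exact absurd (Set.mem_iUnion₂.2 ⟨i, hi, hmem⟩) hyL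
    -- the family of points
    set t : ℕ → ℝ := fun m => 1/(m+2) with ht
    have ht01 : ∀ m : ℕ, 0 ≤ t m ∧ t m ≤ 1 := by
      intro m
      constructor
      · positivity
      · rw [ht]
        rw [div_le_one (by positivity)]
        linarith [Nat.cast_nonneg (α := ℝ) m]
    have htinj : Function.Injective t := by
      intro m1 m2 h
      rw [ht] at h
      simp only [one_div] at h
      have h1 : (m1:ℝ) + 2 ≠ 0 := by positivity
      have h2 : (m2:ℝ) + 2 ≠ 0 := by positivity
      have := inv_injective h
      have : (m1:ℝ) = m2 := by linarith [this]
      exact_mod_cast this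
    set p : ℕ → (α → ℝ) := fun m => (1 - t m) • x + t m • y with hp
    have hpC : ∀ m, p m ∈ C := by
      intro m
      exact hC hxC hyC (by linarith [(ht01 m).2]) (ht01 m).1 (by ring)
    have hpnotA : ∀ m, p m ∉ A j := by
      intro m hmem
      -- y = (1-1)•x + 1•y ∈ A j, p m ∈ A j, t m ≠ 1
      have h1 : ((1 - (1:ℝ)) • x + (1:ℝ) • y : α → ℝ) ∈ A j := by
        simpa using hyA
      have htm1 : t m ≠ 1 := by
        rw [ht]
        intro h
        rw [div_eq_one_iff_eq (by positivity)] at h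
        linarith [Nat.cast_nonneg (α := ℝ) m]
      exact hxA (affine_line_trick (A j) htm1 hmem h1).2
    -- each p m is in some A i, i ∈ s
    have hchoice : ∀ m, ∃ i, i ∈ s ∧ p m ∈ A i := by
      intro m
      have := hcov (hpC m)
      simp only [Set.mem_iUnion, Finset.cons_eq_insert, Finset.mem_insert] at this
      obtain ⟨i, hi, hmem⟩ := this
      rcases hi with rfl | hi
      · exact absurd hmem (hpnotA m)
      · exact ⟨i, hi, hmem⟩
    choose σ hσs hσmem using hchoice
    have : Finite {i // i ∈ s} := inferInstance
    obtain ⟨⟨i, his⟩, hinf⟩ := Finite.exists_infinite_fiber (fun m => (⟨σ m, hσs m⟩ : {i // i ∈ s}))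
    have hinf' : ((fun m => (⟨σ m, hσs m⟩ : {i // i ∈ s})) ⁻¹' {⟨i, his⟩}).Infinite :=
      Set.infinite_coe_iff.1 hinf
    obtain ⟨m1, hm1, m2, hm2, hm12⟩ := hinf'.nontrivial
    have hσ1 : σ m1 = i := congrArg Subtype.val hm1
    have hσ2 : σ m2 = i := congrArg Subtype.val hm2
    have hp1 : p m1 ∈ A i := hσ1 ▸ hσmem m1
    have hp2 : p m2 ∈ A i := hσ2 ▸ hσmem m2
    have hyAi : y ∈ A i := (affine_line_trick (A i) (fun h => hm12 (htinj h)) hp1 hp2).1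
    exact absurd (Set.mem_iUnion₂.2 ⟨i, his, hyAi⟩) hyL




-- sequence helper lemmas
lemma tseq_mem (m : ℕ) : 0 ≤ (1/(m+2) : ℝ) ∧ (1/(m+2) : ℝ) ≤ 1 := by
  constructor
  · positivity
  · rw [div_le_one (by positivity)]
    linarith [Nat.cast_nonneg (α := ℝ) m]

lemma tseq_inj : Function.Injective (fun m : ℕ => (1/(m+2) : ℝ)) := by
  intro m1 m2 h
  simp only [one_div] at h
  have := inv_injective h
  have h2 : (m1:ℝ) = m2 := by linarith [this]
  exact_mod_cast h2

lemma tseq_tendsto : Filter.Tendsto (fun m : ℕ => (1/(m+2) : ℝ)) Filter.atTop (nhds 0) := by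
  have hinner : Filter.Tendsto (fun m : ℕ => ((m : ℝ) + 2)) Filter.atTop Filter.atTop :=
    Filter.tendsto_atTop_add_const_right _ 2 tendsto_natCast_atTop_atTop
  have h2 := tendsto_inv_atTop_zero.comp hinner
  refine h2.congr fun n => ?_
  simp [Function.comp, one_div]

end Stmt14Aux

open Stmt14Aux

theorem stmt_14 {α : Type*} [Fintype α] (M : Matroid α) (hbin : M.IsBinary)
    (X : Set α) (hX : M.IsBase X)
    (hdeg : {Y | M.IsBase Y ∧ (symmDiff X Y).ncard = 2}.ncard =
      Module.finrank ℝ (affineSpan ℝ (basePolytope M)).direction) :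
    ¬ ∃ (t : ℕ) (N : Fin t → Matroid α), 2 ≤ t ∧
      (∀ i, {B | (N i).IsBase B} ⊂ {B | M.IsBase B}) ∧
      basePolytope M = ⋃ i, basePolytope (N i) ∧
      ∀ i j, i ≠ j →
        IsExtreme ℝ (basePolytope (N i)) (basePolytope (N i) ∩ basePolytope (N j)) := by
  classical
  rintro ⟨t, N, htt, hssub, hcover, -⟩
  set d := Module.finrank ℝ (affineSpan ℝ (basePolytope M)).direction with hd
  have hBsub : ∀ i, ∀ B, (N i).IsBase B → M.IsBase B := fun i B hB => (hssub i).1 hB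
  have hPi_eq : ∀ i, basePolytope (N i) = convexHull ℝ (bvec '' {B | (N i).IsBase B}) :=
    fun i => rfl
  have hPM_eq : basePolytope M = convexHull ℝ (bvec '' {B | M.IsBase B}) := rfl
  have hPi_subPM : ∀ i, basePolytope (N i) ⊆ basePolytope M := by
    intro i
    rw [hcover]
    exact Set.subset_iUnion (fun j => basePolytope (N j)) i
  have hvXP : bvec X ∈ basePolytope M :=
    subset_convexHull ℝ _ (Set.mem_image_of_mem _ hX)
  set small : Fin t → Prop :=
    fun i => Module.finrank ℝ (affineSpan ℝ (basePolytope (N i))).direction < d with hsmall_def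
  -- a point of P(M) avoiding all low-dimensional affine spans
  obtain ⟨c, hcP, hcns⟩ : ∃ c ∈ basePolytope M, ∀ i, small i →
      c ∉ affineSpan ℝ (basePolytope (N i)) := by
    by_contra hcon
    push_neg at hcon
    have hcov2 : basePolytope M ⊆ ⋃ i ∈ Finset.univ.filter small,
        ((affineSpan ℝ (basePolytope (N i)) : AffineSubspace ℝ (α → ℝ)) : Set (α → ℝ)) := by
      intro q hq
      obtain ⟨i, hsm, hmem⟩ := hcon q hq
      exact Set.mem_iUnion₂.2 ⟨i, by simp [hsm], hmem⟩
    obtain ⟨i, hi, hsub⟩ := convex_cover _ _ (convex_convexHull ℝ _) ⟨_, hvXP⟩ hcov2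
    have hle : d ≤ Module.finrank ℝ (affineSpan ℝ (basePolytope (N i))).direction :=
      Submodule.finrank_mono (AffineSubspace.direction_le (affineSpan_le.2 hsub))
    have hsm : small i := by simpa using hi
    rw [hsmall_def] at hsm
    omega
  -- the approximating sequence towards the vertex of X
  set p : ℕ → (α → ℝ) :=
    fun m => (1 - (1/(m+2) : ℝ)) • bvec X + (1/(m+2) : ℝ) • c with hp
  have hpP : ∀ m, p m ∈ basePolytope M := by
    intro m
    exact (convex_convexHull ℝ _) hvXP hcP (by linarith [(tseq_mem m).2]) (tseq_mem m).1
      (by ring)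
  have hchoice : ∀ m, ∃ i, p m ∈ basePolytope (N i) := by
    intro m
    have := hpP m
    rw [hcover] at this
    exact Set.mem_iUnion.1 this
  choose σ hσ using hchoice
  obtain ⟨i, hinf⟩ := Finite.exists_infinite_fiber σ
  have hinf' : (σ ⁻¹' {i}).Infinite := Set.infinite_coe_iff.1 hinf
  -- the piece i is full-dimensional
  have hnot_small : ¬ small i := by
    intro hsm
    obtain ⟨m1, hm1, m2, hm2, hm12⟩ := hinf'.nontrivial
    have hA1 : p m1 ∈ affineSpan ℝ (basePolytope (N i)) := by
      have := hσ m1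
      rw [show σ m1 = i from hm1] at this
      exact subset_affineSpan ℝ _ this
    have hA2 : p m2 ∈ affineSpan ℝ (basePolytope (N i)) := by
      have := hσ m2
      rw [show σ m2 = i from hm2] at this
      exact subset_affineSpan ℝ _ this
    have hsu : (1/(m1+2) : ℝ) ≠ (1/(m2+2) : ℝ) := fun h => hm12 (tseq_inj h)
    exact hcns i hsm (affine_line_trick _ hsu hA1 hA2).1
  -- the vertex of X belongs to the piece i
  have hclosed : IsClosed (basePolytope (N i)) :=
    ((Set.toFinite _).isCompact_convexHull (𝕜 := ℝ)).isClosed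
  have hlim : Filter.Tendsto p Filter.atTop (nhds (bvec X)) := by
    have h1 : Filter.Tendsto (fun m : ℕ => (1 - (1/(m+2) : ℝ))) Filter.atTop (nhds (1 - 0)) :=
      Filter.Tendsto.sub tendsto_const_nhds tseq_tendsto
    have h2 := (h1.smul_const (bvec X)).add (tseq_tendsto.smul_const c)
    have h3 : ((1:ℝ) - 0) • bvec X + (0:ℝ) • c = bvec X := by simp
    rw [h3] at h2
    rw [hp]
    exact h2
  have hfreq : ∃ᶠ m in Filter.atTop, p m ∈ basePolytope (N i) := by
    rw [Filter.frequently_atTop]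
    intro m0
    obtain ⟨m, hmS, hm0⟩ : ∃ m ∈ σ ⁻¹' {i}, m0 ≤ m := by
      by_contra hno
      push_neg at hno
      exact hinf' ((Set.finite_Iio m0).subset fun m hm => hno m hm)
    refine ⟨m, hm0, ?_⟩
    have := hσ m
    rwa [show σ m = i from hmS] at this
  have hvXi : bvec X ∈ basePolytope (N i) := by
    have := mem_closure_of_frequently_of_tendsto hfreq hlim
    rwa [hclosed.closure_eq] at this
  have hXi : (N i).IsBase X := vertex_force (fun B hB => hBsub i B hB) hX hvXi
  -- the span of edge directions at X has full rank d
  set nbrsI : Set (Set α) := {Y | (N i).IsBase Y ∧ (symmDiff X Y).ncard = 2} with hnbrsI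
  set E : Set (α → ℝ) := (fun Y => bvec Y - bvec X) '' nbrsI with hE
  have hdir : (affineSpan ℝ (basePolytope (N i))).direction =
      vectorSpan ℝ (bvec '' {B | (N i).IsBase B}) := by
    rw [hPi_eq, affineSpan_convexHull, direction_affineSpan]
  have hvs : vectorSpan ℝ (bvec '' {B | (N i).IsBase B}) =
      Submodule.span ℝ ((fun v => v -ᵥ bvec X) '' (bvec '' {B | (N i).IsBase B})) :=
    vectorSpan_eq_span_vsub_set_right ℝ (Set.mem_image_of_mem _ hXi)
  have hspanle : Submodule.span ℝ ((fun v => v -ᵥ bvec X) '' (bvec '' {B | (N i).IsBase B})) ≤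
      Submodule.span ℝ E := by
    rw [Submodule.span_le]
    rintro v ⟨-, ⟨Z, hZ, rfl⟩, rfl⟩
    exact diff_mem_edge_span hXi Z hZ
  have hd_le : d ≤ Module.finrank ℝ (Submodule.span ℝ E) := by
    have h1 : d ≤ Module.finrank ℝ (affineSpan ℝ (basePolytope (N i))).direction :=
      Nat.le_of_not_lt hnot_small
    refine h1.trans (Submodule.finrank_mono ?_)
    rw [hdir, hvs]
    exact hspanle
  have hEcount : Module.finrank ℝ (Submodule.span ℝ E) ≤ nbrsI.ncard := by
    haveI : Fintype ↑E := (Set.toFinite E).fintype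
    have h1 := finrank_span_le_card (R := ℝ) E
    have h2 : E.toFinset.card = E.ncard := (Set.ncard_eq_toFinset_card' E).symm
    have h3 : E.ncard ≤ nbrsI.ncard := by
      rw [hE]
      exact Set.ncard_image_le (Set.toFinite _)
    omega
  -- all neighbours of X in M are bases of N i
  set nbrsM : Set (Set α) := {Y | M.IsBase Y ∧ (symmDiff X Y).ncard = 2} with hnbrsM
  have hsubnbr : nbrsI ⊆ nbrsM := fun Y hY => ⟨hBsub i Y hY.1, hY.2⟩
  have heqnbr : nbrsI = nbrsM := by
    refine Set.eq_of_subset_of_ncard_le hsubnbr ?_ (Set.toFinite _)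
    have : nbrsM.ncard = d := hdeg
    omega
  -- binary matroid rigidity
  have hall : ∀ Z, M.IsBase Z → (N i).IsBase Z := by
    refine binary_closure hbin hX (hBsub i) hXi ?_
    intro Y hY h2
    have : Y ∈ nbrsM := ⟨hY, h2⟩
    rw [← heqnbr] at this
    exact this.1
  obtain ⟨B0, hB0M, hB0N⟩ := Set.exists_of_ssubset (hssub i)
  exact hB0N (hall B0 hB0M)
end

section
/- Let P be a polytope with vertex set X and H a hyperplane meeting P but not supporting it, splitting P into P1 = P ∩ H⁻ and P2 = P ∩ H⁺, and partitioning X into X1 = X ∩ H⁻ and X2 = X ∩ H⁺ with W = X1 ∩ X2 = X ∩ H. Then every edge [u,v] of P has both endpoints in X1 or both in X2 if and only if P ∩ H = conv(W). -/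
open Set Finset

variable {E : Type*} [NormedAddCommGroup E] [NormedSpace ℝ E]

lemma my_extreme_restrict {A B : Set E} (hAB : A ⊆ B) {z : E} (hzA : z ∈ A)
    (hz : z ∈ B.extremePoints ℝ) : z ∈ A.extremePoints ℝ :=
  ⟨hzA, fun x₁ h₁ x₂ h₂ hseg => hz.2 (hAB h₁) (hAB h₂) hseg⟩

lemma my_mid {S : Set E} {z d : E} (hz : z ∈ S.extremePoints ℝ)
    (h1 : z + d ∈ S) (h2 : z - d ∈ S) : d = 0 := by
  rcases eq_or_ne (z + d) (z - d) with h | h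
  · linear_combination (norm := module) ((1:ℝ)/2) • h
  · have hseg : z ∈ openSegment ℝ (z + d) (z - d) :=
      ⟨1/2, 1/2, by norm_num, by norm_num, by norm_num, by module⟩
    have h0 := (hz.2 h1 h2 hseg)
    linear_combination (norm := module) h0

lemma my_line {P : Set E} {u v x : E} (hu : u ∈ P.extremePoints ℝ) (hv : v ∈ P.extremePoints ℝ)
    (huv : u ≠ v) (hx : x ∈ P) {τ : ℝ} (hxeq : x = u + τ • (v - u)) :
    0 ≤ τ ∧ τ ≤ 1 := by
  constructor
  · by_contra h
    push_neg at h
    have hτ : (0:ℝ) < 1 - τ := by linarith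
    have hseg : u ∈ openSegment ℝ x v := by
      refine ⟨1/(1-τ), -τ/(1-τ), by positivity, div_pos (by linarith) hτ, by field_simp; ring, ?_⟩
      rw [hxeq]; match_scalars <;> field_simp <;> ring
    have := hu.2 hv.1 hx (by rwa [openSegment_symm] at hseg)
    exact huv this.symm
  · by_contra h
    push_neg at h
    have hτ : (0:ℝ) < τ := by linarith
    have hseg : v ∈ openSegment ℝ u x := by
      refine ⟨(τ-1)/τ, 1/τ, div_pos (by linarith) hτ, by positivity, by field_simp; ring, ?_⟩
      rw [hxeq]; match_scalars <;> field_simp <;> ring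
    have := hv.2 hu.1 hx hseg
    exact huv this

lemma my_peel {P A : Set E} (hPconv : Convex ℝ P) (hPA : IsExtreme ℝ P A)
    (s : Finset E) (hsP : ↑s ⊆ P) {z : E} (hzA : z ∈ A)
    (hzs : z ∈ convexHull ℝ (↑s : Set E)) : ∃ w ∈ s, w ∈ A := by
  classical
  rw [Finset.convexHull_eq] at hzs
  obtain ⟨w, hw0, hw1, hwz⟩ := hzs
  rw [Finset.centerMass_eq_of_sum_1 _ _ hw1] at hwz
  simp only [id_eq] at hwz
  obtain ⟨i₀, hi₀s, hi₀⟩ : ∃ i ∈ s, 0 < w i := by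
    by_contra h
    push_neg at h
    have : ∑ y ∈ s, w y = 0 :=
      Finset.sum_eq_zero fun i hi => le_antisymm (h i hi) (hw0 i hi)
    rw [hw1] at this; norm_num at this
  have hsum_erase : ∑ y ∈ s.erase i₀, w y = 1 - w i₀ := by
    have := Finset.add_sum_erase s w hi₀s
    rw [hw1] at this; linarith
  have herase_nonneg : 0 ≤ 1 - w i₀ := by
    rw [← hsum_erase]; exact Finset.sum_nonneg fun i hi => hw0 i (Finset.mem_of_mem_erase hi)
  rcases eq_or_lt_of_le herase_nonneg with heq | hlt
  · have hz0 : ∀ i ∈ s.erase i₀, w i = 0 := by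
      exact (Finset.sum_eq_zero_iff_of_nonneg
        (fun j hj => hw0 j (Finset.mem_of_mem_erase hj))).mp (by linarith)
    have hz : z = i₀ := by
      rw [← hwz, ← Finset.add_sum_erase s (fun y => w y • y) hi₀s,
        Finset.sum_eq_zero (fun i hi => by rw [hz0 i hi, zero_smul]), add_zero]
      have hβ1 : w i₀ = 1 := by linarith
      rw [hβ1, one_smul]
    exact ⟨i₀, hi₀s, hz ▸ hzA⟩
  · set q := (1 - w i₀)⁻¹ • ∑ y ∈ s.erase i₀, w y • y with hq
    have hqP : q ∈ P := by
      have h1 : (s.erase i₀).centerMass w id ∈ convexHull ℝ P := by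
        apply Finset.centerMass_mem_convexHull
        · exact fun i hi => hw0 i (Finset.mem_of_mem_erase hi)
        · rw [hsum_erase]; linarith
        · exact fun i hi => hsP (Finset.mem_of_mem_erase hi)
      have h2 : (s.erase i₀).centerMass w id = q := by
        simp only [Finset.centerMass, hsum_erase, id_eq, hq]
      rwa [h2, hPconv.convexHull_eq] at h1
    have hzseg : z ∈ openSegment ℝ i₀ q := by
      refine ⟨w i₀, 1 - w i₀, hi₀, by linarith, by ring, ?_⟩
      rw [hq, smul_inv_smul₀ (by linarith : (1:ℝ) - w i₀ ≠ 0), ← hwz,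
        ← Finset.add_sum_erase s (fun y => w y • y) hi₀s]
    exact ⟨i₀, hi₀s, (hPA.2 (hsP hi₀s) hqP hzA hzseg)⟩

lemma my_indep_subset {s t : Finset E} (hst : s ⊆ t)
    (h : AffineIndependent ℝ ((↑) : ↥t → E)) : AffineIndependent ℝ ((↑) : ↥s → E) := by
  have h2 := h.comp_embedding
    (⟨fun x => ⟨x.1, hst x.2⟩, fun a b hab => Subtype.ext (by have := congrArg Subtype.val hab; exact this)⟩ :
      ↥s ↪ ↥t)
  exact h2

lemma my_indep_zero (t : Finset E) (hind : AffineIndependent ℝ ((↑) : ↥t → E)) (g : E → ℝ)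
    (h0 : ∑ i ∈ t, g i = 0) (hv : ∑ i ∈ t, g i • i = 0) : ∀ i ∈ t, g i = 0 := by
  rw [affineIndependent_iff] at hind
  have key := hind Finset.univ (fun x => g ↑x)
    (by rw [Finset.univ_eq_attach, Finset.sum_attach t g]; exact h0)
    (by rw [Finset.univ_eq_attach, Finset.sum_attach t (fun i => g i • i)]; exact hv)
  intro i hi
  exact key ⟨i, hi⟩ (Finset.mem_univ _)

lemma my_no_pair {P : Set E} (hPconv : Convex ℝ P) (f : E →ₗ[ℝ] ℝ) (c : ℝ) {z : E}
    (hz : z ∈ (P ∩ {x | f x = c}).extremePoints ℝ)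
    (t : Finset E) (htP : ↑t ⊆ P) (hind : AffineIndependent ℝ ((↑) : ↥t → E))
    (w : E → ℝ) (hw0 : ∀ i ∈ t, 0 < w i) (hw1 : ∑ i ∈ t, w i = 1)
    (hwz : ∑ i ∈ t, w i • i = z)
    {u1 u2 v : E} (hu1 : u1 ∈ t) (hu2 : u2 ∈ t) (hv : v ∈ t)
    (h12 : u1 ≠ u2) (h1v : f u1 ≠ f v) (h2v : f u2 ≠ f v) : False := by
  classical
  have hu1v : u1 ≠ v := fun h => h1v (by rw [h])
  have hu2v : u2 ≠ v := fun h => h2v (by rw [h])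
  set δ : E → ℝ := fun x => (if x = u1 then f u2 - f v else 0) +
      (if x = u2 then f v - f u1 else 0) + (if x = v then f u1 - f u2 else 0) with hδ
  have hδu1 : δ u1 = f u2 - f v := by simp [hδ, h12, hu1v]
  have hδsum : ∑ i ∈ t, δ i = 0 := by
    simp only [hδ, Finset.sum_add_distrib, Finset.sum_ite_eq', hu1, hu2, hv, if_pos]
    ring
  set d : E := (f u2 - f v) • u1 + (f v - f u1) • u2 + (f u1 - f u2) • v with hd
  have hδvec : ∑ i ∈ t, δ i • i = d := by
    simp only [hδ, add_smul, ite_smul, zero_smul, Finset.sum_add_distrib,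
      Finset.sum_ite_eq', hu1, hu2, hv, if_pos, hd]
  have hfd : f d = 0 := by
    simp only [hd, map_add, map_smul, smul_eq_mul]
    ring
  have hd0 : d ≠ 0 := by
    intro h
    have := my_indep_zero t hind δ hδsum (by rw [hδvec, h]) u1 hu1
    rw [hδu1] at this
    exact h2v (by linarith)
  set m := min (w u1) (min (w u2) (w v)) with hm
  have hmpos : 0 < m := lt_min (hw0 _ hu1) (lt_min (hw0 _ hu2) (hw0 _ hv))
  set M := |f u2 - f v| + |f v - f u1| + |f u1 - f u2| + 1 with hM
  have hMpos : (0:ℝ) < M := by positivity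
  set ε := m / M with hε
  have hεpos : 0 < ε := div_pos hmpos hMpos
  have h21 : u2 ≠ u1 := Ne.symm h12
  have hvu1 : v ≠ u1 := Ne.symm hu1v
  have hvu2 : v ≠ u2 := Ne.symm hu2v
  have hδu2 : δ u2 = f v - f u1 := by simp [hδ, h21, hu2v]
  have hδv : δ v = f u1 - f u2 := by simp [hδ, hvu1, hvu2]
  have hbound : ∀ i ∈ t, ε * |δ i| ≤ w i := by
    intro i hi
    have hεM : ε * M = m := by rw [hε]; field_simp
    by_cases e1 : i = u1
    · rw [e1]
      have h1 : |δ u1| ≤ M := by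
        rw [hδu1, hM]
        have := abs_nonneg (f v - f u1); have := abs_nonneg (f u1 - f u2); linarith
      calc ε * |δ u1| ≤ ε * M := mul_le_mul_of_nonneg_left h1 hεpos.le
        _ = m := hεM
        _ ≤ w u1 := min_le_left _ _
    · by_cases e2 : i = u2
      · rw [e2]
        have h1 : |δ u2| ≤ M := by
          rw [hδu2, hM]
          have := abs_nonneg (f u2 - f v); have := abs_nonneg (f u1 - f u2); linarith
        calc ε * |δ u2| ≤ ε * M := mul_le_mul_of_nonneg_left h1 hεpos.le
          _ = m := hεM
          _ ≤ w u2 := le_trans (min_le_right _ _) (min_le_left _ _)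
      · by_cases e3 : i = v
        · rw [e3]
          have h1 : |δ v| ≤ M := by
            rw [hδv, hM]
            have := abs_nonneg (f u2 - f v); have := abs_nonneg (f v - f u1); linarith
          calc ε * |δ v| ≤ ε * M := mul_le_mul_of_nonneg_left h1 hεpos.le
            _ = m := hεM
            _ ≤ w v := le_trans (min_le_right _ _) (min_le_right _ _)
        · have : δ i = 0 := by simp [hδ, e1, e2, e3]
          rw [this, abs_zero, mul_zero]
          exact (hw0 i hi).le
  have hmem : ∀ σ : ℝ, σ = 1 ∨ σ = -1 → z + (σ * ε) • d ∈ P ∩ {x | f x = c} := by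
    intro σ hσ
    have hσ1 : |σ| = 1 := by rcases hσ with rfl | rfl <;> norm_num
    have hsum : ∑ i ∈ t, (w i + (σ * ε) * δ i) = 1 := by
      rw [Finset.sum_add_distrib, hw1, ← Finset.mul_sum, hδsum]; ring
    have hnn : ∀ i ∈ t, 0 ≤ w i + (σ * ε) * δ i := by
      intro i hi
      have habs : |(σ * ε) * δ i| = ε * |δ i| := by
        rw [abs_mul, abs_mul, hσ1, abs_of_pos hεpos]; ring
      have hb : |(σ * ε) * δ i| ≤ w i := le_trans (le_of_eq habs) (hbound i hi)
      linarith [neg_abs_le ((σ * ε) * δ i)]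
    have hvec : ∑ i ∈ t, (w i + (σ * ε) * δ i) • i = z + (σ * ε) • d := by
      have hswap : ∑ i ∈ t, ((σ * ε) * δ i) • i = (σ * ε) • d := by
        rw [← hδvec, Finset.smul_sum]
        exact Finset.sum_congr rfl fun i _ => (smul_smul (σ * ε) (δ i) i).symm
      simp only [add_smul, Finset.sum_add_distrib, hwz, hswap]
    constructor
    · have : t.centerMass (fun i => w i + (σ * ε) * δ i) id ∈ convexHull ℝ P :=
        Finset.centerMass_mem_convexHull t hnn (by rw [hsum]; norm_num) (fun i hi => htP hi)
      rw [Finset.centerMass_eq_of_sum_1 _ _ hsum] at this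
      simp only [id_eq] at this
      rw [hvec] at this
      rwa [hPconv.convexHull_eq] at this
    · have hzc : f z = c := hz.1.2
      simp only [Set.mem_setOf_eq, map_add, map_smul, smul_eq_mul, hfd, hzc, mul_zero, add_zero]
  have h1 := hmem 1 (Or.inl rfl)
  have h2 := hmem (-1) (Or.inr rfl)
  rw [one_mul] at h1
  rw [show ((-1:ℝ)) * ε = -ε by ring, neg_smul, ← sub_eq_add_neg] at h2
  have h1' := h1
  have h2' := h2
  have := my_mid hz h1' h2'
  rcases smul_eq_zero.mp this with h | h
  · exact absurd h (ne_of_gt hεpos)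
  · exact hd0 h

lemma my_key {P : Set E} (hPconv : Convex ℝ P) (f : E →ₗ[ℝ] ℝ) (c : ℝ) {z : E}
    (hz : z ∈ (P ∩ {x | f x = c}).extremePoints ℝ)
    (t : Finset E) (htP : ↑t ⊆ P) (hind : AffineIndependent ℝ ((↑) : ↥t → E))
    (hconv : z ∈ convexHull ℝ (↑t : Set E)) :
    z ∈ t ∨ ∃ u ∈ t, ∃ v ∈ t, z ∈ openSegment ℝ u v ∧ f u < c ∧ c < f v := by
  classical
  have hzc : f z = c := hz.1.2
  rw [Finset.convexHull_eq] at hconv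
  obtain ⟨w, hw0, hw1, hwz⟩ := hconv
  rw [Finset.centerMass_eq_of_sum_1 _ _ hw1] at hwz
  simp only [id_eq] at hwz
  set t' := t.filter (fun i => 0 < w i) with ht'
  have ht'sub : t' ⊆ t := Finset.filter_subset _ _
  have hw0' : ∀ i ∈ t', 0 < w i := fun i hi => (Finset.mem_filter.mp hi).2
  have hzero : ∀ i ∈ t, i ∉ t' → w i = 0 := fun i hi hni => by
    by_contra h
    exact hni (Finset.mem_filter.mpr ⟨hi, lt_of_le_of_ne (hw0 i hi) (Ne.symm h)⟩)
  have hw1' : ∑ i ∈ t', w i = 1 := (Finset.sum_subset ht'sub hzero).trans hw1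
  have hwz' : ∑ i ∈ t', w i • i = z := by
    rw [Finset.sum_subset ht'sub (fun i hi hni => by rw [hzero i hi hni, zero_smul])]
    exact hwz
  have hind' := my_indep_subset ht'sub hind
  have ht'P : (↑t' : Set E) ⊆ P := fun x hx => htP (ht'sub hx)
  have ht'ne : t'.Nonempty := by
    rcases Finset.eq_empty_or_nonempty t' with h | h
    · rw [h] at hw1'; simp at hw1'
    · exact h
  by_cases hall : ∀ i ∈ t', f i = c
  · left
    have hsubslice : (↑t' : Set E) ⊆ P ∩ {x | f x = c} := fun i hi =>
      ⟨ht'P hi, hall i hi⟩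
    have hzconv : z ∈ convexHull ℝ (↑t' : Set E) := by
      have h1 := Finset.centerMass_mem_convexHull t' (fun i hi => (hw0' i hi).le)
        (by rw [hw1']; norm_num) (fun i hi => Finset.mem_coe.mpr hi)
      simp only [Finset.centerMass_eq_of_sum_1 _ _ hw1'] at h1
      rwa [hwz'] at h1
    have hconvsub : convexHull ℝ (↑t' : Set E) ⊆ P ∩ {x | f x = c} :=
      convexHull_min hsubslice (hPconv.inter (convex_hyperplane f.isLinear c))
    have hz' := my_extreme_restrict hconvsub hzconv hz
    have hmem := extremePoints_convexHull_subset hz'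
    exact ht'sub (Finset.mem_coe.mp hmem)
  · push_neg at hall
    by_cases hsome : ∃ i ∈ t', f i = c
    · exfalso
      set t0 := t'.filter (fun i => f i = c) with ht0
      set t1 := t'.filter (fun i => ¬ f i = c) with ht1
      obtain ⟨i₀, hi₀t, hi₀c⟩ := hsome
      obtain ⟨j₀, hj₀t, hj₀c⟩ := hall
      have hi₀ : i₀ ∈ t0 := Finset.mem_filter.mpr ⟨hi₀t, hi₀c⟩
      have hj₀ : j₀ ∈ t1 := Finset.mem_filter.mpr ⟨hj₀t, hj₀c⟩
      set β := ∑ i ∈ t0, w i with hβ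
      set γ := ∑ i ∈ t1, w i with hγ
      have hβpos : 0 < β :=
        Finset.sum_pos (fun i hi => hw0' i (Finset.filter_subset _ _ hi)) ⟨i₀, hi₀⟩
      have hγpos : 0 < γ :=
        Finset.sum_pos (fun i hi => hw0' i (Finset.filter_subset _ _ hi)) ⟨j₀, hj₀⟩
      have hβγ : β + γ = 1 := by
        rw [hβ, hγ, Finset.sum_filter_add_sum_filter_not t' _ w]
        exact hw1'
      set wb := β⁻¹ • ∑ i ∈ t0, w i • i with hwb
      set q := γ⁻¹ • ∑ i ∈ t1, w i • i with hq
      have hwbP : wb ∈ P := by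
        have h1 := Finset.centerMass_mem_convexHull t0
          (fun i hi => (hw0' i (Finset.filter_subset _ _ hi)).le)
          (by rw [← hβ]; exact hβpos)
          (fun i hi => ht'P (Finset.filter_subset _ _ hi))
        rw [show (t0.centerMass w fun i => i) = wb by simp [Finset.centerMass, ← hβ, hwb]] at h1
        rwa [hPconv.convexHull_eq] at h1
      have hqP : q ∈ P := by
        have h1 := Finset.centerMass_mem_convexHull t1
          (fun i hi => (hw0' i (Finset.filter_subset _ _ hi)).le)
          (by rw [← hγ]; exact hγpos)
          (fun i hi => ht'P (Finset.filter_subset _ _ hi))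
        rw [show (t1.centerMass w fun i => i) = q by simp [Finset.centerMass, ← hγ, hq]] at h1
        rwa [hPconv.convexHull_eq] at h1
      have hsum0 : ∑ i ∈ t0, w i * f i = β * c := by
        rw [hβ, Finset.sum_mul]
        exact Finset.sum_congr rfl fun i hi => by
          rw [(Finset.mem_filter.mp hi).2]
      have hfwb : f wb = c := by
        rw [hwb, map_smul, map_sum]
        simp only [map_smul, smul_eq_mul]
        rw [hsum0]
        field_simp
      have hsplit : ∑ i ∈ t0, w i * f i + ∑ i ∈ t1, w i * f i = c := by
        rw [Finset.sum_filter_add_sum_filter_not t' _ (fun i => w i * f i)]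
        have : f z = ∑ i ∈ t', w i * f i := by
          rw [← hwz', map_sum]; simp only [map_smul, smul_eq_mul]
        rw [← this, hzc]
      have hsum1 : ∑ i ∈ t1, w i * f i = γ * c := by
        have h2 : β * c + ∑ i ∈ t1, w i * f i = c := by rw [← hsum0]; exact hsplit
        have hγc : γ * c = c - β * c := by
          rw [show γ = 1 - β by linarith]; ring
        linarith
      have hfq : f q = c := by
        rw [hq, map_smul, map_sum]
        simp only [map_smul, smul_eq_mul]
        rw [hsum1]
        field_simp
      have hseg : z ∈ openSegment ℝ wb q := by
        refine ⟨β, γ, hβpos, hγpos, hβγ, ?_⟩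
        rw [hwb, hq, smul_inv_smul₀ (ne_of_gt hβpos), smul_inv_smul₀ (ne_of_gt hγpos),
          Finset.sum_filter_add_sum_filter_not t' _ (fun i => w i • i)]
        exact hwz'
      have heq := hz.2 ⟨hwbP, hfwb⟩ ⟨hqP, hfq⟩ hseg
      have heq2 := hz.2 ⟨hqP, hfq⟩ ⟨hwbP, hfwb⟩ (by rwa [openSegment_symm] at hseg)
      -- uniqueness contradiction
      set g : E → ℝ := fun i => if f i = c then w i * β⁻¹ else -(w i * γ⁻¹) with hg
      have hgsum : ∑ i ∈ t', g i = 0 := by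
        rw [← Finset.sum_filter_add_sum_filter_not t' (fun i => f i = c) g]
        have h0 : ∑ i ∈ t0, g i = 1 := by
          have he : ∀ i ∈ t0, g i = w i * β⁻¹ := fun i hi => by
            rw [hg]; exact if_pos (Finset.mem_filter.mp hi).2
          rw [Finset.sum_congr rfl he, ← Finset.sum_mul, ← hβ,
            mul_inv_cancel₀ (ne_of_gt hβpos)]
        have h1 : ∑ i ∈ t1, g i = -1 := by
          have he : ∀ i ∈ t1, g i = -(w i * γ⁻¹) := fun i hi => by
            rw [hg]; exact if_neg (Finset.mem_filter.mp hi).2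
          rw [Finset.sum_congr rfl he, Finset.sum_neg_distrib, ← Finset.sum_mul, ← hγ,
            mul_inv_cancel₀ (ne_of_gt hγpos)]
        rw [← ht0, ← ht1, h0, h1]; ring
      have hgvec : ∑ i ∈ t', g i • i = 0 := by
        rw [← Finset.sum_filter_add_sum_filter_not t' (fun i => f i = c) (fun i => g i • i)]
        have h0 : ∑ i ∈ t0, g i • i = β⁻¹ • ∑ i ∈ t0, w i • i := by
          rw [Finset.smul_sum]
          refine Finset.sum_congr rfl fun i hi => ?_
          rw [hg]; simp only []
          rw [if_pos (Finset.mem_filter.mp hi).2, smul_smul, mul_comm]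
        have h1 : ∑ i ∈ t1, g i • i = -(γ⁻¹ • ∑ i ∈ t1, w i • i) := by
          rw [Finset.smul_sum, ← Finset.sum_neg_distrib]
          refine Finset.sum_congr rfl fun i hi => ?_
          rw [hg]; simp only []
          rw [if_neg (Finset.mem_filter.mp hi).2, neg_smul, smul_smul, mul_comm]
        rw [← ht0, ← ht1, h0, h1, ← hwb, ← hq, heq, heq2]
        abel
      have hzero' := my_indep_zero t' hind' g hgsum hgvec i₀ hi₀t
      rw [hg] at hzero'; simp only [] at hzero'
      rw [if_pos hi₀c] at hzero'
      exact absurd hzero' (ne_of_gt (mul_pos (hw0' _ hi₀t) (inv_pos.mpr hβpos)))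
    · push_neg at hsome
      set tm := t'.filter (fun i => f i < c) with htm
      set tp := t'.filter (fun i => c < f i) with htp
      have hmem_split : ∀ i ∈ t', i ∈ tm ∨ i ∈ tp := fun i hi => by
        rcases lt_trichotomy (f i) c with h | h | h
        · exact Or.inl (Finset.mem_filter.mpr ⟨hi, h⟩)
        · exact absurd h (hsome i hi)
        · exact Or.inr (Finset.mem_filter.mpr ⟨hi, h⟩)
      have hfz : f z = ∑ i ∈ t', w i * f i := by
        rw [← hwz', map_sum]; simp only [map_smul, smul_eq_mul]
      have hsumc : ∑ i ∈ t', w i * c = c := by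
        rw [← Finset.sum_mul, hw1', one_mul]
      have htmne : tm.Nonempty := by
        rcases Finset.eq_empty_or_nonempty tm with h | h
        · exfalso
          have hgt : ∀ i ∈ t', c < f i := fun i hi => by
            rcases hmem_split i hi with hm | hp
            · rw [h] at hm; exact absurd hm (Finset.notMem_empty i)
            · exact (Finset.mem_filter.mp hp).2
          have hlt : ∑ i ∈ t', w i * c < ∑ i ∈ t', w i * f i :=
            Finset.sum_lt_sum_of_nonempty ht'ne fun i hi =>
              mul_lt_mul_of_pos_left (hgt i hi) (hw0' i hi)
          rw [hsumc, ← hfz, hzc] at hlt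
          exact lt_irrefl c hlt
        · exact h
      have htpne : tp.Nonempty := by
        rcases Finset.eq_empty_or_nonempty tp with h | h
        · exfalso
          have hgt : ∀ i ∈ t', f i < c := fun i hi => by
            rcases hmem_split i hi with hm | hp
            · exact (Finset.mem_filter.mp hm).2
            · rw [h] at hp; exact absurd hp (Finset.notMem_empty i)
          have hlt : ∑ i ∈ t', w i * f i < ∑ i ∈ t', w i * c :=
            Finset.sum_lt_sum_of_nonempty ht'ne fun i hi =>
              mul_lt_mul_of_pos_left (hgt i hi) (hw0' i hi)
          rw [hsumc, ← hfz, hzc] at hlt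
          exact lt_irrefl c hlt
        · exact h
      obtain ⟨u, hu⟩ := htmne
      obtain ⟨v, hv⟩ := htpne
      have hut' : u ∈ t' := Finset.filter_subset _ _ hu
      have hvt' : v ∈ t' := Finset.filter_subset _ _ hv
      have hufc : f u < c := (Finset.mem_filter.mp hu).2
      have hvfc : c < f v := (Finset.mem_filter.mp hv).2
      by_cases h2m : ∃ u2 ∈ tm, u2 ≠ u
      · exfalso
        obtain ⟨u2, hu2, hu2ne⟩ := h2m
        exact my_no_pair hPconv f c hz t' ht'P hind' w hw0' hw1' hwz'
          (Finset.filter_subset _ _ hu2) hut' hvt' hu2ne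
          (ne_of_lt (lt_trans (Finset.mem_filter.mp hu2).2 hvfc))
          (ne_of_lt (lt_trans hufc hvfc))
      · by_cases h2p : ∃ v2 ∈ tp, v2 ≠ v
        · exfalso
          obtain ⟨v2, hv2, hv2ne⟩ := h2p
          exact my_no_pair hPconv f c hz t' ht'P hind' w hw0' hw1' hwz'
            (Finset.filter_subset _ _ hv2) hvt' hut' hv2ne
            (ne_of_gt (lt_trans hufc (Finset.mem_filter.mp hv2).2))
            (ne_of_gt (lt_trans hufc hvfc))
        · push_neg at h2m h2p
          have huv : u ≠ v := fun h => absurd (h ▸ hufc) (not_lt.mpr hvfc.le)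
          have ht'eq : t' = {u, v} := by
            apply Finset.Subset.antisymm
            · intro i hi
              rcases hmem_split i hi with h | h
              · rw [h2m i h]; exact Finset.mem_insert_self _ _
              · rw [h2p i h]; exact Finset.mem_insert_of_mem (Finset.mem_singleton_self _)
            · intro i hi
              rcases Finset.mem_insert.mp hi with rfl | hi'
              · exact hut'
              · rw [Finset.mem_singleton.mp hi']; exact hvt'
          right
          refine ⟨u, ht'sub hut', v, ht'sub hvt', ?_, hufc, hvfc⟩
          rw [ht'eq] at hw1' hwz'
          rw [Finset.sum_pair huv] at hw1' hwz'
          exact ⟨w u, w v, hw0' u hut', hw0' v hvt', hw1', hwz'⟩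

lemma my_comb4 {P : Set E} (hP : Convex ℝ P) {p1 p2 p3 p4 : E} (h1 : p1 ∈ P) (h2 : p2 ∈ P)
    (h3 : p3 ∈ P) (h4 : p4 ∈ P) {w1 w2 w3 w4 : ℝ} (hw1 : 0 ≤ w1) (hw2 : 0 ≤ w2)
    (hw3 : 0 ≤ w3) (hw4 : 0 ≤ w4) (hsum : w1 + w2 + w3 + w4 = 1) :
    w1 • p1 + w2 • p2 + w3 • p3 + w4 • p4 ∈ P := by
  have := hP.sum_mem (ι := Fin 4) (t := Finset.univ)
    (w := ![w1, w2, w3, w4]) (z := ![p1, p2, p3, p4])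
    (fun i _ => by fin_cases i <;> simpa)
    (by simp [Fin.sum_univ_four]; linarith)
    (fun i _ => by fin_cases i <;> simpa)
  simpa [Fin.sum_univ_four, add_assoc] using this

lemma my_eps {A1 A2 B1 B2 : ℝ} (hA1 : 0 < A1) (hA2 : 0 < A2) (hB1 : 0 ≤ B1) (hB2 : 0 ≤ B2) :
    ∃ ε : ℝ, 0 < ε ∧ ε * B1 ≤ A1 ∧ ε * B2 ≤ A2 := by
  set ε := min (A1/(B1+1)) (A2/(B2+1)) with hε
  have hεpos : 0 < ε := lt_min (by positivity) (by positivity)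
  refine ⟨ε, hεpos, ?_, ?_⟩
  · have h1 : ε ≤ A1/(B1+1) := min_le_left _ _
    have h2 : (0:ℝ) < B1 + 1 := by linarith
    have h3 := (le_div_iff₀ h2).mp h1
    have h4 : ε * (B1+1) = ε * B1 + ε := by ring
    linarith
  · have h1 : ε ≤ A2/(B2+1) := min_le_right _ _
    have h2 : (0:ℝ) < B2 + 1 := by linarith
    have h3 := (le_div_iff₀ h2).mp h1
    have h4 : ε * (B2+1) = ε * B2 + ε := by ring
    linarith

lemma my_edge {P : Set E} (hPconv : Convex ℝ P) (f : E →ₗ[ℝ] ℝ) (c : ℝ) {z u v : E}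
    (hz : z ∈ (P ∩ {x | f x = c}).extremePoints ℝ)
    (hu : u ∈ P.extremePoints ℝ) (hv : v ∈ P.extremePoints ℝ)
    (hzuv : z ∈ openSegment ℝ u v) (hfu : f u < c) (hfv : c < f v) :
    IsExtreme ℝ P (segment ℝ u v) := by
  have huv : u ≠ v := by intro h; rw [h] at hfu; exact absurd hfv (not_lt.mpr hfu.le)
  obtain ⟨s', t', hs', ht', hst', hzeq⟩ := hzuv
  refine ⟨hPconv.segment_subset hu.1 hv.1, ?_⟩
  intro x1 hx1 x2 hx2 y hyseg hyopen
  rcases eq_or_ne x1 x2 with rfl | hx12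
  · rw [openSegment_same, Set.mem_singleton_iff] at hyopen
    rw [hyopen] at hyseg
    exact hyseg
  rw [← insert_endpoints_openSegment] at hyseg
  rcases Set.mem_insert_iff.mp hyseg with hyu | hyseg2
  · rw [hyu] at hyopen
    have h := hu.2 hx1 hx2 hyopen
    rw [h]; exact left_mem_segment ℝ u v
  rcases Set.mem_insert_iff.mp hyseg2 with hyv | hyseg3
  · rw [hyv] at hyopen
    have h := hv.2 hx1 hx2 hyopen
    rw [h]; exact right_mem_segment ℝ u v
  obtain ⟨p, q', hp, hq', hpq, hyeq⟩ := hyseg3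
  obtain ⟨a, b, ha, hb, hab, hxeq⟩ := hyopen
  have hpe : p = 1 - q' := by linarith
  have hae : a = 1 - b := by linarith
  subst hpe hae
  have hfe1 : 0 < f (v - u) := by rw [map_sub]; linarith
  by_cases hcol : ∃ μ : ℝ, x2 - x1 = μ • (v - u)
  · obtain ⟨μ, hμ⟩ := hcol
    · have hx1eq : x1 = u + (q' - b*μ) • (v - u) := by
        linear_combination (norm := module) hxeq - (b:ℝ) • hμ - hyeq
      obtain ⟨h0, h1⟩ := my_line hu hv huv hx1 hx1eq
      rw [segment_eq_image']
      exact ⟨q' - b*μ, ⟨h0, h1⟩, hx1eq.symm⟩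
  · exfalso
    push_neg at hcol
    set d := f (v - u) • (x2 - x1) - f (x2 - x1) • (v - u) with hd
    have hfd : f d = 0 := by
      rw [hd]; simp only [map_sub, map_smul, smul_eq_mul]; ring
    have hd0 : d ≠ 0 := by
      intro h
      apply hcol ((f (v-u))⁻¹ * f (x2 - x1))
      have h2 : f (v - u) • (x2 - x1) = f (x2 - x1) • (v - u) := by
        rw [← sub_eq_zero]; rw [hd] at h; exact h
      calc x2 - x1 = (f (v-u))⁻¹ • (f (v-u) • (x2 - x1)) :=
            (inv_smul_smul₀ (ne_of_gt hfe1) _).symm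
        _ = (f (v-u))⁻¹ • (f (x2-x1) • (v-u)) := by rw [h2]
        _ = ((f (v-u))⁻¹ * f (x2-x1)) • (v-u) := smul_smul _ _ _
    set γ := min s' t' / 2 with hγdef
    have hγpos : 0 < γ := div_pos (lt_min hs' ht') (by norm_num)
    have hγs : γ < s' := by
      have := min_le_left s' t'; rw [hγdef]; linarith
    have hγt : γ < t' := by
      have := min_le_right s' t'; rw [hγdef]; linarith
    have hq1 : q' < 1 := by linarith
    have hb1 : b < 1 := by linarith
    set cu := s' - γ * (1 - q') with hcu
    set cv := t' - γ * q' with hcv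
    have hcupos : 0 < cu := by
      rw [hcu]; nlinarith
    have hcvpos : 0 < cv := by
      rw [hcv]; nlinarith
    have hsumw : γ + cu + cv = 1 := by rw [hcu, hcv]; ring_nf; linarith
    obtain ⟨ε, hεpos, hεb1, hεb2⟩ := my_eps (mul_pos hγpos (lt_min (by linarith : (0:ℝ) < 1 - b) hb))
      (lt_min hcupos hcvpos) (abs_nonneg (f (v-u))) (abs_nonneg (f (x2-x1)))
    have hmem : ∀ σ : ℝ, |σ| = 1 → z + (σ * ε) • d ∈ P ∩ {x | f x = c} := by
      intro σ hσ
      set θ := σ * ε * f (v-u) / γ with hθdef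
      have hθabs : |θ| ≤ min (1-b) b := by
        rw [hθdef, abs_div, abs_of_pos hγpos, abs_mul, abs_mul, hσ, one_mul,
          abs_of_pos hεpos, div_le_iff₀ hγpos]
        calc ε * |f (v - u)| ≤ γ * min (1-b) b := hεb1
          _ = min (1-b) b * γ := by ring
      have hθ1 : θ ≤ min (1-b) b := (abs_le.mp hθabs).2
      have hθ2 : -(min (1-b) b) ≤ θ := (abs_le.mp hθabs).1
      have hδabs : |σ * ε * f (x2-x1)| ≤ min cu cv := by
        rw [abs_mul, abs_mul, hσ, one_mul, abs_of_pos hεpos]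
        exact hεb2
      have hδ1 := (abs_le.mp hδabs).2
      have hδ2 := (abs_le.mp hδabs).1
      have hγθ : γ * θ = σ * ε * f (v - u) := by
        rw [hθdef]; field_simp
      have hyx : (1-b) • x1 + b • x2 = (1-q') • u + q' • v := hxeq.trans hyeq.symm
      have hγθv : (γ * θ) • (x1 - x2) = (σ * ε * f (v - u)) • (x1 - x2) := by rw [hγθ]
      have hcomb : z + (σ * ε) • d =
          (γ * (1 - b - θ)) • x1 + (γ * (b + θ)) • x2 +
          (cu + (σ * ε) * f (x2-x1)) • u + (cv - (σ * ε) * f (x2-x1)) • v := by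
        rw [hd, hcu, hcv, ← hzeq]
        linear_combination (norm := module) (-γ : ℝ) • hyx + hγθv
      constructor
      · rw [hcomb]
        have hθ1' : θ ≤ 1 - b := le_trans hθ1 (min_le_left _ _)
        have hθ2' : -b ≤ θ := le_trans (neg_le_neg (min_le_right _ _)) hθ2
        exact my_comb4 hPconv hx1 hx2 hu.1 hv.1
          (mul_nonneg hγpos.le (by linarith))
          (mul_nonneg hγpos.le (by linarith))
          (by linarith [min_le_left cu cv])
          (by linarith [min_le_right cu cv])
          (by linear_combination hsumw)
      · show f _ = c
        rw [map_add, map_smul, hfd, smul_zero, add_zero]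
        exact hz.1.2
    have h1 := hmem 1 (by norm_num)
    have h2 := hmem (-1) (by norm_num)
    rw [one_mul] at h1
    rw [show ((-1:ℝ))*ε = -ε by ring, neg_smul, ← sub_eq_add_neg] at h2
    have h0 := my_mid hz h1 h2
    rcases smul_eq_zero.mp h0 with h | h
    · exact absurd h (ne_of_gt hεpos)
    · exact hd0 h

lemma my_cross {X P : Set E} (hXfin : X.Finite) (hP : P = convexHull ℝ X)
    (hvert : X = P.extremePoints ℝ) (f : E →ₗ[ℝ] ℝ) (c : ℝ) {u v : E}
    (huX : u ∈ X) (hvX : v ∈ X) (hfu : f u < c) (hfv : c < f v)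
    (hext : IsExtreme ℝ P (segment ℝ u v))
    (heq : P ∩ {x | f x = c} = convexHull ℝ (X ∩ {x | f x = c})) : False := by
  classical
  have hPconv : Convex ℝ P := hP ▸ convex_convexHull ℝ X
  have hXP : X ⊆ P := hP ▸ subset_convexHull ℝ X
  have hW : (X ∩ {x | f x = c}).Finite := hXfin.inter_of_left _
  have hfvu : 0 < f v - f u := by linarith
  set τ := (c - f u) / (f v - f u) with hτ
  set z := u + τ • (v - u) with hzdef
  have hτ0 : 0 ≤ τ := le_of_lt (div_pos (by linarith) hfvu)
  have hτ1 : τ ≤ 1 := by rw [hτ, div_le_one hfvu]; linarith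
  have hzseg : z ∈ segment ℝ u v := by
    rw [segment_eq_image']; exact ⟨τ, ⟨hτ0, hτ1⟩, rfl⟩
  have hzc : f z = c := by
    rw [hzdef, map_add, map_smul, map_sub, smul_eq_mul, hτ]
    field_simp
    ring
  have hzP : z ∈ P := hext.1 hzseg
  have hzW : z ∈ convexHull ℝ (X ∩ {x | f x = c}) := by
    rw [← heq]; exact ⟨hzP, hzc⟩
  have hzs : z ∈ convexHull ℝ (↑hW.toFinset : Set E) := by
    rwa [hW.coe_toFinset]
  have hsP : (↑hW.toFinset : Set E) ⊆ P := by
    rw [hW.coe_toFinset]; exact fun x hx => hXP hx.1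
  obtain ⟨w, hws, hwseg⟩ := my_peel hPconv hext hW.toFinset hsP hzseg hzs
  have hwW : w ∈ X ∩ {x | f x = c} := hW.mem_toFinset.mp hws
  have hwc : f w = c := hwW.2
  rw [← insert_endpoints_openSegment] at hwseg
  rcases Set.mem_insert_iff.mp hwseg with hwu | hwseg2
  · rw [hwu] at hwc; exact absurd hwc (ne_of_lt hfu)
  rcases Set.mem_insert_iff.mp hwseg2 with hwv | hwseg3
  · rw [hwv] at hwc; exact absurd hwc (ne_of_gt hfv)
  · have hwext : w ∈ P.extremePoints ℝ := hvert ▸ hwW.1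
    have h := hwext.2 (hXP huX) (hXP hvX) hwseg3
    rw [← h] at hwc
    exact absurd hwc (ne_of_lt hfu)

theorem stmt_15 {n : ℕ} (X : Set (Fin n → ℝ)) (hXfin : X.Finite)
    (P : Set (Fin n → ℝ)) (hP : P = convexHull ℝ X)
    (hvert : X = Set.extremePoints ℝ P)
    (f : (Fin n → ℝ) →ₗ[ℝ] ℝ) (c : ℝ)
    (hmeet : ∃ x ∈ P, f x = c)
    (hbelow : ∃ x ∈ P, f x < c) (habove : ∃ x ∈ P, c < f x) :
    ((∀ u v : Fin n → ℝ, u ∈ X → v ∈ X → u ≠ v → IsExtreme ℝ P (segment ℝ u v) →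
        ((f u ≤ c ∧ f v ≤ c) ∨ (c ≤ f u ∧ c ≤ f v))) ↔
      P ∩ {x | f x = c} = convexHull ℝ (X ∩ {x | f x = c})) := by
  classical
  have hXP : X ⊆ P := by rw [hP]; exact subset_convexHull ℝ X
  have hPconv : Convex ℝ P := by rw [hP]; exact convex_convexHull ℝ X
  have hW : (X ∩ {x | f x = c}).Finite := hXfin.inter_of_left _
  have hconvx : Convex ℝ (P ∩ {x | f x = c}) :=
    hPconv.inter (convex_hyperplane f.isLinear c)
  constructor
  · intro hedge
    apply Set.Subset.antisymm
    · have hext : (P ∩ {x | f x = c}).extremePoints ℝ ⊆ X ∩ {x | f x = c} := by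
        intro z hzext
        have hzP : z ∈ P := hzext.1.1
        have hzc : f z = c := hzext.1.2
        have hzconv : z ∈ convexHull ℝ X := by rw [← hP]; exact hzP
        rw [convexHull_eq_union] at hzconv
        simp only [Set.mem_iUnion] at hzconv
        obtain ⟨t, htX, hind, hzt⟩ := hzconv
        have htP : (↑t : Set (Fin n → ℝ)) ⊆ P := fun x hx => hXP (htX hx)
        rcases my_key hPconv f c hzext t htP hind hzt with hzt' |
          ⟨u, hut, v, hvt, hseg, hufc, hvfc⟩
        · exact ⟨htX hzt', hzc⟩
        · exfalso
          have huX : u ∈ X := htX hut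
          have hvX : v ∈ X := htX hvt
          have hu : u ∈ P.extremePoints ℝ := hvert ▸ huX
          have hv : v ∈ P.extremePoints ℝ := hvert ▸ hvX
          have huv : u ≠ v := fun h => by rw [h] at hufc; linarith
          have hedge' := hedge u v huX hvX huv
            (my_edge hPconv f c hzext hu hv hseg hufc hvfc)
          rcases hedge' with ⟨_, h⟩ | ⟨h, _⟩
          · linarith
          · linarith
      have hcomp : IsCompact (P ∩ {x | f x = c}) := by
        have hPcomp : IsCompact P := by rw [hP]; exact hXfin.isCompact_convexHull (𝕜 := ℝ)
        exact hPcomp.inter_right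
          (isClosed_eq f.continuous_of_finiteDimensional continuous_const)
      have hKM := closure_convexHull_extremePoints hcomp hconvx
      calc P ∩ {x | f x = c}
          = closure (convexHull ℝ ((P ∩ {x | f x = c}).extremePoints ℝ)) := hKM.symm
        _ ⊆ closure (convexHull ℝ (X ∩ {x | f x = c})) :=
            closure_mono (convexHull_mono hext)
        _ = convexHull ℝ (X ∩ {x | f x = c}) := (hW.isClosed_convexHull (𝕜 := ℝ)).closure_eq
    · exact convexHull_min (fun x hx => ⟨hXP hx.1, hx.2⟩) hconvx
  · intro heq u v huX hvX huv hext
    by_contra hcon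
    push_neg at hcon
    obtain ⟨h1, h2⟩ := hcon
    have hcases : (f u < c ∧ c < f v) ∨ (f v < c ∧ c < f u) := by
      rcases le_or_gt (f u) c with h | h
      · have hvgt : c < f v := h1 h
        have hult : f u < c := by
          rcases lt_or_eq_of_le h with h'' | h''
          · exact h''
          · have := h2 (le_of_eq h''.symm); linarith
        exact Or.inl ⟨hult, hvgt⟩
      · exact Or.inr ⟨h2 h.le, h⟩
    rcases hcases with ⟨hA, hB⟩ | ⟨hA, hB⟩
    · exact my_cross hXfin hP hvert f c huX hvX hA hB hext heq
    · exact my_cross hXfin hP hvert f c hvX huX hA hB (by rwa [segment_symm]) heq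
end
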